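/- arXiv:1911.01924 — 7 statements merged into one kernel-verified Lean document; each statement's English description precedes it below -/
import Mathlib

section
/- Let p, q and r be distinct primes and let G be a finite group lying in 𝔄_p𝔄_q𝔄_r. Then there exist subgroups P, Q, R of G such that: P is a normal Sylow p-subgroup of G; Q is a Sylow q-subgroup of G and R is a Sylow r-subgroup of G; P, Q and R are abelian of exponent dividing p, q and r respectively; R normalizes Q; the subgroup generated by Q and R lies in 𝔄_q𝔄_r; and the subgroup generated by P, Q and R is all of G. -/
/-- A group is abelian of exponent dividing `p`. -/
def ElemAbelian (p : ℕ) (G : Type*) [Group G] : Prop :=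
  (∀ a b : G, a * b = b * a) ∧ ∀ a : G, a ^ p = 1

/-- `G` lies in the product variety `𝔄_p𝔄_q`: there is a normal subgroup `N` that is
abelian of exponent dividing `p` such that `G/N` is abelian of exponent dividing `q`
(expressed by: all commutators and all `q`-th powers lie in `N`). -/
def InApAq (p q : ℕ) (G : Type*) [Group G] : Prop :=
  ∃ N : Subgroup G, N.Normal ∧ ElemAbelian p N ∧
    (∀ a b : G, a * b * a⁻¹ * b⁻¹ ∈ N) ∧ ∀ a : G, a ^ q ∈ N

/-- `G` lies in `𝔄_p𝔄_q𝔄_r`: there is a normal subgroup `N`, abelian of exponent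
dividing `p`, with `G/N ∈ 𝔄_q𝔄_r`. -/
def InApAqAr (p q r : ℕ) (G : Type*) [Group G] : Prop :=
  ∃ N : Subgroup G, ∃ _ : N.Normal, ElemAbelian p N ∧ InApAq q r (G ⧸ N)

/-- A Sylow `p`-subgroup: a `p`-subgroup whose index is coprime to `p`. -/
def IsSylow' (p : ℕ) {G : Type*} [Group G] (P : Subgroup G) : Prop :=
  IsPGroup p P ∧ Nat.Coprime P.index p

private lemma aux_coprime_card {Γ : Type*} [Group Γ] [Finite Γ] {p m : ℕ} (hp : p.Prime)
    (hm : ∀ g : Γ, g ^ m = 1) (hpm : ¬ p ∣ m) : Nat.Coprime (Nat.card Γ) p := by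
  rw [Nat.coprime_comm, Nat.Prime.coprime_iff_not_dvd hp]
  intro hdvd
  haveI : Fact p.Prime := ⟨hp⟩
  obtain ⟨g, hg⟩ := exists_prime_orderOf_dvd_card' p hdvd
  exact hpm (hg ▸ orderOf_dvd_of_pow_eq_one (hm g))

/-- A finite group `G ∈ 𝔄_p𝔄_q𝔄_r` has a normal Sylow `p`-subgroup `P`,
a Sylow `q`-subgroup `Q` and a Sylow `r`-subgroup `R`, elementary abelian of the respective
exponents, such that `R` normalises `Q`, the subgroup `⟨Q, R⟩` lies in `𝔄_q𝔄_r`, and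
`⟨P, Q, R⟩ = G`. -/
theorem structure_of_group_in_ApAqAr (p q r : ℕ) (hp : p.Prime) (hq : q.Prime) (hr : r.Prime)
    (hpq : p ≠ q) (hpr : p ≠ r) (hqr : q ≠ r)
    (G : Type*) [Group G] [Finite G] (hG : InApAqAr p q r G) :
    ∃ P Q R : Subgroup G,
      P.Normal ∧ IsSylow' p P ∧ IsSylow' q Q ∧ IsSylow' r R ∧
      ElemAbelian p P ∧ ElemAbelian q Q ∧ ElemAbelian r R ∧
      R ≤ Subgroup.normalizer (Q : Set G) ∧ InApAq q r ↥(Q ⊔ R) ∧ P ⊔ Q ⊔ R = ⊤ := by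
  classical
  obtain ⟨N, hNnorm, hNab, M', hM'norm, hM'ab, hM'comm, hM'pow⟩ := hG
  haveI := hNnorm
  haveI : Fact p.Prime := ⟨hp⟩
  haveI : Fact q.Prime := ⟨hq⟩
  -- elements of M' have q-th power one
  have hM'q : ∀ x : G ⧸ N, x ∈ M' → x ^ q = 1 := fun x hx => by
    simpa using congrArg Subtype.val (hM'ab.2 ⟨x, hx⟩)
  -- exponent of G ⧸ N divides r * q
  have hexp : ∀ x : G ⧸ N, x ^ (r * q) = 1 := fun x => by
    rw [pow_mul]; exact hM'q _ (hM'pow x)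
  -- coprimality of the index of N with p
  have hNindex : Nat.Coprime N.index p := by
    rw [Subgroup.index_eq_card]
    refine aux_coprime_card hp hexp ?_
    rw [Nat.Prime.dvd_mul hp]
    rintro (h | h)
    · exact hpr ((Nat.prime_dvd_prime_iff_eq hp hr).mp h)
    · exact hpq ((Nat.prime_dvd_prime_iff_eq hp hq).mp h)
  have hNp : IsPGroup p N := fun g => ⟨1, by rw [pow_one]; exact hNab.2 g⟩
  obtain ⟨n, hn⟩ := hNp.exists_card_eq
  -- Schur–Zassenhaus: complement H of N
  obtain ⟨H, hH⟩ := Subgroup.exists_right_complement'_of_coprime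
    (N := N) (by rw [hn]; exact Nat.Coprime.pow_left n hNindex.symm)
  -- the preimage K of M'
  set K : Subgroup G := M'.comap (QuotientGroup.mk' N) with hKdef
  haveI hKnormal : K.Normal := Subgroup.Normal.comap hM'norm _
  have hKr : ∀ x : G, x ^ r ∈ K := fun x => by
    rw [hKdef, Subgroup.mem_comap, map_pow]
    exact hM'pow _
  have hKcomm : ∀ x y : G, x * y * x⁻¹ * y⁻¹ ∈ K := fun x y => by
    rw [hKdef, Subgroup.mem_comap]
    simpa using hM'comm ((QuotientGroup.mk' N) x) ((QuotientGroup.mk' N) y)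
  have hKq : ∀ x : G, x ∈ K → x ^ q ∈ N := fun x hx => by
    rw [hKdef, Subgroup.mem_comap] at hx
    rw [← QuotientGroup.eq_one_iff, QuotientGroup.mk_pow]
    exact hM'q _ hx
  have hKcommN : ∀ x y : G, x ∈ K → y ∈ K → x * y * x⁻¹ * y⁻¹ ∈ N := fun x y hx hy => by
    rw [hKdef, Subgroup.mem_comap] at hx hy
    rw [← QuotientGroup.eq_one_iff]
    have hc : ((QuotientGroup.mk' N) x) * ((QuotientGroup.mk' N) y)
        = ((QuotientGroup.mk' N) y) * ((QuotientGroup.mk' N) x) := by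
      simpa using congrArg Subtype.val (hM'ab.1 ⟨_, hx⟩ ⟨_, hy⟩)
    show QuotientGroup.mk (x * y * x⁻¹ * y⁻¹) = 1
    have : (QuotientGroup.mk' N) (x * y * x⁻¹ * y⁻¹) = 1 := by
      rw [map_mul, map_mul, map_mul, map_inv, map_inv, hc]
      group
    exact this
  have hdisj : ∀ x : G, x ∈ N → x ∈ H → x = 1 := fun x h1 h2 =>
    Subgroup.disjoint_def.mp hH.disjoint h1 h2
  -- Q is the q-part
  set Q : Subgroup G := K ⊓ H with hQdef
  have hQH : Q ≤ H := inf_le_right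
  have hQpow : ∀ x : G, x ∈ Q → x ^ q = 1 := fun x hx =>
    hdisj _ (hKq x (Subgroup.mem_inf.mp hx).1) (pow_mem (Subgroup.mem_inf.mp hx).2 q)
  have hQcomm : ∀ x y : G, x ∈ Q → y ∈ Q → x * y = y * x := fun x y hx hy => by
    obtain ⟨hxK, hxH⟩ := Subgroup.mem_inf.mp hx
    obtain ⟨hyK, hyH⟩ := Subgroup.mem_inf.mp hy
    have h1 : x * y * x⁻¹ * y⁻¹ = 1 := hdisj _ (hKcommN x y hxK hyK)
      (mul_mem (mul_mem (mul_mem hxH hyH) (inv_mem hxH)) (inv_mem hyH))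
    exact mul_inv_eq_iff_eq_mul.mp (mul_inv_eq_one.mp h1)
  have hQconj : ∀ h : G, h ∈ H → ∀ x : G, x ∈ Q → h * x * h⁻¹ ∈ Q := fun h hh x hx => by
    obtain ⟨hxK, hxH⟩ := Subgroup.mem_inf.mp hx
    exact Subgroup.mem_inf.mpr ⟨hKnormal.conj_mem x hxK h,
      mul_mem (mul_mem hh hxH) (inv_mem hh)⟩
  have hQab : ElemAbelian q Q :=
    ⟨fun a b => Subtype.ext (hQcomm _ _ a.2 b.2),
     fun a => Subtype.ext (by
      rw [SubgroupClass.coe_pow, OneMemClass.coe_one]; exact hQpow _ a.2)⟩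
  -- Q as a subgroup of H
  set Q' : Subgroup H := Q.comap H.subtype with hQ'def
  haveI hQ'norm : Q'.Normal := by
    refine ⟨fun x hx g => ?_⟩
    rw [hQ'def, Subgroup.mem_comap] at hx ⊢
    simpa using hQconj ↑g g.2 ↑x hx
  have hHrQ' : ∀ h : ↥H, h ^ r ∈ Q' := fun h => by
    rw [hQ'def, Subgroup.mem_comap, map_pow]
    exact Subgroup.mem_inf.mpr ⟨hKr _, pow_mem h.2 r⟩
  have hQ'exp : ∀ x : ↥Q', x ^ q = 1 := fun x => by
    have hx : ((x : ↥H) : G) ∈ Q := x.2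
    have h1 : ((x : ↥H) : G) ^ q = 1 := hQpow _ hx
    apply Subtype.ext; apply Subtype.ext
    simpa using h1
  have hQ'p : IsPGroup q Q' := fun g => ⟨1, by rw [pow_one]; exact hQ'exp g⟩
  obtain ⟨k, hk⟩ := hQ'p.exists_card_eq
  have hQ'index : Nat.Coprime Q'.index q := by
    rw [Subgroup.index_eq_card]
    refine aux_coprime_card hq (fun x => ?_)
      (fun hd => hqr ((Nat.prime_dvd_prime_iff_eq hq hr).mp hd))
    induction x using QuotientGroup.induction_on with
    | H h =>
      rw [← QuotientGroup.mk_pow, QuotientGroup.eq_one_iff]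
      exact hHrQ' h
  -- Schur–Zassenhaus in H: complement R' of Q'
  obtain ⟨R', hR'compl⟩ := Subgroup.exists_right_complement'_of_coprime
    (N := Q') (by rw [hk]; exact Nat.Coprime.pow_left k hQ'index.symm)
  have hdisj' : ∀ x : ↥H, x ∈ Q' → x ∈ R' → x = 1 := fun x h1 h2 =>
    Subgroup.disjoint_def.mp hR'compl.disjoint h1 h2
  set R : Subgroup G := R'.map H.subtype with hRdef
  have hRH : R ≤ H := Subgroup.map_subtype_le R'
  have hR'pow : ∀ x : ↥H, x ∈ R' → x ^ r = 1 := fun x hx =>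
    hdisj' _ (hHrQ' x) (pow_mem hx r)
  have hR'comm : ∀ x y : ↥H, x ∈ R' → y ∈ R' → x * y = y * x := fun x y hx hy => by
    have hmem : x * y * x⁻¹ * y⁻¹ ∈ Q' := by
      rw [hQ'def, Subgroup.mem_comap]
      refine Subgroup.mem_inf.mpr ⟨?_, (x * y * x⁻¹ * y⁻¹).2⟩
      simpa using hKcomm (x : G) (y : G)
    have h1 : x * y * x⁻¹ * y⁻¹ = 1 := hdisj' _ hmem
      (mul_mem (mul_mem (mul_mem hx hy) (inv_mem hx)) (inv_mem hy))
    exact mul_inv_eq_iff_eq_mul.mp (mul_inv_eq_one.mp h1)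
  have hRpow : ∀ x : G, x ∈ R → x ^ r = 1 := fun x hx => by
    obtain ⟨y, hy, rfl⟩ := hx
    have := hR'pow y hy
    calc (H.subtype y) ^ r = H.subtype (y ^ r) := (map_pow _ _ _).symm
    _ = 1 := by rw [this, map_one]
  have hRcomm : ∀ x y : G, x ∈ R → y ∈ R → x * y = y * x := fun x y hx hy => by
    obtain ⟨a, ha, rfl⟩ := hx
    obtain ⟨b, hb, rfl⟩ := hy
    rw [← map_mul, ← map_mul, hR'comm a b ha hb]
  have hRab : ElemAbelian r R :=
    ⟨fun a b => Subtype.ext (hRcomm _ _ a.2 b.2),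
     fun a => Subtype.ext (by
      rw [SubgroupClass.coe_pow, OneMemClass.coe_one]; exact hRpow _ a.2)⟩
  -- R normalizes Q
  have hRnorm : R ≤ Subgroup.normalizer (Q : Set G) := fun x hx => by
    have hxH : x ∈ H := hRH hx
    rw [Subgroup.mem_normalizer_iff]
    intro y
    constructor
    · exact fun hy => hQconj x hxH y hy
    · intro hy
      have h2 := hQconj x⁻¹ (inv_mem hxH) _ hy
      have he : x⁻¹ * (x * y * x⁻¹) * x⁻¹⁻¹ = y := by group
      rwa [he] at h2
  -- ⟨Q, R⟩ = H
  have hQmap : Q'.map H.subtype = Q := by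
    rw [hQ'def, Subgroup.map_comap_eq, Subgroup.range_subtype]
    exact inf_eq_right.mpr hQH
  have hQR : Q ⊔ R = H := by
    have h1 := congrArg (Subgroup.map H.subtype) hR'compl.sup_eq_top
    rwa [Subgroup.map_sup, hQmap, ← hRdef, ← MonoidHom.range_eq_map,
      Subgroup.range_subtype] at h1
  have hmemH : ∀ x : G, x ∈ Q ⊔ R → x ∈ H := fun x hx => hQR ▸ hx
  have hQleQR : Q ≤ Q ⊔ R := le_sup_left
  -- Sylow conditions
  have hQp : IsPGroup q Q := fun g => ⟨1, by rw [pow_one]; exact hQab.2 g⟩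
  have hRp : IsPGroup r R := fun g => ⟨1, by rw [pow_one]; exact hRab.2 g⟩
  have hHindex : H.index = Nat.card N := hH.index_eq_card
  have hQindex : Nat.Coprime Q.index q := by
    rw [← Subgroup.relIndex_mul_index hQH]
    refine Nat.Coprime.mul ?_ ?_
    · exact hQ'index
    · rw [hHindex, hn]
      exact Nat.Coprime.pow_left n ((Nat.coprime_primes hp hq).mpr hpq)
  have hRcomap : R.comap H.subtype = R' :=
    Subgroup.comap_map_eq_self_of_injective H.subtype_injective R'
  have hRindex : Nat.Coprime R.index r := by
    rw [← Subgroup.relIndex_mul_index hRH]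
    refine Nat.Coprime.mul ?_ ?_
    · show (R.comap H.subtype).index.Coprime r
      rw [hRcomap, hR'compl.index_eq_card, hk]
      exact Nat.Coprime.pow_left k ((Nat.coprime_primes hq hr).mpr hqr)
    · rw [hHindex, hn]
      exact Nat.Coprime.pow_left n ((Nat.coprime_primes hp hr).mpr hpr)
  refine ⟨N, Q, R, hNnorm, ⟨hNp, hNindex⟩, ⟨hQp, hQindex⟩, ⟨hRp, hRindex⟩,
    hNab, hQab, hRab, hRnorm, ?_, ?_⟩
  · -- InApAq q r ↥(Q ⊔ R)
    refine ⟨Q.comap (Q ⊔ R).subtype, ⟨fun x hx g => ?_⟩, ⟨?_, ?_⟩, ?_, ?_⟩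
    · rw [Subgroup.mem_comap] at hx ⊢
      simpa using hQconj ↑g (hmemH _ g.2) ↑x hx
    · intro a b
      apply Subtype.ext; apply Subtype.ext
      have ha : ((a : ↥(Q ⊔ R)) : G) ∈ Q := a.2
      have hb : ((b : ↥(Q ⊔ R)) : G) ∈ Q := b.2
      exact hQcomm _ _ ha hb
    · intro a
      apply Subtype.ext; apply Subtype.ext
      have ha : ((a : ↥(Q ⊔ R)) : G) ∈ Q := a.2
      exact hQpow _ ha
    · intro a b
      rw [Subgroup.mem_comap]
      refine Subgroup.mem_inf.mpr ⟨?_, ?_⟩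
      · simpa using hKcomm (a : G) (b : G)
      · have ha := hmemH _ a.2
        have hb := hmemH _ b.2
        simpa using mul_mem (mul_mem (mul_mem ha hb) (inv_mem ha)) (inv_mem hb)
    · intro a
      rw [Subgroup.mem_comap]
      refine Subgroup.mem_inf.mpr ⟨?_, ?_⟩
      · simpa using hKr (a : G)
      · simpa using pow_mem (hmemH _ a.2) r
  · rw [sup_assoc, hQR]
    exact hH.sup_eq_top
end

section
/- Let p, q and r be distinct primes and let G be a finite group lying in 𝔄_p𝔄_q𝔄_r. Let P be a normal Sylow p-subgroup of G, and let Q be a Sylow q-subgroup of G that is normalized by some Sylow r-subgroup R of G. Then the subgroup of G generated by P and Q is normal in G. -/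
/-- An element normalizing `A` fixes `A` under conjugation. -/
lemma map_conj_eq_of_mem_normalizer {G : Type*} [Group G] {A : Subgroup G} {g : G}
    (h : g ∈ Subgroup.normalizer (A : Set G)) :
    Subgroup.map (MulAut.conj g).toMonoidHom A = A := by
  ext x
  rw [Subgroup.mem_map_equiv]
  simp only [MulAut.conj_symm_apply]
  rw [Subgroup.mem_normalizer_iff] at h
  constructor
  · intro hx
    simpa [mul_assoc] using (h (g⁻¹ * x * g)).mp hx
  · intro hx
    exact (h (g⁻¹ * x * g)).mpr (by simpa [mul_assoc] using hx)

/-- If `g` normalizes `A` and `B`, it normalizes `A ⊔ B`. -/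
lemma mem_normalizer_sup {G : Type*} [Group G] {A B : Subgroup G} {g : G}
    (hA : g ∈ Subgroup.normalizer (A : Set G)) (hB : g ∈ Subgroup.normalizer (B : Set G)) :
    g ∈ Subgroup.normalizer ((A ⊔ B : Subgroup G) : Set G) := by
  have hmap : Subgroup.map (MulAut.conj g).toMonoidHom (A ⊔ B) = A ⊔ B := by
    rw [Subgroup.map_sup, map_conj_eq_of_mem_normalizer hA,
      map_conj_eq_of_mem_normalizer hB]
  rw [Subgroup.mem_normalizer_iff]
  intro n
  constructor
  · intro hn
    have : (MulAut.conj g) n ∈ Subgroup.map (MulAut.conj g).toMonoidHom (A ⊔ B) :=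
      Subgroup.mem_map_of_mem _ hn
    rw [hmap] at this
    simpa [MulAut.conj_apply] using this
  · intro hn
    have : g * n * g⁻¹ ∈ Subgroup.map (MulAut.conj g).toMonoidHom (A ⊔ B) := by
      rw [hmap]; exact hn
    obtain ⟨m, hm, hme⟩ := this
    have : m = n := by
      have : g * m * g⁻¹ = g * n * g⁻¹ := by simpa [MulAut.conj_apply] using hme
      exact mul_left_cancel (mul_right_cancel this)
    exact this ▸ hm

/-- If `G ∈ 𝔄_p𝔄_q𝔄_r` is finite, `P` is a normal Sylow `p`-subgroup and
`Q` is a Sylow `q`-subgroup normalised by some Sylow `r`-subgroup `R`, then `⟨P, Q⟩ ⊴ G`. -/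
theorem PQ_normal_in_ApAqAr (p q r : ℕ) (hp : p.Prime) (hq : q.Prime) (hr : r.Prime)
    (hpq : p ≠ q) (hpr : p ≠ r) (hqr : q ≠ r)
    (G : Type*) [Group G] [Finite G] (hG : InApAqAr p q r G)
    (P Q R : Subgroup G) (hP : IsSylow' p P) (hPn : P.Normal)
    (hQ : IsSylow' q Q) (hR : IsSylow' r R) (hRQ : R ≤ Subgroup.normalizer (Q : Set G)) :
    (P ⊔ Q).Normal := by
  classical
  -- Every element of `G` has order dividing `r * q * p`.
  obtain ⟨N, hNnorm, ⟨_, hNp⟩, M, hMnorm, ⟨_, hMq⟩, _, hMr⟩ := hG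
  have horder : ∀ x : G, x ^ (r * q * p) = 1 := by
    intro x
    have h1 : ((x : G) : G ⧸ N) ^ r ∈ M := hMr _
    have h2 : ((⟨((x : G) : G ⧸ N) ^ r, h1⟩ : M) : G ⧸ N) ^ q = 1 := by
      exact_mod_cast congrArg (Subtype.val) (hMq ⟨((x : G) : G ⧸ N) ^ r, h1⟩)
    have h3 : ((x ^ (r * q) : G) : G ⧸ N) = 1 := by
      rw [pow_mul]
      push_cast
      exact h2
    have h4 : x ^ (r * q) ∈ N := (QuotientGroup.eq_one_iff _).mp h3
    have h5 : ((⟨x ^ (r * q), h4⟩ : N) : G) ^ p = 1 := by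
      exact_mod_cast congrArg (Subtype.val) (hNp ⟨x ^ (r * q), h4⟩)
    calc x ^ (r * q * p) = (x ^ (r * q)) ^ p := by rw [pow_mul]
    _ = 1 := h5
  -- The subgroup `P ⊔ Q ⊔ R` is all of `G`.
  have hStop : P ⊔ Q ⊔ R = ⊤ := by
    set S := P ⊔ Q ⊔ R with hS
    rw [← Subgroup.index_eq_one]
    by_contra hne
    obtain ⟨ℓ, hℓp, hℓdvd⟩ := Nat.exists_prime_and_dvd hne
    have hSP : S.index ∣ P.index :=
      Subgroup.index_dvd_of_le (le_trans le_sup_left le_sup_left)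
    have hSQ : S.index ∣ Q.index :=
      Subgroup.index_dvd_of_le (le_trans le_sup_right le_sup_left)
    have hSR : S.index ∣ R.index := Subgroup.index_dvd_of_le le_sup_right
    have hcard : ℓ ∣ Nat.card G := hℓdvd.trans (Subgroup.index_dvd_card S)
    letI := Fintype.ofFinite G
    haveI : Fact ℓ.Prime := ⟨hℓp⟩
    obtain ⟨g, hg⟩ := exists_prime_orderOf_dvd_card (G := G) ℓ
      (by rwa [← Nat.card_eq_fintype_card])
    have hdvd : ℓ ∣ r * q * p := by
      rw [← hg]
      exact orderOf_dvd_of_pow_eq_one (horder g)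
    have hone : ℓ = 1 → False := fun h => hℓp.one_lt.ne' h
    have : ℓ = r ∨ ℓ = q ∨ ℓ = p := by
      rcases (Nat.Prime.dvd_mul hℓp).mp hdvd with h | h
      · rcases (Nat.Prime.dvd_mul hℓp).mp h with h' | h'
        · exact Or.inl ((Nat.prime_dvd_prime_iff_eq hℓp hr).mp h')
        · exact Or.inr (Or.inl ((Nat.prime_dvd_prime_iff_eq hℓp hq).mp h'))
      · exact Or.inr (Or.inr ((Nat.prime_dvd_prime_iff_eq hℓp hp).mp h))
    rcases this with h | h | h
    · exact hone (Nat.eq_one_of_dvd_one (Nat.dvd_gcd (hℓdvd.trans hSR) (h ▸ dvd_rfl) |>.trans hR.2.dvd))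
    · exact hone (Nat.eq_one_of_dvd_one (Nat.dvd_gcd (hℓdvd.trans hSQ) (h ▸ dvd_rfl) |>.trans hQ.2.dvd))
    · exact hone (Nat.eq_one_of_dvd_one (Nat.dvd_gcd (hℓdvd.trans hSP) (h ▸ dvd_rfl) |>.trans hP.2.dvd))
  -- The normalizer of `P ⊔ Q` contains `P`, `Q` and `R`, hence is all of `G`.
  rw [← Subgroup.normalizer_eq_top_iff]
  rw [eq_top_iff, ← hStop]
  refine sup_le (sup_le ?_ ?_) ?_
  · exact le_trans le_sup_left Subgroup.le_normalizer
  · exact le_trans le_sup_right Subgroup.le_normalizer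
  · intro ρ hρ
    exact mem_normalizer_sup
      ((Subgroup.normalizer_eq_top_iff.mpr hPn) ▸ Subgroup.mem_top ρ : ρ ∈ Subgroup.normalizer (P : Set G))
      (hRQ hρ)
end

section
/- Let p, q and r be distinct primes and let G be a finite group lying in 𝔄_p𝔄_q𝔄_r. Then there exists a subgroup G₀ of G such that the center of G₀ is trivial, G₀ ∩ Z(G) is trivial, the subgroup generated by G₀ and Z(G) is all of G (so that G is the internal direct product of G₀ and Z(G), and in particular G is isomorphic to G₀ × Z(G)), and G₀ lies in 𝔄_p𝔄_q𝔄_r. Moreover any such subgroup G₀ is isomorphic to the quotient group G/Z(G), so G₀ is unique up to isomorphism. -/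
lemma exists_pow_retraction {q : ℕ} (hq : q.Prime) {A : Type*} [CommGroup A]
    (hA : ∀ a : A, a ^ q = 1) (B : Subgroup A) :
    ∃ ρ : A →* B, ∀ b : B, ρ (b : A) = b := by
  haveI : Fact q.Prime := ⟨hq⟩
  have hA' : ∀ x : Additive A, q • x = 0 := by
    intro x
    have h := congrArg Additive.ofMul (hA x.toMul)
    rw [ofMul_pow] at h
    simpa using h
  letI : Module (ZMod q) (Additive A) := AddCommGroup.zmodModule (n := q) hA'
  obtain ⟨C, hC⟩ := Submodule.exists_isCompl
    ((AddSubgroup.toZModSubmodule q (M := Additive A)) (Subgroup.toAddSubgroup B))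
  let ρ' := Submodule.projectionOnto _ C hC
  have hmem : ∀ a : A, (ρ' (Additive.ofMul a) : Additive A).toMul ∈ B := fun a =>
    (ρ' (Additive.ofMul a)).2
  refine ⟨{ toFun := fun a => ⟨(ρ' (Additive.ofMul a) : Additive A).toMul, hmem a⟩,
            map_one' := ?_, map_mul' := ?_ }, ?_⟩
  · ext
    show ((ρ' (Additive.ofMul (1:A)) : Additive A)).toMul = (1:A)
    rw [show Additive.ofMul (1:A) = 0 from rfl, map_zero]
    rfl
  · intro x y
    ext
    show ((ρ' (Additive.ofMul (x*y)) : Additive A)).toMul = _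
    rw [show Additive.ofMul (x*y) = Additive.ofMul x + Additive.ofMul y from rfl, map_add]
    rfl
  · intro b
    ext
    show ((ρ' (Additive.ofMul (b:A)) : Additive A)).toMul = (b:A)
    have hbB' : Additive.ofMul (b : A) ∈ (AddSubgroup.toZModSubmodule q (M := Additive A))
        (Subgroup.toAddSubgroup B) := b.2
    rw [Submodule.projectionOnto_apply_left hC ⟨_, hbB'⟩]

    rfl

lemma key_comm {A : Type*} [CommGroup A] {p q r : ℕ} (hp : p.Prime) (hq : q.Prime) (hr : r.Prime)
    (hpq : p ≠ q) (hpr : p ≠ r) (hqr : q ≠ r)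
    {z wp wq wr : A} (hz : z ^ (p * q * r) = 1)
    (hwp : wp ^ p = 1) (hwq : wq ^ q = 1) (hwr : wr ^ r = 1)
    {sp sq sr : ℕ} (hsp : wp = z ^ sp) (hsq : wq = z ^ sq) (hsr : wr = z ^ sr)
    (hp1 : sp ≡ 1 [MOD p]) (hq1 : sq ≡ 1 [MOD q]) (hr1 : sr ≡ 1 [MOD r]) :
    wp * wq * wr = z := by
  have hzmod : ∀ a b : ℕ, a ≡ b [MOD p * q * r] → z ^ a = z ^ b := by
    intro a b hab
    exact pow_eq_pow_iff_modEq.mpr (hab.of_dvd (orderOf_dvd_of_pow_eq_one hz))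
  set x := wp * wq * wr * z⁻¹ with hx
  have key : ∀ w : A, ∀ s m : ℕ, w = z ^ s → s ≡ 1 [MOD m] → m * (p * q * r / m) = p * q * r →
      w ^ (p * q * r / m) * z⁻¹ ^ (p * q * r / m) = 1 := by
    intro w s m hw hs hm
    have h1 : z ^ (s * (p * q * r / m)) = z ^ (1 * (p * q * r / m)) := by
      refine hzmod _ _ ((hs.mul_right' (p * q * r / m)).of_dvd ?_)
      rw [hm]
    rw [hw, ← pow_mul, h1, one_mul, inv_pow, mul_inv_eq_one]
  have h1 : x ^ (q * r) = 1 := by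
    have e1 : wq ^ (q * r) = 1 := by rw [pow_mul, hwq, one_pow]
    have e2 : wr ^ (q * r) = 1 := by rw [mul_comm q r, pow_mul, hwr, one_pow]
    have hd : p * q * r / p = q * r := by
      rw [mul_assoc, Nat.mul_div_cancel_left _ hp.pos]
    have e3 := key wp sp p hsp hp1 (by rw [hd]; ring)
    rw [hd] at e3
    calc x ^ (q * r) = wp ^ (q * r) * wq ^ (q * r) * wr ^ (q * r) * z⁻¹ ^ (q * r) := by
          rw [hx, mul_pow, mul_pow, mul_pow]
      _ = wp ^ (q * r) * z⁻¹ ^ (q * r) := by rw [e1, e2, mul_one, mul_one]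
      _ = 1 := e3
  have h2 : x ^ (p * r) = 1 := by
    have e1 : wp ^ (p * r) = 1 := by rw [pow_mul, hwp, one_pow]
    have e2 : wr ^ (p * r) = 1 := by rw [mul_comm p r, pow_mul, hwr, one_pow]
    have hd : p * q * r / q = p * r := by
      rw [show p * q * r = q * (p * r) by ring, Nat.mul_div_cancel_left _ hq.pos]
    have e3 := key wq sq q hsq hq1 (by rw [hd]; ring)
    rw [hd] at e3
    calc x ^ (p * r) = wp ^ (p * r) * wq ^ (p * r) * wr ^ (p * r) * z⁻¹ ^ (p * r) := by
          rw [hx, mul_pow, mul_pow, mul_pow]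
      _ = wq ^ (p * r) * z⁻¹ ^ (p * r) := by rw [e1, e2, one_mul, mul_one]
      _ = 1 := e3
  have h3 : x ^ (p * q) = 1 := by
    have e1 : wp ^ (p * q) = 1 := by rw [pow_mul, hwp, one_pow]
    have e2 : wq ^ (p * q) = 1 := by rw [mul_comm p q, pow_mul, hwq, one_pow]
    have hd : p * q * r / r = p * q := by
      rw [show p * q * r = r * (p * q) by ring, Nat.mul_div_cancel_left _ hr.pos]
    have e3 := key wr sr r hsr hr1 (by rw [hd]; ring)
    rw [hd] at e3
    calc x ^ (p * q) = wp ^ (p * q) * wq ^ (p * q) * wr ^ (p * q) * z⁻¹ ^ (p * q) := by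
          rw [hx, mul_pow, mul_pow, mul_pow]
      _ = wr ^ (p * q) * z⁻¹ ^ (p * q) := by rw [e1, e2, one_mul, one_mul]
      _ = 1 := e3
  have d1 : orderOf x ∣ q * r := orderOf_dvd_of_pow_eq_one h1
  have d2 : orderOf x ∣ p * r := orderOf_dvd_of_pow_eq_one h2
  have d3 : orderOf x ∣ p * q := orderOf_dvd_of_pow_eq_one h3
  have cqp : Nat.Coprime q p := (Nat.coprime_primes hq hp).mpr (Ne.symm hpq)
  have dr : orderOf x ∣ r := by
    have := Nat.dvd_gcd d1 d2
    rwa [Nat.gcd_mul_right, cqp, one_mul] at this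
  have crpq : Nat.Coprime r (p * q) :=
    Nat.Coprime.mul_right ((Nat.coprime_primes hr hp).mpr (Ne.symm hpr))
      ((Nat.coprime_primes hr hq).mpr (Ne.symm hqr))
  have : orderOf x ∣ 1 := by
    have := Nat.dvd_gcd dr d3
    rwa [Nat.Coprime.gcd_eq_one crpq] at this
  have hx1 : x = 1 := orderOf_eq_one_iff.mp (Nat.dvd_one.mp this)
  have := hx1
  rw [hx, mul_inv_eq_one] at this
  exact this

lemma ElemAbelian.comap_injective {p : ℕ} {A B : Type*} [Group A] [Group B] (f : A →* B)
    (hf : Function.Injective f) {K : Subgroup B} (h : ElemAbelian p K) :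
    ElemAbelian p (K.comap f) := by
  obtain ⟨hc, hpow⟩ := h
  constructor
  · rintro ⟨a, ha⟩ ⟨b, hb⟩
    have := hc ⟨f a, ha⟩ ⟨f b, hb⟩
    rw [Subtype.ext_iff] at this ⊢
    simp only [MulMemClass.coe_mul] at this ⊢
    exact hf (by rw [map_mul, map_mul, this])
  · rintro ⟨a, ha⟩
    have := hpow ⟨f a, ha⟩
    rw [Subtype.ext_iff] at this ⊢
    simp only [SubmonoidClass.coe_pow, OneMemClass.coe_one] at this ⊢
    exact hf (by rw [map_pow, this, map_one])

lemma InApAq.comap_injective {q r : ℕ} {A B : Type*} [Group A] [Group B] (f : A →* B)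
    (hf : Function.Injective f) (h : InApAq q r B) : InApAq q r A := by
  obtain ⟨K, hKn, hKe, hcomm, hpow⟩ := h
  refine ⟨K.comap f, hKn.comap f, hKe.comap_injective f hf, ?_, ?_⟩
  · intro a b
    show f _ ∈ K
    simpa using hcomm (f a) (f b)
  · intro a
    show f _ ∈ K
    simpa using hpow (f a)

lemma InApAqAr.subgroup {p q r : ℕ} {G : Type*} [Group G] (h : InApAqAr p q r G)
    (H : Subgroup G) : InApAqAr p q r H := by
  obtain ⟨N, hNn, hNe, hq⟩ := h
  refine ⟨N.subgroupOf H, hNn.subgroupOf H, hNe.comap_injective H.subtype Subtype.val_injective, ?_⟩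
  have hle : N.subgroupOf H ≤ N.comap H.subtype := le_rfl
  let φ : (H ⧸ N.subgroupOf H) →* (G ⧸ N) := QuotientGroup.map _ _ H.subtype hle
  have hφ : Function.Injective φ := by
    rw [injective_iff_map_eq_one]
    intro x
    induction x using QuotientGroup.induction_on with
    | H a =>
      intro hx
      have : ((a : G) : G ⧸ N) = 1 := by
        simpa [φ, QuotientGroup.map_mk] using hx
      rw [QuotientGroup.eq_one_iff] at this ⊢
      exact this
  exact hq.comap_injective φ hφ

open scoped IsMulCommutative in
lemma exists_center_retraction (p q r : ℕ) (hp : p.Prime) (hq : q.Prime) (hr : r.Prime)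
    (hpq : p ≠ q) (hpr : p ≠ r) (hqr : q ≠ r)
    (G : Type*) [Group G] [Finite G] (hG : InApAqAr p q r G) :
    ∃ π : G →* Subgroup.center G, ∀ z : Subgroup.center G, π (z : G) = z := by
  classical
  obtain ⟨N, hNn, ⟨hNc, hNp⟩, K, hKn, ⟨hKc, hKq⟩, hKcomm, hKpow⟩ := hG
  -- the subgroup M
  set M : Subgroup G := K.comap (QuotientGroup.mk' N) with hM
  haveI hMn : M.Normal := hKn.comap (QuotientGroup.mk' N)
  have hNM : N ≤ M := by
    intro n hn
    show QuotientGroup.mk' N n ∈ K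
    rw [show QuotientGroup.mk' N n = 1 from (QuotientGroup.eq_one_iff n).mpr hn]
    exact K.one_mem
  have fact_n_p : ∀ n : G, n ∈ N → n ^ p = 1 := by
    intro n hn
    have := hNp ⟨n, hn⟩
    rwa [Subtype.ext_iff] at this
  have fact_m_q : ∀ m : G, m ∈ M → m ^ q ∈ N := by
    intro m hm
    have := hKq ⟨QuotientGroup.mk' N m, hm⟩
    rw [Subtype.ext_iff] at this
    have h2 : (QuotientGroup.mk' N) (m ^ q) = 1 := by
      rw [map_pow]; exact this
    exact (QuotientGroup.eq_one_iff _).mp h2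
  have fact_g_r : ∀ g : G, g ^ r ∈ M := by
    intro g
    show QuotientGroup.mk' N (g ^ r) ∈ K
    rw [map_pow]
    exact hKpow _
  have hexp : ∀ g : G, g ^ (p * q * r) = 1 := by
    intro g
    have : g ^ (p * q * r) = ((g ^ r) ^ q) ^ p := by
      rw [← pow_mul, ← pow_mul]; ring_nf
    rw [this]
    exact fact_n_p _ (fact_m_q _ (fact_g_r g))
  have comm_in_M : ∀ g h : G, g * h * g⁻¹ * h⁻¹ ∈ M := by
    intro g h
    show QuotientGroup.mk' N _ ∈ K
    simpa using hKcomm (QuotientGroup.mk' N g) (QuotientGroup.mk' N h)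
  have comm_in_N : ∀ g h : G, g ∈ M → h ∈ M → g * h * g⁻¹ * h⁻¹ ∈ N := by
    intro g h hg hh
    have := hKc ⟨QuotientGroup.mk' N g, hg⟩ ⟨QuotientGroup.mk' N h, hh⟩
    rw [Subtype.ext_iff] at this
    simp only [MulMemClass.coe_mul] at this
    have h2 : (QuotientGroup.mk' N) (g * h * g⁻¹ * h⁻¹) = 1 := by
      simp only [map_mul, map_inv]
      rw [this]
      group
    exact (QuotientGroup.eq_one_iff _).mp h2
  -- index coprimalities
  have cpN : Nat.Coprime N.index p := by
    rw [Nat.coprime_comm]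
    rw [hp.coprime_iff_not_dvd]
    intro hdvd
    rw [Subgroup.index_eq_card] at hdvd
    haveI : Fact p.Prime := ⟨hp⟩
    obtain ⟨x, hx⟩ := exists_prime_orderOf_dvd_card' (G := G ⧸ N) p hdvd
    have hxqr : x ^ (q * r) = 1 := by
      induction x using QuotientGroup.induction_on with
      | H g =>
        have h1 : ((g : G ⧸ N)) ^ r ∈ K := by
          have := hKpow (g : G ⧸ N)
          simpa using this
        have := hKq ⟨_, h1⟩
        rw [Subtype.ext_iff] at this
        simp only [SubmonoidClass.coe_pow, OneMemClass.coe_one] at this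
        rw [mul_comm q r, pow_mul]
        exact this
    have hdvd2 : p ∣ q * r := hx ▸ orderOf_dvd_of_pow_eq_one hxqr
    rcases (Nat.Prime.dvd_mul hp).mp hdvd2 with h | h
    · exact hpq ((Nat.prime_dvd_prime_iff_eq hp hq).mp h)
    · exact hpr ((Nat.prime_dvd_prime_iff_eq hp hr).mp h)
  have cqM : Nat.Coprime M.index q := by
    rw [Nat.coprime_comm]
    rw [hq.coprime_iff_not_dvd]
    intro hdvd
    rw [Subgroup.index_eq_card] at hdvd
    haveI : Fact q.Prime := ⟨hq⟩
    obtain ⟨x, hx⟩ := exists_prime_orderOf_dvd_card' (G := G ⧸ M) q hdvd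
    have hxr : x ^ r = 1 := by
      induction x using QuotientGroup.induction_on with
      | H g =>
        have : ((g ^ r : G) : G ⧸ M) = 1 := (QuotientGroup.eq_one_iff _).mpr (fact_g_r g)
        simpa using this
    have hdvd2 : q ∣ r := hx ▸ orderOf_dvd_of_pow_eq_one hxr
    exact hqr ((Nat.prime_dvd_prime_iff_eq hq hr).mp hdvd2)
  -- the p-component
  letI : CommGroup N := { (inferInstance : Group N) with mul_comm := hNc }
  have hZpN : Subgroup.center G ⊓ N ≤ N := inf_le_right
  obtain ⟨ρp, hρp⟩ := exists_pow_retraction hp hNp ((Subgroup.center G ⊓ N).subgroupOf N)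
  haveI : IsMulCommutative ↥(Subgroup.center G ⊓ N) := by
    constructor
    constructor
    intro a b
    exact Subtype.ext ((Subgroup.mem_center_iff.mp a.2.1 b).symm)
  set σp : N →* ↥(Subgroup.center G ⊓ N) :=
    ((Subgroup.subgroupOfEquivOfLe hZpN).toMonoidHom.comp ρp) with hσp
  have σp_fix : ∀ x : N, (x : G) ∈ Subgroup.center G ⊓ N → ((σp x : G)) = (x : G) := by
    intro x hx
    have hx' : x ∈ (Subgroup.center G ⊓ N).subgroupOf N := hx
    have := hρp ⟨x, hx'⟩
    rw [hσp]
    simp only [MonoidHom.coe_comp, Function.comp_apply, MulEquiv.coe_toMonoidHom]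
    rw [this]
    rfl
  set tp := σp.transfer with htp
  have tp_z : ∀ z : G, z ∈ Subgroup.center G → ((tp z : G)) = z ^ N.index := by
    intro z hz
    have key : ∀ (k : ℕ) (g₀ : G), g₀⁻¹ * z ^ k * g₀ ∈ N → g₀⁻¹ * z ^ k * g₀ = z ^ k := by
      intro k g₀ _
      have hzk : z ^ k ∈ Subgroup.center G := pow_mem hz k
      rw [Subgroup.mem_center_iff] at hzk
      rw [mul_assoc, ← hzk g₀, ← mul_assoc, inv_mul_cancel, one_mul]
    rw [htp, MonoidHom.transfer_eq_pow σp z key]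
    refine σp_fix _ ?_
    exact ⟨pow_mem hz N.index, (MonoidHom.transfer_eq_pow_aux z key)⟩
  obtain ⟨mp, -, hmp⟩ := Nat.exists_mul_mod_eq_one_of_coprime cpN hp.one_lt
  set fp : G →* Subgroup.center G :=
    (Subgroup.inclusion (inf_le_left : Subgroup.center G ⊓ N ≤ Subgroup.center G)).comp
      ((powMonoidHom mp).comp tp) with hfp
  have fp_z : ∀ z : G, z ∈ Subgroup.center G → ((fp z : G)) = z ^ (N.index * mp) := by
    intro z hz
    rw [hfp]
    simp only [MonoidHom.coe_comp, Function.comp_apply, powMonoidHom_apply]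
    have : ((Subgroup.inclusion (inf_le_left : Subgroup.center G ⊓ N ≤ Subgroup.center G)
        ((tp z) ^ mp) : G)) = (((tp z) ^ mp : ↥(Subgroup.center G ⊓ N)) : G) := rfl
    rw [this]
    push_cast
    rw [tp_z z hz, ← pow_mul]
  have fp_p : ∀ g : G, ((fp g : G)) ^ p = 1 := by
    intro g
    refine fact_n_p _ ?_
    have : ((fp g : G)) = (((powMonoidHom mp).comp tp g : ↥(Subgroup.center G ⊓ N)) : G) := rfl
    rw [this]
    exact ((powMonoidHom mp).comp tp g).2.2
  have sp_mod : N.index * mp ≡ 1 [MOD p] := by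
    unfold Nat.ModEq
    rw [hmp, Nat.one_mod_eq_one.mpr hp.ne_one]
  -- the q-component
  haveI hNsubM : (N.subgroupOf M).Normal := hNn.subgroupOf M
  letI : CommGroup (M ⧸ N.subgroupOf M) := by
    refine { (inferInstance : Group (M ⧸ N.subgroupOf M)) with mul_comm := ?_ }
    intro a b
    induction a using QuotientGroup.induction_on with
    | H x =>
      induction b using QuotientGroup.induction_on with
      | H y =>
        rw [← QuotientGroup.mk_mul, ← QuotientGroup.mk_mul]
        rw [QuotientGroup.eq]
        show ((((x * y)⁻¹ * (y * x) : M)) : G) ∈ N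
        have := comm_in_N (y : G)⁻¹ (x : G)⁻¹ (M.inv_mem y.2) (M.inv_mem x.2)
        simp only [inv_inv] at this
        convert this using 1
        push_cast
        group
  have hQexp : ∀ a : M ⧸ N.subgroupOf M, a ^ q = 1 := by
    intro a
    induction a using QuotientGroup.induction_on with
    | H x =>
      rw [← QuotientGroup.mk_pow, QuotientGroup.eq_one_iff]
      show ((x ^ q : M) : G) ∈ N
      push_cast
      exact fact_m_q _ x.2
  -- the subgroup Zq
  set Zq : Subgroup G :=
    { carrier := {x | x ∈ Subgroup.center G ∧ x ∈ M ∧ x ^ q = 1}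
      one_mem' := ⟨Subgroup.one_mem _, M.one_mem, one_pow q⟩
      mul_mem' := by
        rintro a b ⟨ha1, ha2, ha3⟩ ⟨hb1, hb2, hb3⟩
        refine ⟨Subgroup.mul_mem _ ha1 hb1, M.mul_mem ha2 hb2, ?_⟩
        rw [(show Commute a b from (Subgroup.mem_center_iff.mp ha1 b).symm).mul_pow,
          ha3, hb3, one_mul]
      inv_mem' := by
        rintro a ⟨ha1, ha2, ha3⟩
        exact ⟨Subgroup.inv_mem _ ha1, M.inv_mem ha2, by rw [inv_pow, ha3, inv_one]⟩ } with hZq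
  have hZqM : Zq ≤ M := fun x hx => hx.2.1
  have hZqZ : Zq ≤ Subgroup.center G := fun x hx => hx.1
  set jq : Zq →* (M ⧸ N.subgroupOf M) :=
    (QuotientGroup.mk' (N.subgroupOf M)).comp (Subgroup.inclusion hZqM) with hjq
  have jq_inj : Function.Injective jq := by
    rw [injective_iff_map_eq_one]
    intro a ha
    have haN : (a : G) ∈ N := by
      rw [hjq] at ha
      simp only [MonoidHom.coe_comp, Function.comp_apply] at ha
      exact (QuotientGroup.eq_one_iff (Subgroup.inclusion hZqM a)).mp ha
    have h1 : (a : G) ^ p = 1 := fact_n_p _ haN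
    have h2 : (a : G) ^ q = 1 := a.2.2.2
    have : orderOf (a : G) ∣ 1 := by
      have d1 := orderOf_dvd_of_pow_eq_one h1
      have d2 := orderOf_dvd_of_pow_eq_one h2
      have := Nat.dvd_gcd d1 d2
      rwa [Nat.Coprime.gcd_eq_one ((Nat.coprime_primes hp hq).mpr hpq)] at this
    have : (a : G) = 1 := orderOf_eq_one_iff.mp (Nat.dvd_one.mp this)
    exact Subtype.ext this
  obtain ⟨ρq, hρq⟩ := exists_pow_retraction hq hQexp jq.range
  haveI : IsMulCommutative ↥Zq := by
    constructor
    constructor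
    intro a b
    exact Subtype.ext ((Subgroup.mem_center_iff.mp a.2.1 b).symm)
  set eqq := MonoidHom.ofInjective jq_inj with heqq
  set σq : M →* Zq :=
    (eqq.symm.toMonoidHom.comp (ρq.comp (QuotientGroup.mk' (N.subgroupOf M)))) with hσq
  have σq_N : ∀ x : M, (x : G) ∈ N → σq x = 1 := by
    intro x hx
    rw [hσq]
    simp only [MonoidHom.coe_comp, Function.comp_apply]
    have : QuotientGroup.mk' (N.subgroupOf M) x = 1 := (QuotientGroup.eq_one_iff _).mpr hx
    rw [this, map_one, map_one]
  have σq_fix : ∀ x : M, (hx : (x : G) ∈ Zq) → ((σq x : G)) = (x : G) := by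
    intro x hx
    have hxeq : QuotientGroup.mk' (N.subgroupOf M) x = jq ⟨(x : G), hx⟩ := by
      rw [hjq]
      simp only [MonoidHom.coe_comp, Function.comp_apply]
      congr 1
    rw [hσq]
    simp only [MonoidHom.coe_comp, Function.comp_apply]
    rw [hxeq]
    have hrange : jq ⟨(x : G), hx⟩ ∈ jq.range := ⟨_, rfl⟩
    have h2 : ρq (jq ⟨(x : G), hx⟩) = ⟨jq ⟨(x : G), hx⟩, hrange⟩ := hρq ⟨_, hrange⟩
    rw [h2]
    have h3 : eqq ⟨(x : G), hx⟩ = ⟨jq ⟨(x : G), hx⟩, hrange⟩ := by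
      rw [heqq]
      rfl
    rw [← h3]
    show ((eqq.symm (eqq ⟨(x : G), hx⟩) : Zq) : G) = (x : G)
    rw [MulEquiv.symm_apply_apply]
  set tq := σq.transfer with htq
  obtain ⟨me, -, hme⟩ := Nat.exists_mul_mod_eq_one_of_coprime
    ((Nat.coprime_primes hp hq).mpr hpq) hq.one_lt
  set e := p * me with he
  have tq_z : ∀ z : G, z ∈ Subgroup.center G → ((tq z : G)) = z ^ (M.index * e) := by
    intro z hz
    have key : ∀ (k : ℕ) (g₀ : G), g₀⁻¹ * z ^ k * g₀ ∈ M → g₀⁻¹ * z ^ k * g₀ = z ^ k := by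
      intro k g₀ _
      have hzk : z ^ k ∈ Subgroup.center G := pow_mem hz k
      rw [Subgroup.mem_center_iff] at hzk
      rw [mul_assoc, ← hzk g₀, ← mul_assoc, inv_mul_cancel, one_mul]
    rw [htq, MonoidHom.transfer_eq_pow σq z key]
    set u := z ^ M.index with hudef
    have hu : u ∈ M := MonoidHom.transfer_eq_pow_aux z key
    have huZ : u ∈ Subgroup.center G := pow_mem hz M.index
    have hu_pq : u ^ (p * q) = 1 := by
      rw [mul_comm p q, pow_mul]
      exact fact_n_p _ (fact_m_q _ hu)
    have hue : u ^ e ∈ M := M.pow_mem hu e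
    have hζ : u ^ e ∈ Zq := by
      refine ⟨pow_mem huZ e, hue, ?_⟩
      rw [← pow_mul, show e * q = (p * q) * me by ring, pow_mul, hu_pq, one_pow]
    obtain ⟨t, het⟩ : ∃ t, e = q * t + 1 := by
      refine ⟨e / q, ?_⟩
      have h1 : e % q = 1 := by rw [he]; exact hme
      conv_lhs => rw [← Nat.div_add_mod e q]
      rw [h1]
    have huqN : u ^ q ∈ N := fact_m_q _ hu
    have hsplit : (⟨u, hu⟩ : M) = ⟨u ^ e, hue⟩ *
        ⟨((u ^ q) ^ t)⁻¹, M.inv_mem (M.pow_mem (hNM huqN) _)⟩ := by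
      apply Subtype.ext
      show u = u ^ e * ((u ^ q) ^ t)⁻¹
      have h2 : u ^ e = (u ^ q) ^ t * u := by rw [het, pow_succ, pow_mul]
      rw [h2]
      group
    have hproof : (⟨z ^ M.index, MonoidHom.transfer_eq_pow_aux z key⟩ : M) = ⟨u, hu⟩ := rfl
    rw [hproof, hsplit, map_mul]
    rw [σq_N ⟨((u ^ q) ^ t)⁻¹, M.inv_mem (M.pow_mem (hNM huqN) t)⟩
      (by exact N.inv_mem (N.pow_mem huqN t))]
    rw [mul_one]
    have := σq_fix ⟨u ^ e, hue⟩ hζ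
    rw [this]
    show u ^ e = z ^ (M.index * e)
    rw [hudef, ← pow_mul]
  obtain ⟨mq, -, hmq⟩ := Nat.exists_mul_mod_eq_one_of_coprime cqM hq.one_lt
  set fq : G →* Subgroup.center G :=
    (Subgroup.inclusion hZqZ).comp ((powMonoidHom mq).comp tq) with hfq
  have fq_z : ∀ z : G, z ∈ Subgroup.center G → ((fq z : G)) = z ^ (M.index * e * mq) := by
    intro z hz
    rw [hfq]
    simp only [MonoidHom.coe_comp, Function.comp_apply, powMonoidHom_apply]
    have : ((Subgroup.inclusion hZqZ ((tq z) ^ mq) : G)) = (((tq z) ^ mq : Zq) : G) := rfl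
    rw [this]
    push_cast
    rw [tq_z z hz, ← pow_mul]
  have fq_q : ∀ g : G, ((fq g : G)) ^ q = 1 := by
    intro g
    have : ((fq g : G)) = (((powMonoidHom mq).comp tq g : Zq) : G) := rfl
    rw [this]
    exact ((powMonoidHom mq).comp tq g).2.2.2
  have sq_mod : M.index * e * mq ≡ 1 [MOD q] := by
    have h1 : M.index * mq ≡ 1 [MOD q] := by
      unfold Nat.ModEq
      rw [hmq, Nat.one_mod_eq_one.mpr hq.ne_one]
    have h2 : e ≡ 1 [MOD q] := by
      unfold Nat.ModEq
      rw [he, hme, Nat.one_mod_eq_one.mpr hq.ne_one]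
    have := h1.mul h2
    rw [one_mul] at this
    rwa [show M.index * e * mq = M.index * mq * e by ring]
  -- the r-component
  letI : CommGroup (G ⧸ M) := by
    refine { (inferInstance : Group (G ⧸ M)) with mul_comm := ?_ }
    intro a b
    induction a using QuotientGroup.induction_on with
    | H x =>
      induction b using QuotientGroup.induction_on with
      | H y =>
        rw [← QuotientGroup.mk_mul, ← QuotientGroup.mk_mul, QuotientGroup.eq]
        have := comm_in_M y⁻¹ x⁻¹
        simp only [inv_inv] at this
        convert this using 1
        group
  have hRexp : ∀ a : G ⧸ M, a ^ r = 1 := by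
    intro a
    induction a using QuotientGroup.induction_on with
    | H x =>
      rw [← QuotientGroup.mk_pow, QuotientGroup.eq_one_iff]
      exact fact_g_r x
  set Zr : Subgroup G :=
    { carrier := {x | x ∈ Subgroup.center G ∧ x ^ r = 1}
      one_mem' := ⟨Subgroup.one_mem _, one_pow r⟩
      mul_mem' := by
        rintro a b ⟨ha1, ha3⟩ ⟨hb1, hb3⟩
        refine ⟨Subgroup.mul_mem _ ha1 hb1, ?_⟩
        rw [(show Commute a b from (Subgroup.mem_center_iff.mp ha1 b).symm).mul_pow,
          ha3, hb3, one_mul]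
      inv_mem' := by
        rintro a ⟨ha1, ha3⟩
        exact ⟨Subgroup.inv_mem _ ha1, by rw [inv_pow, ha3, inv_one]⟩ } with hZr
  have hZrZ : Zr ≤ Subgroup.center G := fun x hx => hx.1
  set jr : Zr →* (G ⧸ M) := (QuotientGroup.mk' M).comp Zr.subtype with hjr
  have jr_inj : Function.Injective jr := by
    rw [injective_iff_map_eq_one]
    intro a ha
    have haM : (a : G) ∈ M := by
      exact (QuotientGroup.eq_one_iff ((a : G))).mp ha
    have h1 : (a : G) ^ (p * q) = 1 := by
      rw [mul_comm p q, pow_mul]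
      exact fact_n_p _ (fact_m_q _ haM)
    have h2 : (a : G) ^ r = 1 := a.2.2
    have : orderOf (a : G) ∣ 1 := by
      have d1 := orderOf_dvd_of_pow_eq_one h1
      have d2 := orderOf_dvd_of_pow_eq_one h2
      have := Nat.dvd_gcd d1 d2
      rwa [Nat.Coprime.gcd_eq_one
        (Nat.Coprime.mul ((Nat.coprime_primes hp hr).mpr hpr)
          ((Nat.coprime_primes hq hr).mpr hqr))] at this
    have : (a : G) = 1 := orderOf_eq_one_iff.mp (Nat.dvd_one.mp this)
    exact Subtype.ext this
  obtain ⟨ρr, hρr⟩ := exists_pow_retraction hr hRexp jr.range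
  haveI : IsMulCommutative ↥Zr := by
    constructor
    constructor
    intro a b
    exact Subtype.ext ((Subgroup.mem_center_iff.mp a.2.1 b).symm)
  set eqr := MonoidHom.ofInjective jr_inj with heqr
  obtain ⟨mr, -, hmr⟩ := Nat.exists_mul_mod_eq_one_of_coprime
    (Nat.Coprime.mul ((Nat.coprime_primes hp hr).mpr hpr)
      ((Nat.coprime_primes hq hr).mpr hqr)) hr.one_lt
  set er := p * q * mr with her
  set fr : G →* Subgroup.center G :=
    (Subgroup.inclusion hZrZ).comp
      (eqr.symm.toMonoidHom.comp (ρr.comp (QuotientGroup.mk' M))) with hfr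
  have fr_r : ∀ g : G, ((fr g : G)) ^ r = 1 := by
    intro g
    have : ((fr g : G)) =
        (((eqr.symm.toMonoidHom.comp (ρr.comp (QuotientGroup.mk' M)) g : Zr)) : G) := rfl
    rw [this]
    exact (eqr.symm.toMonoidHom.comp (ρr.comp (QuotientGroup.mk' M)) g).2.2
  have fr_z : ∀ z : G, z ∈ Subgroup.center G → ((fr z : G)) = z ^ er := by
    intro z hz
    have hζ : z ^ er ∈ Zr := by
      refine ⟨pow_mem hz er, ?_⟩
      rw [← pow_mul, show er * r = (p * q * r) * mr by rw [her]; ring, pow_mul, hexp, one_pow]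
    obtain ⟨t, het⟩ : ∃ t, er = r * t + 1 := by
      refine ⟨er / r, ?_⟩
      have h1 : er % r = 1 := by rw [her]; exact hmr
      conv_lhs => rw [← Nat.div_add_mod er r]
      rw [h1]
    have hmk : QuotientGroup.mk' M z = jr ⟨z ^ er, hζ⟩ := by
      show (z : G ⧸ M) = ((z ^ er : G) : G ⧸ M)
      rw [QuotientGroup.eq]
      have h2 : z⁻¹ * z ^ er = (z ^ r) ^ t := by
        rw [het, pow_succ, pow_mul, ← mul_assoc]
        group
      rw [h2]
      exact M.pow_mem (fact_g_r z) t
    have hcoe : ((fr z : G)) =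
        ((eqr.symm (ρr (QuotientGroup.mk' M z)) : Zr) : G) := rfl
    rw [hcoe, hmk]
    have hrange : jr ⟨z ^ er, hζ⟩ ∈ jr.range := ⟨_, rfl⟩
    have h2 : ρr (jr ⟨z ^ er, hζ⟩) = ⟨jr ⟨z ^ er, hζ⟩, hrange⟩ := hρr ⟨_, hrange⟩
    rw [h2]
    have h3 : eqr ⟨z ^ er, hζ⟩ = ⟨jr ⟨z ^ er, hζ⟩, hrange⟩ := by
      rw [heqr]; rfl
    rw [← h3]
    show ((eqr.symm (eqr ⟨z ^ er, hζ⟩) : Zr) : G) = z ^ er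
    rw [MulEquiv.symm_apply_apply]
  have sr_mod : er ≡ 1 [MOD r] := by
    unfold Nat.ModEq
    rw [her, hmr, Nat.one_mod_eq_one.mpr hr.ne_one]
  refine ⟨fp * fq * fr, ?_⟩
  intro z
  have coe_pow_eq : ∀ (w : Subgroup.center G) (n : ℕ), ((w ^ n : Subgroup.center G) : G)
      = (w : G) ^ n := fun w n => by push_cast; rfl
  have hzpow : z ^ (p * q * r) = 1 := by
    apply Subtype.ext
    rw [coe_pow_eq]
    exact hexp (z : G)
  have h1 : fp (z : G) = z ^ (N.index * mp) := by
    apply Subtype.ext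
    rw [coe_pow_eq]
    exact fp_z _ z.2
  have h2 : fq (z : G) = z ^ (M.index * e * mq) := by
    apply Subtype.ext
    rw [coe_pow_eq]
    exact fq_z _ z.2
  have h3 : fr (z : G) = z ^ er := by
    apply Subtype.ext
    rw [coe_pow_eq]
    exact fr_z _ z.2
  have hp' : (fp (z : G)) ^ p = 1 := by
    apply Subtype.ext
    rw [coe_pow_eq]
    exact fp_p _
  have hq' : (fq (z : G)) ^ q = 1 := by
    apply Subtype.ext
    rw [coe_pow_eq]
    exact fq_q _
  have hr' : (fr (z : G)) ^ r = 1 := by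
    apply Subtype.ext
    rw [coe_pow_eq]
    exact fr_r _
  show fp (z : G) * fq (z : G) * fr (z : G) = z
  exact key_comm hp hq hr hpq hpr hqr hzpow hp' hq' hr' h1 h2 h3 sp_mod sq_mod sr_mod

/-- A finite group `G ∈ 𝔄_p𝔄_q𝔄_r` is the internal direct product of a
subgroup `G₀` with trivial centre (itself in `𝔄_p𝔄_q𝔄_r`) and the centre `Z(G)`; in
particular `G ≅ G₀ × Z(G)`.  Moreover any such `G₀` is isomorphic to `G/Z(G)`, hence is
unique up to isomorphism. -/
theorem centre_splits_in_ApAqAr (p q r : ℕ) (hp : p.Prime) (hq : q.Prime) (hr : r.Prime)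
    (hpq : p ≠ q) (hpr : p ≠ r) (hqr : q ≠ r)
    (G : Type*) [Group G] [Finite G] (hG : InApAqAr p q r G) :
    (∃ G₀ : Subgroup G,
        Subgroup.center G₀ = ⊥ ∧
        G₀ ⊓ Subgroup.center G = ⊥ ∧
        G₀ ⊔ Subgroup.center G = ⊤ ∧
        InApAqAr p q r G₀ ∧
        Nonempty (G ≃* G₀ × Subgroup.center G)) ∧
    ∀ G₀ : Subgroup G,
        Subgroup.center G₀ = ⊥ →
        G₀ ⊓ Subgroup.center G = ⊥ →
        G₀ ⊔ Subgroup.center G = ⊤ →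
        InApAqAr p q r G₀ →
        Nonempty (G₀ ≃* G ⧸ Subgroup.center G) := by
  constructor
  · obtain ⟨π, hπ⟩ := exists_center_retraction p q r hp hq hr hpq hpr hqr G hG
    set G₀ := π.ker with hG₀def
    have hker : ∀ g : G, g * ((π g : G))⁻¹ ∈ G₀ := by
      intro g
      show π _ = 1
      rw [map_mul, map_inv, hπ (π g), mul_inv_cancel]
    have hinf : G₀ ⊓ Subgroup.center G = ⊥ := by
      rw [eq_bot_iff]
      rintro x ⟨hx1, hx2⟩
      have h1 : π x = (⟨x, hx2⟩ : Subgroup.center G) := hπ ⟨x, hx2⟩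
      have h2 : π x = 1 := hx1
      rw [Subgroup.mem_bot]
      have : (⟨x, hx2⟩ : Subgroup.center G) = 1 := by rw [← h1]; exact h2
      exact congrArg Subtype.val this
    have hsup : G₀ ⊔ Subgroup.center G = ⊤ := by
      rw [eq_top_iff]
      intro g _
      have hg : g = (g * ((π g : G))⁻¹) * (π g : G) := by group
      rw [hg]
      exact Subgroup.mul_mem _ ((le_sup_left : G₀ ≤ _) (hker g))
        ((le_sup_right : Subgroup.center G ≤ _) (π g).2)
    have hcent : Subgroup.center G₀ = ⊥ := by
      rw [eq_bot_iff]
      intro x hx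
      have hxc : (x : G) ∈ Subgroup.center G := by
        rw [Subgroup.mem_center_iff]
        intro g
        have hcomm1 : (g * ((π g : G))⁻¹) * (x : G) = (x : G) * (g * ((π g : G))⁻¹) :=
          congrArg Subtype.val (Subgroup.mem_center_iff.mp hx ⟨_, hker g⟩)
        have hcomm2 : ((π g : G)) * (x : G) = (x : G) * ((π g : G)) :=
          (Subgroup.mem_center_iff.mp (π g).2 (x : G)).symm
        calc g * (x : G) = ((g * ((π g : G))⁻¹) * (π g : G)) * (x : G) := by group
          _ = (g * ((π g : G))⁻¹) * ((x : G) * (π g : G)) := by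
              rw [mul_assoc, hcomm2]
          _ = ((x : G) * (g * ((π g : G))⁻¹)) * (π g : G) := by
              rw [← mul_assoc, hcomm1, mul_assoc, mul_assoc]
          _ = (x : G) * ((g * ((π g : G))⁻¹) * (π g : G)) := by rw [mul_assoc]
          _ = (x : G) * g := by rw [inv_mul_cancel_right]
      have hb : (x : G) ∈ G₀ ⊓ Subgroup.center G := ⟨x.2, hxc⟩
      rw [hinf, Subgroup.mem_bot] at hb
      rw [Subgroup.mem_bot]
      exact Subtype.ext hb
    refine ⟨G₀, hcent, hinf, hsup, hG.subgroup G₀, ⟨?_⟩⟩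
    refine MulEquiv.mk ⟨fun g => (⟨g * ((π g : G))⁻¹, hker g⟩, π g),
      fun x => (x.1 : G) * (x.2 : G), ?_, ?_⟩ ?_
    · intro g
      show (g * ((π g : G))⁻¹) * (π g : G) = g
      rw [inv_mul_cancel_right]
    · rintro ⟨a, w⟩
      have hπa : π (a : G) = 1 := a.2
      have hπaw : π ((a : G) * (w : G)) = w := by
        rw [map_mul, hπa, one_mul, hπ w]
      refine Prod.ext ?_ ?_
      · apply Subtype.ext
        show ((a : G) * (w : G)) * ((π ((a : G) * (w : G)) : G))⁻¹ = (a : G)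
        rw [hπaw, mul_inv_cancel_right]
      · exact hπaw
    · intro g h
      have hc : ∀ y : G, y * ((π g : G)) = ((π g : G)) * y :=
        fun y => Subgroup.mem_center_iff.mp (π g).2 y
      refine Prod.ext ?_ (map_mul π g h)
      apply Subtype.ext
      show (g * h) * ((π (g * h) : G))⁻¹ = (g * ((π g : G))⁻¹) * (h * ((π h : G))⁻¹)
      rw [map_mul]
      have hcoe : ((π g * π h : Subgroup.center G) : G) = (π g : G) * (π h : G) := rfl
      rw [hcoe, mul_inv_rev]
      have hc' : (h * ((π h : G))⁻¹) * ((π g : G))⁻¹ = ((π g : G))⁻¹ * (h * ((π h : G))⁻¹) :=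
        (show Commute (h * ((π h : G))⁻¹) ((π g : G)) from hc _).inv_right
      calc (g * h) * (((π h : G))⁻¹ * ((π g : G))⁻¹)
          = g * ((h * ((π h : G))⁻¹) * ((π g : G))⁻¹) := by
            group
        _ = g * (((π g : G))⁻¹ * (h * ((π h : G))⁻¹)) := by rw [hc']
        _ = (g * ((π g : G))⁻¹) * (h * ((π h : G))⁻¹) := by rw [mul_assoc]
  · intro G₀ _ hinf hsup _
    set f : G₀ →* G ⧸ Subgroup.center G :=
      (QuotientGroup.mk' (Subgroup.center G)).comp G₀.subtype with hf
    have finj : Function.Injective f := by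
      rw [injective_iff_map_eq_one]
      intro a ha
      have haZ : (a : G) ∈ Subgroup.center G := (QuotientGroup.eq_one_iff ((a : G))).mp ha
      have : (a : G) ∈ G₀ ⊓ Subgroup.center G := ⟨a.2, haZ⟩
      rw [hinf, Subgroup.mem_bot] at this
      exact Subtype.ext this
    have fsurj : Function.Surjective f := by
      intro y
      induction y using QuotientGroup.induction_on with
      | H g =>
        have hg : g ∈ (↑(G₀ ⊔ Subgroup.center G) : Set G) := hsup ▸ Subgroup.mem_top g
        rw [Subgroup.mul_normal] at hg
        obtain ⟨a, ha, z, hz, rfl⟩ := hg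
        refine ⟨⟨a, ha⟩, ?_⟩
        show ((a : G) : G ⧸ Subgroup.center G) = ((a * z : G) : G ⧸ Subgroup.center G)
        rw [QuotientGroup.eq]
        simpa using hz
    exact ⟨MulEquiv.ofBijective f ⟨finj, fsurj⟩⟩
end

section
/- Let p, q and r be distinct primes and let G be a finite group lying in 𝔄_p𝔄_q𝔄_r. Then there exist a finite group X lying in 𝔄_p𝔄_q𝔄_r with trivial center and an abelian group Z such that G is isomorphic to X × Z. Moreover, if X and X₁ are finite groups lying in 𝔄_p𝔄_q𝔄_r with trivial center, and Z and Z₁ are abelian groups, and G is isomorphic both to X × Z and to X₁ × Z₁, then X is isomorphic to X₁ and Z is isomorphic to Z₁. -/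
set_option maxHeartbeats 1000000

section Aux

open Subgroup
open commutatorElement
section Helpers

variable {p q r : ℕ}

lemma ElemAbelian.of_mulEquiv {A B : Type*} [Group A] [Group B] (e : A ≃* B)
    (h : ElemAbelian p A) : ElemAbelian p B := by
  obtain ⟨hc, hp⟩ := h
  refine ⟨fun a b => ?_, fun a => ?_⟩
  · have := congrArg e (hc (e.symm a) (e.symm b))
    simpa [map_mul] using this
  · have := congrArg e (hp (e.symm a))
    simpa [map_pow] using this

lemma ElemAbelian.subgroupOf {K : Type*} [Group K] {N S : Subgroup K}
    (h : ElemAbelian p N) : ElemAbelian p (N.subgroupOf S) := by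
  obtain ⟨hc, hp⟩ := h
  constructor
  · intro a b
    have := hc ⟨(a : S), Subgroup.mem_subgroupOf.mp a.2⟩ ⟨(b : S), Subgroup.mem_subgroupOf.mp b.2⟩
    have h2 : ((a : S) : K) * ((b : S) : K) = ((b : S) : K) * ((a : S) : K) :=
      congrArg Subtype.val this
    exact Subtype.ext (Subtype.ext h2)
  · intro a
    have := hp ⟨(a : S), Subgroup.mem_subgroupOf.mp a.2⟩
    have h2 : ((a : S) : K) ^ p = 1 := by
      simpa using congrArg Subtype.val this
    apply Subtype.ext; apply Subtype.ext
    simpa using h2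

lemma InApAq.of_mulEquiv {A B : Type*} [Group A] [Group B] (e : A ≃* B)
    (h : InApAq q r A) : InApAq q r B := by
  obtain ⟨N, hN, hE, hcomm, hpow⟩ := h
  refine ⟨N.map e.toMonoidHom, hN.map e.toMonoidHom e.surjective,
    (hE.of_mulEquiv (e.subgroupMap N)), fun a b => ?_, fun a => ?_⟩
  · refine ⟨e.symm a * e.symm b * (e.symm a)⁻¹ * (e.symm b)⁻¹,
      hcomm (e.symm a) (e.symm b), ?_⟩
    simp [map_mul]
  · exact ⟨(e.symm a) ^ r, hpow (e.symm a), by simp [map_pow]⟩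

lemma InApAq.of_subgroup {K : Type*} [Group K] (S : Subgroup K)
    (h : InApAq q r K) : InApAq q r S := by
  obtain ⟨N, hN, hE, hcomm, hpow⟩ := h
  haveI := hN
  refine ⟨N.subgroupOf S, inferInstance, hE.subgroupOf, fun a b => ?_, fun a => ?_⟩
  · rw [Subgroup.mem_subgroupOf]
    push_cast
    exact hcomm a b
  · rw [Subgroup.mem_subgroupOf]
    push_cast
    exact hpow a

lemma InApAqAr.of_mulEquiv {A B : Type*} [Group A] [Group B] (e : A ≃* B)
    (h : InApAqAr p q r A) : InApAqAr p q r B := by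
  obtain ⟨N, hN, hE, hq⟩ := h
  haveI := hN
  haveI : (N.map e.toMonoidHom).Normal := hN.map e.toMonoidHom e.surjective
  refine ⟨N.map e.toMonoidHom, inferInstance, hE.of_mulEquiv (e.subgroupMap N), ?_⟩
  exact hq.of_mulEquiv (QuotientGroup.congr N (N.map e.toMonoidHom) e rfl)

lemma InApAqAr.of_subgroup {K : Type*} [Group K] (S : Subgroup K)
    (h : InApAqAr p q r K) : InApAqAr p q r S := by
  obtain ⟨N, hN, hE, hq⟩ := h
  haveI := hN
  refine ⟨N.subgroupOf S, inferInstance, hE.subgroupOf, ?_⟩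
  let f : S →* K ⧸ N := (QuotientGroup.mk' N).comp S.subtype
  have hker : f.ker = N.subgroupOf S := by
    ext x
    simp [f, MonoidHom.mem_ker, QuotientGroup.eq_one_iff, Subgroup.mem_subgroupOf]
  have h1 : InApAq q r f.range := InApAq.of_subgroup f.range hq
  have h2 : InApAq q r (S ⧸ f.ker) := h1.of_mulEquiv (QuotientGroup.quotientKerEquivRange f).symm
  haveI : f.ker.Normal := inferInstance
  haveI : (N.subgroupOf S).Normal := inferInstance
  exact h2.of_mulEquiv (QuotientGroup.quotientMulEquivOfEq hker)

end Helpers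



lemma exists_compl_subgroup {A : Type*} [CommGroup A] [Finite A] {n : ℕ}
    (hn : Squarefree n) (hexp : ∀ x : A, x ^ n = 1) (B : Subgroup A) :
    ∃ C : Subgroup A, B ⊓ C = ⊥ ∧ B ⊔ C = ⊤ := by
  haveI : Finite (Subgroup A) := Finite.of_injective _ SetLike.coe_injective
  obtain ⟨C, hC, hCmax⟩ := Set.Finite.exists_maximalFor (id : Subgroup A → Subgroup A)
    {C | B ⊓ C = ⊥} (Set.toFinite _) ⟨⊥, by simp⟩
  simp only [Set.mem_setOf_eq] at hC
  refine ⟨C, hC, ?_⟩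
  by_contra hsup
  set J := B ⊔ C with hJ
  have hex : ∃ g : A, g ∉ J := by
    by_contra hcon
    push_neg at hcon
    exact hsup ((Subgroup.eq_top_iff' J).mpr hcon)
  obtain ⟨g, hg⟩ := hex
  let π : A →* A ⧸ J := QuotientGroup.mk' J
  have hπg : π g ≠ 1 := by
    simpa [π, QuotientGroup.eq_one_iff] using hg
  have hdn : orderOf (π g) ∣ n := orderOf_dvd_of_pow_eq_one (by rw [← map_pow, hexp, map_one])
  set d := orderOf (π g) with hd
  have hd0 : d ≠ 0 := fun h0 => hn.ne_zero (Nat.eq_zero_of_zero_dvd (h0 ▸ hdn))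
  have hd1 : d ≠ 1 := fun h1 => hπg (orderOf_eq_one_iff.mp h1)
  set s := d.minFac with hs
  have hsprime : s.Prime := Nat.minFac_prime hd1
  have hsd : s ∣ d := Nat.minFac_dvd d
  -- h := g ^ (d / s) : its image has order s
  set h := g ^ (d / s) with hh
  have hπh : orderOf (π h) = s := by
    rw [hh, map_pow]
    exact orderOf_pow_orderOf_div hd0 hsd
  -- s divides the order m of h
  set m := orderOf h with hm
  have hsm : s ∣ m := hπh ▸ orderOf_map_dvd π h
  have hmn : m ∣ n := orderOf_dvd_of_pow_eq_one (hexp h)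
  have hm0 : m ≠ 0 := fun h0 => hn.ne_zero (Nat.eq_zero_of_zero_dvd (h0 ▸ hmn))
  set t := m / s with ht
  have hmst : m = s * t := (Nat.mul_div_cancel' hsm).symm
  have hst : ¬ s ∣ t := by
    intro hdvd
    have : s * s ∣ m := by
      rw [hmst]; exact mul_dvd_mul_left s hdvd
    exact hsprime.not_isUnit (hn s (this.trans hmn))
  -- a := h ^ t has a^s = 1 and a ∉ J
  set a := h ^ t with ha
  have has : a ^ s = 1 := by
    rw [ha, ← pow_mul, mul_comm, ← hmst, hm, pow_orderOf_eq_one]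
  have haJ : a ∉ J := by
    intro haJ
    have : π a = 1 := (QuotientGroup.eq_one_iff a).mpr haJ
    rw [ha, map_pow] at this
    have := orderOf_dvd_of_pow_eq_one this
    rw [hπh] at this
    exact hst this
  have ha1 : a ≠ 1 := fun h1 => haJ (h1 ▸ J.one_mem)
  -- key: any power of a is either 1 or generates a
  have hkey : ∀ y : A, y ∈ Subgroup.zpowers a → y ∈ J → y = 1 := by
    intro y hy hyJ
    obtain ⟨k, rfl⟩ := hy
    change a ^ k ∈ J at hyJ
    show a ^ k = 1
    -- reduce to natural exponent j = k mod s
    have hzs : (a : A) ^ (s : ℤ) = 1 := by exact_mod_cast has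
    have hred : a ^ k = a ^ (k % s).toNat := by
      conv_lhs => rw [← Int.emod_add_mul_ediv k s]
      rw [zpow_add, zpow_mul, hzs, one_zpow, mul_one,
        ← zpow_natCast, Int.toNat_of_nonneg (Int.emod_nonneg k (by exact_mod_cast hsprime.ne_zero))]
    set j := (k % s).toNat with hj
    rw [hred] at hyJ ⊢
    by_cases hj0 : j = 0
    · simp [hj0]
    · exfalso
      -- a ∈ ⟨a^j⟩ ≤ J, contradiction
      have hspos : (0 : ℤ) < (s : ℤ) := by exact_mod_cast hsprime.pos
      have hjs : j < s := by
        have h1 := Int.emod_lt_of_pos k hspos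
        have h2 := Int.emod_nonneg k (by exact_mod_cast hsprime.ne_zero : (s : ℤ) ≠ 0)
        omega
      have hcop : Nat.Coprime j s := (Nat.coprime_comm.mp
        ((hsprime.coprime_iff_not_dvd).mpr (fun hdvd =>
          (not_le.mpr hjs) (Nat.le_of_dvd (Nat.pos_of_ne_zero hj0) hdvd))))
      obtain ⟨u, -, hu⟩ := Nat.exists_mul_mod_eq_one_of_coprime hcop hsprime.one_lt
      have : a = (a ^ j) ^ u := by
        rw [← pow_mul]
        conv_lhs => rw [← pow_one a]
        rw [← hu]
        conv_rhs => rw [← Nat.div_add_mod (j * u) s, pow_add, pow_mul, has, one_pow, one_mul]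
      rw [this] at haJ
      exact haJ (J.pow_mem hyJ u)
  -- C ⊔ ⟨a⟩ contradicts maximality
  have hC' : B ⊓ (C ⊔ Subgroup.zpowers a) = ⊥ := by
    rw [eq_bot_iff]
    intro x hx
    rw [Subgroup.mem_inf] at hx
    obtain ⟨hxB, hxC'⟩ := hx
    rw [Subgroup.mem_sup] at hxC'
    obtain ⟨c, hc, y, hy, rfl⟩ := hxC'
    have hyJ : y ∈ J := by
      have hcJ : c ∈ J := hJ ▸ Subgroup.mem_sup_right hc
      have hxJ : c * y ∈ J := hJ ▸ Subgroup.mem_sup_left hxB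
      have := J.mul_mem (J.inv_mem hcJ) hxJ
      simpa using this
    have hy1 : y = 1 := hkey y hy hyJ
    rw [hy1, mul_one]
    rw [hy1, mul_one] at hxB
    have hcBC : c ∈ B ⊓ C := Subgroup.mem_inf.mpr ⟨hxB, hc⟩
    rw [hC] at hcBC
    exact hcBC
  have hle : C ≤ C ⊔ Subgroup.zpowers a := le_sup_left
  have := hCmax (j := C ⊔ Subgroup.zpowers a) hC' hle
  simp only [id] at this
  have haC : a ∈ C := this (Subgroup.mem_sup_right (Subgroup.mem_zpowers a))
  exact haJ (hJ ▸ Subgroup.mem_sup_right haC)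



lemma map_center_mulEquiv {G H : Type*} [Group G] [Group H] (e : G ≃* H) :
    (center G).map e.toMonoidHom = center H := by
  ext h
  simp only [Subgroup.mem_map]
  constructor
  · rintro ⟨g, hg, rfl⟩
    rw [Subgroup.mem_center_iff]
    intro b
    have := Subgroup.mem_center_iff.mp hg (e.symm b)
    calc b * e g = e (e.symm b * g) := by simp [map_mul]
    _ = e (g * e.symm b) := by rw [this]
    _ = e g * b := by simp [map_mul]
  · intro hc
    refine ⟨e.symm h, ?_, by simp⟩
    rw [Subgroup.mem_center_iff]
    intro a
    apply e.injective
    simp only [map_mul, MulEquiv.apply_symm_apply]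
    exact Subgroup.mem_center_iff.mp hc (e a)

lemma prod_mem_center_iff {X Z : Type*} [Group X] [Group Z] (x : X) (z : Z) :
    (x, z) ∈ center (X × Z) ↔ x ∈ center X ∧ z ∈ center Z := by
  constructor
  · intro hc
    constructor
    · rw [Subgroup.mem_center_iff]
      intro g
      have h' := Prod.ext_iff.mp (Subgroup.mem_center_iff.mp hc (g, 1))
      simpa using h'.1
    · rw [Subgroup.mem_center_iff]
      intro g
      have h' := Prod.ext_iff.mp (Subgroup.mem_center_iff.mp hc (1, g))
      simpa using h'.2
  · rintro ⟨h1, h2⟩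
    rw [Subgroup.mem_center_iff]
    rintro ⟨g1, g2⟩
    exact Prod.ext (Subgroup.mem_center_iff.mp h1 g1) (Subgroup.mem_center_iff.mp h2 g2)

/-- In `X × Z` with `Z` commutative and `X` centre-free, the centre is `⊥ × ⊤ ≃ Z`. -/
noncomputable def centerProdEquivSnd (X Z : Type*) [Group X] [CommGroup Z]
    (hX : center X = ⊥) : ↥(center (X × Z)) ≃* Z where
  toFun c := (c : X × Z).2
  invFun z := ⟨(1, z), (prod_mem_center_iff 1 z).mpr
    ⟨Subgroup.one_mem _, Subgroup.mem_center_iff.mpr fun g => mul_comm g z⟩⟩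
  left_inv c := by
    have h1 : (c : X × Z).1 ∈ center X :=
      ((prod_mem_center_iff (c : X × Z).1 (c : X × Z).2).mp c.2).1
    rw [hX, Subgroup.mem_bot] at h1
    apply Subtype.ext
    exact Prod.ext h1.symm rfl
  right_inv z := rfl
  map_mul' a b := rfl

/-- `(X × Z) ⧸ center ≃* X` when `X` is centre-free and `Z` commutative. -/
noncomputable def centerProdQuotEquivFst (X Z : Type*) [Group X] [CommGroup Z]
    (hX : center X = ⊥) : (X × Z) ⧸ center (X × Z) ≃* X := by
  have hker : center (X × Z) = (MonoidHom.fst X Z).ker := by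
    ext c
    obtain ⟨x, z⟩ := c
    rw [MonoidHom.mem_ker, prod_mem_center_iff, hX]
    simp only [Subgroup.mem_bot, MonoidHom.coe_fst]
    constructor
    · exact fun h => h.1
    · intro h
      exact ⟨h, Subgroup.mem_center_iff.mpr fun g => mul_comm g z⟩
  exact (QuotientGroup.quotientMulEquivOfEq hker).trans
    (QuotientGroup.quotientKerEquivOfSurjective (MonoidHom.fst X Z) (fun x => ⟨(x, 1), rfl⟩))

/-- The abelian direct factor is isomorphic to the centre. -/
noncomputable def sndEquivCenterOfEquiv {G X Z : Type*} [Group G] [Group X] [CommGroup Z]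
    (hX : center X = ⊥) (e : G ≃* X × Z) : Z ≃* ↥(center G) :=
  ((centerProdEquivSnd X Z hX).symm.trans
    (MulEquiv.subgroupCongr (map_center_mulEquiv e).symm)).trans
    (e.subgroupMap (center G)).symm

/-- The centre-free direct factor is isomorphic to `G ⧸ center G`. -/
noncomputable def fstEquivQuotCenterOfEquiv {G X Z : Type*} [Group G] [Group X] [CommGroup Z]
    (hX : center X = ⊥) (e : G ≃* X × Z) : (G ⧸ center G) ≃* X :=
  (QuotientGroup.congr (center G) (center (X × Z)) e (map_center_mulEquiv e)).trans
    (centerProdQuotEquivFst X Z hX)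



lemma exponent_fact {p q r : ℕ} {G : Type*} [Group G] (hG : InApAqAr p q r G) :
    ∀ g : G, g ^ (r * q * p) = 1 := by
  obtain ⟨N, hN, ⟨hNc, hNp⟩, M, hM, ⟨hMc, hMq⟩, hMcomm, hMpow⟩ := hG
  haveI := hN
  intro g
  have h1 : ((g : G ⧸ N)) ^ r ∈ M := hMpow _
  have h2 : ((g : G ⧸ N)) ^ (r * q) = 1 := by
    have := congrArg Subtype.val (hMq ⟨_, h1⟩)
    simpa [pow_mul] using this
  have h3 : g ^ (r * q) ∈ N := by
    rw [← QuotientGroup.eq_one_iff]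
    push_cast
    exact h2
  have h4 := congrArg Subtype.val (hNp ⟨_, h3⟩)
  simpa [pow_mul] using h4

lemma center_commutator_triv {p q r : ℕ} (hp : p.Prime) (hq : q.Prime)
    (hr : r.Prime) (hpq : p ≠ q) (hpr : p ≠ r) (hqr : q ≠ r)
    (G : Type*) [Group G] [Finite G] (hG : InApAqAr p q r G) :
    ∀ z ∈ center G, z ∈ commutator G → z = 1 := by
  have hexpG := exponent_fact hG
  obtain ⟨N, hN, ⟨hNc, hNp⟩, M, hM, ⟨hMc, hMq⟩, hMcomm, hMpow⟩ := hG
  haveI := hN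
  haveI := hM
  haveI : Fact p.Prime := ⟨hp⟩
  haveI : Fact q.Prime := ⟨hq⟩
  haveI : Fact r.Prime := ⟨hr⟩
  intro z hz hzD
  -- quotient exponent facts
  have hexpQ : ∀ a : G ⧸ N, a ^ (r * q) = 1 := by
    intro a
    have := congrArg Subtype.val (hMq ⟨_, hMpow a⟩)
    simpa [pow_mul] using this
  have hexpQQ : ∀ b : (G ⧸ N) ⧸ M, b ^ r = 1 := by
    intro b
    obtain ⟨a, rfl⟩ := QuotientGroup.mk_surjective b
    rw [← QuotientGroup.mk_pow, QuotientGroup.eq_one_iff]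
    exact hMpow a
  -- p does not divide [G : N]
  have hNidx : ¬ p ∣ N.index := by
    rw [Subgroup.index_eq_card]
    intro hdvd
    obtain ⟨x, hx⟩ := exists_prime_orderOf_dvd_card' p hdvd
    have hdvd2 : orderOf x ∣ r * q := orderOf_dvd_of_pow_eq_one (hexpQ x)
    rw [hx] at hdvd2
    rcases (Nat.Prime.dvd_mul hp).mp hdvd2 with h | h
    · exact hpr ((Nat.prime_dvd_prime_iff_eq hp hr).mp h)
    · exact hpq ((Nat.prime_dvd_prime_iff_eq hp hq).mp h)
  -- the preimage of M in G
  set H₂ : Subgroup G := M.comap (QuotientGroup.mk' N) with hH₂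
  have hH₂idx : H₂.index = M.index :=
    Subgroup.index_comap_of_surjective M (QuotientGroup.mk'_surjective N)
  have hH₂q : ¬ q ∣ H₂.index := by
    rw [hH₂idx, Subgroup.index_eq_card]
    intro hdvd
    obtain ⟨x, hx⟩ := exists_prime_orderOf_dvd_card' q hdvd
    have hdvd2 : orderOf x ∣ r := orderOf_dvd_of_pow_eq_one (hexpQQ x)
    rw [hx] at hdvd2
    exact hqr ((Nat.prime_dvd_prime_iff_eq hq hr).mp hdvd2)
  have hn0 : orderOf z ≠ 0 := fun h0 => by
    have := orderOf_dvd_of_pow_eq_one (hexpG z)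
    rw [h0] at this
    have hrqp : r * q * p = 0 := Nat.eq_zero_of_zero_dvd this
    simpa [hp.ne_zero, hq.ne_zero, hr.ne_zero] using hrqp
  have hkeygen : ∀ y : G, y ∈ center G → ∀ (K : Subgroup G) (k : ℕ) (g₀ : G),
      g₀⁻¹ * y ^ k * g₀ ∈ K → g₀⁻¹ * y ^ k * g₀ = y ^ k := by
    intro y hy K k g₀ _
    have hcen : y ^ k ∈ center G := Subgroup.pow_mem _ hy _
    have hc := Subgroup.mem_center_iff.mp hcen g₀
    rw [mul_assoc, ← hc, inv_mul_cancel_left]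
  -- p-part of z dies via transfer into N
  have hpz : ¬ p ∣ orderOf z := by
    intro hdvd
    set y := z ^ (orderOf z / p) with hy
    have hyo : orderOf y = p := orderOf_pow_orderOf_div hn0 hdvd
    have hyz : y ∈ center G := Subgroup.pow_mem _ hz _
    have hyD : y ∈ _root_.commutator G := Subgroup.pow_mem _ hzD _
    letI : CommGroup ↥N := { (inferInstance : Group ↥N) with mul_comm := hNc }
    let V : G →* ↥N := MonoidHom.transfer (MonoidHom.id ↥N)
    have h1 := MonoidHom.transfer_eq_pow (MonoidHom.id ↥N) y (hkeygen y hyz N)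
    have h2 : V y = 1 := Abelianization.commutator_subset_ker V hyD
    have h3 : y ^ N.index = 1 := by
      have := h1.symm.trans h2
      simpa using congrArg Subtype.val this
    have : p ∣ N.index := hyo ▸ orderOf_dvd_of_pow_eq_one h3
    exact hNidx this
  -- q-part of z dies via transfer into M
  have hqz : ¬ q ∣ orderOf z := by
    intro hdvd
    set y := z ^ (orderOf z / q) with hy
    have hyo : orderOf y = q := orderOf_pow_orderOf_div hn0 hdvd
    have hyz : y ∈ center G := Subgroup.pow_mem _ hz _
    have hyD : y ∈ _root_.commutator G := Subgroup.pow_mem _ hzD _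
    letI : CommGroup ↥M := { (inferInstance : Group ↥M) with mul_comm := hMc }
    let φ : ↥H₂ →* ↥M :=
      { toFun := fun x => ⟨QuotientGroup.mk' N x, x.2⟩
        map_one' := by ext; simp
        map_mul' := by intro x y; ext; simp }
    let V : G →* ↥M := MonoidHom.transfer φ
    have h1 := MonoidHom.transfer_eq_pow φ y (hkeygen y hyz H₂)
    have h2 : V y = 1 := Abelianization.commutator_subset_ker V hyD
    have h3 : QuotientGroup.mk' N (y ^ H₂.index) = 1 := by
      have := h1.symm.trans h2
      simpa [φ] using congrArg Subtype.val this
    have h4 : y ^ H₂.index ∈ N := by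
      rwa [QuotientGroup.mk'_apply, QuotientGroup.eq_one_iff] at h3
    have h5 : (y ^ H₂.index) ^ p = 1 := by
      simpa using congrArg Subtype.val (hNp ⟨_, h4⟩)
    rw [← pow_mul] at h5
    have h6 : q ∣ H₂.index * p := hyo ▸ orderOf_dvd_of_pow_eq_one h5
    rcases (Nat.Prime.dvd_mul hq).mp h6 with h | h
    · exact hH₂q h
    · exact hpq ((Nat.prime_dvd_prime_iff_eq hq hp).mp h).symm
  -- r-part of z dies since commutators land in H₂
  have hrz : ¬ r ∣ orderOf z := by
    intro hdvd
    set y := z ^ (orderOf z / r) with hy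
    have hyo : orderOf y = r := orderOf_pow_orderOf_div hn0 hdvd
    have hyD : y ∈ _root_.commutator G := Subgroup.pow_mem _ hzD _
    have hDle : _root_.commutator G ≤ H₂ := by
      rw [_root_.commutator_def, Subgroup.commutator_le]
      intro g₁ _ g₂ _
      rw [hH₂, Subgroup.mem_comap]
      have : (QuotientGroup.mk' N) ⁅g₁, g₂⁆ =
          (g₁ : G ⧸ N) * g₂ * (g₁ : G ⧸ N)⁻¹ * (g₂ : G ⧸ N)⁻¹ := by
        rw [commutatorElement_def]
        push_cast
        rfl
      rw [this]
      exact hMcomm _ _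
    have h4 : ((y : G ⧸ N)) ∈ M := hDle hyD
    have h5 : ((y : G ⧸ N)) ^ q = 1 := by
      simpa using congrArg Subtype.val (hMq ⟨_, h4⟩)
    have h6 : y ^ q ∈ N := by
      rw [← QuotientGroup.eq_one_iff, QuotientGroup.mk_pow]
      exact h5
    have h7 : (y ^ q) ^ p = 1 := by
      simpa using congrArg Subtype.val (hNp ⟨_, h6⟩)
    rw [← pow_mul] at h7
    have h8 : r ∣ q * p := hyo ▸ orderOf_dvd_of_pow_eq_one h7
    rcases (Nat.Prime.dvd_mul hr).mp h8 with h | h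
    · exact hqr ((Nat.prime_dvd_prime_iff_eq hr hq).mp h).symm
    · exact hpr ((Nat.prime_dvd_prime_iff_eq hr hp).mp h).symm
  -- conclude
  rw [← orderOf_eq_one_iff]
  by_contra hne
  have hmf : (orderOf z).minFac.Prime := Nat.minFac_prime hne
  have hmfd : (orderOf z).minFac ∣ r * q * p :=
    (Nat.minFac_dvd _).trans (orderOf_dvd_of_pow_eq_one (hexpG z))
  rcases (Nat.Prime.dvd_mul hmf).mp hmfd with h | h
  · rcases (Nat.Prime.dvd_mul hmf).mp h with h' | h'
    · exact hrz (((Nat.prime_dvd_prime_iff_eq hmf hr).mp h') ▸ Nat.minFac_dvd _)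
    · exact hqz (((Nat.prime_dvd_prime_iff_eq hmf hq).mp h') ▸ Nat.minFac_dvd _)
  · exact hpz (((Nat.prime_dvd_prime_iff_eq hmf hp).mp h) ▸ Nat.minFac_dvd _)

lemma exists_complement_to_center {p q r : ℕ} (hp : p.Prime) (hq : q.Prime)
    (hr : r.Prime) (hpq : p ≠ q) (hpr : p ≠ r) (hqr : q ≠ r)
    (G : Type*) [Group G] [Finite G] (hG : InApAqAr p q r G) :
    ∃ W : Subgroup G, (∀ x, x ∈ center G → x ∈ W → x = 1) ∧
      (∀ g : G, ∃ z ∈ center G, ∃ w ∈ W, g = z * w) := by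
  have hZD := center_commutator_triv hp hq hr hpq hpr hqr G hG
  have hexpG := exponent_fact hG
  have hnsf : Squarefree (r * q * p) := by
    rw [Nat.squarefree_mul_iff]
    refine ⟨Nat.Coprime.mul ((Nat.coprime_primes hr hp).mpr (Ne.symm hpr))
      ((Nat.coprime_primes hq hp).mpr (Ne.symm hpq)), ?_, hp.prime.squarefree⟩
    rw [Nat.squarefree_mul_iff]
    exact ⟨(Nat.coprime_primes hr hq).mpr (Ne.symm hqr), hr.prime.squarefree,
      hq.prime.squarefree⟩
  have hsurj : Function.Surjective ((Abelianization.of : G →* Abelianization G) : G → Abelianization G) := fun x =>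
    Quotient.inductionOn x fun g => ⟨g, (Abelianization.mk_eq_of g).symm⟩
  have hAexp : ∀ x : Abelianization G, x ^ (r * q * p) = 1 := by
    intro x
    obtain ⟨g, rfl⟩ := hsurj x
    rw [← map_pow, hexpG, map_one]
  obtain ⟨C, hC1, hC2⟩ := exists_compl_subgroup hnsf hAexp ((center G).map Abelianization.of)
  set W : Subgroup G := C.comap Abelianization.of with hWdef
  have hker1 : ∀ x : G, x ∈ _root_.commutator G → Abelianization.of x = 1 := by
    intro x hx
    exact Abelianization.commutator_subset_ker Abelianization.of hx
  have hker2 : ∀ x : G, Abelianization.of x = 1 → x ∈ _root_.commutator G := by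
    intro x hx
    letI : CommGroup (G ⧸ _root_.commutator G) :=
      { (inferInstance : Group (G ⧸ _root_.commutator G)) with
        mul_comm := by
          intro a b
          obtain ⟨a, rfl⟩ := QuotientGroup.mk_surjective a
          obtain ⟨b, rfl⟩ := QuotientGroup.mk_surjective b
          rw [← QuotientGroup.mk_mul, ← QuotientGroup.mk_mul, QuotientGroup.eq]
          have : (a * b)⁻¹ * (b * a) = ⁅b⁻¹, a⁻¹⁆ := by
            rw [commutatorElement_def]
            group
          rw [this]
          exact Subgroup.commutator_mem_commutator (Subgroup.mem_top _) (Subgroup.mem_top _) }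
    let f : G →* G ⧸ _root_.commutator G := QuotientGroup.mk' (_root_.commutator G)
    have h1 : Abelianization.lift f (Abelianization.of x) = f x := Abelianization.lift_apply_of f x
    rw [hx, map_one] at h1
    have h2 : f x = 1 := h1.symm
    rwa [QuotientGroup.mk'_apply, QuotientGroup.eq_one_iff] at h2
  refine ⟨W, ?_, ?_⟩
  · intro x hxZ hxW
    have h1 : Abelianization.of x ∈ (center G).map Abelianization.of ⊓ C :=
      Subgroup.mem_inf.mpr ⟨Subgroup.mem_map_of_mem _ hxZ, hxW⟩
    rw [hC1, Subgroup.mem_bot] at h1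
    exact hZD x hxZ (hker2 x h1)
  · intro g
    have h1 : Abelianization.of g ∈ (center G).map Abelianization.of ⊔ C := by
      rw [hC2]; trivial
    rw [Subgroup.mem_sup] at h1
    obtain ⟨b, hb, c, hc, hbc⟩ := h1
    obtain ⟨z, hz, rfl⟩ := hb
    refine ⟨z, hz, z⁻¹ * g, ?_, by group⟩
    show Abelianization.of (z⁻¹ * g) ∈ C
    rw [map_mul, map_inv, ← hbc, inv_mul_cancel_left]
    exact hc

end Aux

open Subgroup in
/-- Every finite `G ∈ 𝔄_p𝔄_q𝔄_r` is isomorphic to `X × Z` with `X` a finite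
group in `𝔄_p𝔄_q𝔄_r` having trivial centre and `Z` abelian; moreover `X` and `Z` are
determined up to isomorphism. -/
theorem direct_decomposition_in_ApAqAr (p q r : ℕ) (hp : p.Prime) (hq : q.Prime)
    (hr : r.Prime) (hpq : p ≠ q) (hpr : p ≠ r) (hqr : q ≠ r)
    (G : Type) [Group G] [Finite G] (hG : InApAqAr p q r G) :
    (∃ (X : Type) (_ : Group X) (Z : Type) (_ : CommGroup Z),
        Finite X ∧ InApAqAr p q r X ∧ Subgroup.center X = ⊥ ∧
        Nonempty (G ≃* X × Z)) ∧
    ∀ (X X₁ Z Z₁ : Type) (_ : Group X) (_ : Group X₁) (_ : CommGroup Z) (_ : CommGroup Z₁),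
      Finite X → Finite X₁ →
      InApAqAr p q r X → InApAqAr p q r X₁ →
      Subgroup.center X = ⊥ → Subgroup.center X₁ = ⊥ →
      Nonempty (G ≃* X × Z) → Nonempty (G ≃* X₁ × Z₁) →
      Nonempty (X ≃* X₁) ∧ Nonempty (Z ≃* Z₁) := by
  constructor
  · obtain ⟨W, hWZ, hWdec⟩ := exists_complement_to_center hp hq hr hpq hpr hqr G hG
    let f : W × ↥(center G) →* G :=
      { toFun := fun wz => (wz.1 : G) * (wz.2 : G)
        map_one' := by simp
        map_mul' := by
          rintro ⟨w₁, z₁⟩ ⟨w₂, z₂⟩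
          simp only [Prod.fst_mul, Prod.snd_mul, Subgroup.coe_mul]
          have hc : (z₁ : G) * (w₂ : G) = (w₂ : G) * (z₁ : G) :=
            (Subgroup.mem_center_iff.mp z₁.2 (w₂ : G)).symm
          calc (w₁ : G) * w₂ * ((z₁ : G) * z₂)
              = (w₁ : G) * ((w₂ : G) * (z₁ : G)) * z₂ := by group
            _ = (w₁ : G) * ((z₁ : G) * (w₂ : G)) * z₂ := by rw [hc]
            _ = (w₁ : G) * z₁ * ((w₂ : G) * z₂) := by group }
    have hfinj : Function.Injective f := by
      rintro ⟨w₁, z₁⟩ ⟨w₂, z₂⟩ hfe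
      have h1 : (w₁ : G) * z₁ = (w₂ : G) * z₂ := hfe
      have h2 : (w₂ : G)⁻¹ * w₁ = (z₂ : G) * (z₁ : G)⁻¹ := by
        rw [inv_mul_eq_iff_eq_mul]
        calc (w₁ : G) = (w₂ : G) * z₂ * (z₁ : G)⁻¹ := by rw [← h1]; group
        _ = (w₂ : G) * ((z₂ : G) * (z₁ : G)⁻¹) := by group
      have hmem : (w₂ : G)⁻¹ * w₁ ∈ center G := by
        rw [h2]
        exact mul_mem z₂.2 (inv_mem z₁.2)
      have hmemW : (w₂ : G)⁻¹ * w₁ ∈ W := mul_mem (inv_mem w₂.2) w₁.2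
      have h3 : (w₂ : G)⁻¹ * w₁ = 1 := hWZ _ hmem hmemW
      have hw : (w₁ : G) = w₂ := by
        rw [inv_mul_eq_one] at h3
        exact h3.symm
      have hz : (z₁ : G) = z₂ := by
        have := h1
        rw [hw] at this
        exact mul_left_cancel this
      exact Prod.ext (Subtype.ext hw) (Subtype.ext hz)
    have hfsurj : Function.Surjective f := by
      intro g
      obtain ⟨z, hz, w, hw, rfl⟩ := hWdec g
      refine ⟨(⟨w, hw⟩, ⟨z, hz⟩), ?_⟩
      show w * z = z * w
      exact (Subgroup.mem_center_iff.mp hz w)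
    have hcenterW : center W = ⊥ := by
      rw [eq_bot_iff]
      intro x hx
      rw [Subgroup.mem_bot]
      have hxc : (x : G) ∈ center G := by
        rw [Subgroup.mem_center_iff]
        intro g
        obtain ⟨z, hz, w, hw, rfl⟩ := hWdec g
        have h1 : w * (x : G) = (x : G) * w := by
          have := Subgroup.mem_center_iff.mp hx ⟨w, hw⟩
          exact congrArg Subtype.val this
        have h2 : z * (x : G) = (x : G) * z :=
          (Subgroup.mem_center_iff.mp hz (x : G)).symm
        calc z * w * (x : G) = z * ((x : G) * w) := by rw [mul_assoc, h1]
          _ = (x : G) * (z * w) := by rw [← mul_assoc, h2, mul_assoc]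
      have := hWZ (x : G) hxc x.2
      exact Subtype.ext this
    exact ⟨W, inferInstance, ↥(center G),
      { (inferInstance : Group ↥(center G)) with
        mul_comm := fun a b => Subtype.ext (Subgroup.mem_center_iff.mp b.2 a) }, inferInstance,
      InApAqAr.of_subgroup W hG, hcenterW,
      ⟨(MulEquiv.ofBijective f ⟨hfinj, hfsurj⟩).symm⟩⟩
  · rintro X X₁ Z Z₁ _ _ _ _ _ _ _ _ hXc hX₁c ⟨e⟩ ⟨e₁⟩
    constructor
    · exact ⟨((fstEquivQuotCenterOfEquiv hXc e).symm.trans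
        (fstEquivQuotCenterOfEquiv hX₁c e₁))⟩
    · exact ⟨((sndEquivCenterOfEquiv hXc e).trans
        (sndEquivCenterOfEquiv hX₁c e₁).symm)⟩
end

section
/- Let p, q and r be distinct primes and let G be a finite group lying in 𝔄_p𝔄_q𝔄_r with trivial center. Let P be a normal Sylow p-subgroup of G, and let Q be a Sylow q-subgroup of G that is normalized by some Sylow r-subgroup R of G. Let P₁ = { x ∈ P : h·x·h⁻¹ = x for all h ∈ Q } (the centralizer of Q in P). Then: P₁ is a normal subgroup of G; there exists a subgroup P₂ of P that is normalized by both Q and R such that P₁ ∩ P₂ is trivial and P₁ and P₂ generate P; no nontrivial element of P₁ is centralized by all of R; and no nontrivial element of P₂ is centralized by all of Q. -/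
/-- Let `G ∈ 𝔄_p𝔄_q𝔄_r` be finite with trivial centre, `P` a normal Sylow
`p`-subgroup, `Q` a Sylow `q`-subgroup normalised by a Sylow `r`-subgroup `R`.  Setting
`P₁ = {x ∈ P : hxh⁻¹ = x ∀ h ∈ Q}`, the subgroup `P₁` is normal in `G`; no nontrivial
element of `P₁` is centralised by all of `R`; and there is a subgroup `P₂ ≤ P`, normalised
by both `Q` and `R`, with `P₁ ⊓ P₂ = 1` and `⟨P₁, P₂⟩ = P`, such that no nontrivial element
of `P₂` is centralised by all of `Q`. -/
theorem fixed_point_decomposition_in_ApAqAr (p q r : ℕ) (hp : p.Prime) (hq : q.Prime)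
    (hr : r.Prime) (hpq : p ≠ q) (hpr : p ≠ r) (hqr : q ≠ r)
    (G : Type*) [Group G] [Finite G] (hG : InApAqAr p q r G)
    (hZ : Subgroup.center G = ⊥)
    (P Q R : Subgroup G) (hP : IsSylow' p P) (hPn : P.Normal)
    (hQ : IsSylow' q Q) (hR : IsSylow' r R) (hRQ : R ≤ Subgroup.normalizer (Q : Set G)) :
    ∃ P₁ : Subgroup G,
      (P₁ : Set G) = {x | x ∈ P ∧ ∀ h ∈ Q, h * x * h⁻¹ = x} ∧
      P₁.Normal ∧
      (∀ x ∈ P₁, (∀ h ∈ R, h * x * h⁻¹ = x) → x = 1) ∧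
      ∃ P₂ : Subgroup G, P₂ ≤ P ∧ Q ≤ Subgroup.normalizer (P₂ : Set G) ∧ R ≤ Subgroup.normalizer (P₂ : Set G) ∧
        P₁ ⊓ P₂ = ⊥ ∧ P₁ ⊔ P₂ = P ∧
        ∀ x ∈ P₂, (∀ h ∈ Q, h * x * h⁻¹ = x) → x = 1 := by
  classical
  obtain ⟨N, hNnorm, ⟨hNab, hNexp⟩, K, hKnorm, ⟨hKab, hKexp⟩, hKcomm, hKpow⟩ := hG
  haveI := hNnorm
  letI : Fintype G := Fintype.ofFinite G
  -- basic facts about N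
  have hNmem_pow : ∀ x ∈ N, x ^ p = 1 := fun x hx => by
    simpa using congrArg Subtype.val (hNexp ⟨x, hx⟩)
  -- every (r*q)-th power lies in N
  have hquot : ∀ g : G, g ^ (r * q) ∈ N := by
    intro g
    have h1 : ((g : G ⧸ N)) ^ r ∈ K := hKpow _
    have h2 : (((g : G ⧸ N)) ^ r) ^ q = 1 := by
      simpa using congrArg Subtype.val (hKexp ⟨_, h1⟩)
    have h3 : ((g ^ (r * q) : G) : G ⧸ N) = 1 := by
      rw [← pow_mul] at h2
      rw [← h2]
      rfl
    exact (QuotientGroup.eq_one_iff _).mp h3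
  -- N ≤ P
  have hNP : N ≤ P := by
    intro x hx
    have hx1 : ((x : G ⧸ P)) ^ p = 1 := by
      rw [← QuotientGroup.mk_pow, hNmem_pow x hx, QuotientGroup.mk_one]
    have hd1 : orderOf ((x : G ⧸ P)) ∣ p := orderOf_dvd_of_pow_eq_one hx1
    have hd2 : orderOf ((x : G ⧸ P)) ∣ P.index := orderOf_dvd_natCard _
    have h1 : orderOf ((x : G ⧸ P)) = 1 :=
      Nat.dvd_one.mp (hP.2 ▸ Nat.dvd_gcd hd2 hd1)
    exact (QuotientGroup.eq_one_iff x).mp (orderOf_eq_one_iff.mp h1)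
  -- P ≤ N
  have hPN : P ≤ N := by
    intro x hx
    obtain ⟨k, hk⟩ := hP.1 ⟨x, hx⟩
    have hk' : x ^ (p ^ k) = 1 := by simpa using congrArg Subtype.val hk
    have h1 : ((x : G ⧸ N)) ^ (p ^ k) = 1 := by
      rw [← QuotientGroup.mk_pow, hk', QuotientGroup.mk_one]
    have h2 : ((x : G ⧸ N)) ^ (r * q) = 1 := by
      rw [← QuotientGroup.mk_pow]
      exact (QuotientGroup.eq_one_iff _).mpr (hquot x)
    have hcop : Nat.Coprime (p ^ k) (r * q) :=
      Nat.Coprime.pow_left k (Nat.Coprime.mul_right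
        ((Nat.coprime_primes hp hr).mpr hpr) ((Nat.coprime_primes hp hq).mpr hpq))
    have h3 : orderOf ((x : G ⧸ N)) = 1 :=
      Nat.dvd_one.mp (hcop ▸ Nat.dvd_gcd (orderOf_dvd_of_pow_eq_one h1) (orderOf_dvd_of_pow_eq_one h2))
    exact (QuotientGroup.eq_one_iff x).mp (orderOf_eq_one_iff.mp h3)
  have hPab : ∀ x y : G, x ∈ P → y ∈ P → x * y = y * x := fun x y hx hy =>
    congrArg Subtype.val (hNab ⟨x, hPN hx⟩ ⟨y, hPN hy⟩)
  have hPexp : ∀ x ∈ P, x ^ p = 1 := fun x hx => hNmem_pow x (hPN hx)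
  have hGexp : ∀ g : G, g ^ (r * q * p) = 1 := fun g => by
    rw [pow_mul]; exact hNmem_pow _ (hquot g)
  -- P ⊔ Q ⊔ R = ⊤
  have hPle : P ≤ P ⊔ Q ⊔ R := le_sup_of_le_left le_sup_left
  have hQle : Q ≤ P ⊔ Q ⊔ R := le_sup_of_le_left le_sup_right
  have hRle : R ≤ P ⊔ Q ⊔ R := le_sup_right
  have htop : P ⊔ Q ⊔ R = ⊤ := by
    rw [← Subgroup.index_eq_one]
    by_contra hne
    obtain ⟨s, hs, hsdvd⟩ := Nat.exists_prime_and_dvd hne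
    have hsG : s ∣ Fintype.card G := hsdvd.trans
      (by simpa [Nat.card_eq_fintype_card] using Subgroup.index_dvd_card (G := G) (P ⊔ Q ⊔ R))
    haveI : Fact s.Prime := ⟨hs⟩
    obtain ⟨g, hg⟩ := exists_prime_orderOf_dvd_card s hsG
    have hsdvd2 : s ∣ r * q * p := hg ▸ orderOf_dvd_of_pow_eq_one (hGexp g)
    have key : ∀ t : ℕ, ∀ H : Subgroup G, H ≤ P ⊔ Q ⊔ R → Nat.Coprime H.index t →
        t.Prime → s = t → False := by
      intro t H hH hcop ht hst
      subst hst
      have hcop2 := Nat.Coprime.coprime_dvd_left (Subgroup.index_dvd_of_le hH) hcop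
      have : s = 1 := (hcop2.symm).eq_one_of_dvd hsdvd
      exact hs.one_lt.ne' this
    rcases (Nat.Prime.dvd_mul hs).mp hsdvd2 with h | h
    · rcases (Nat.Prime.dvd_mul hs).mp h with h' | h'
      · exact key r R hRle hR.2 hr ((Nat.prime_dvd_prime_iff_eq hs hr).mp h')
      · exact key q Q hQle hQ.2 hq ((Nat.prime_dvd_prime_iff_eq hs hq).mp h')
    · exact key p P hPle hP.2 hp ((Nat.prime_dvd_prime_iff_eq hs hp).mp h)
  -- define P₁
  set P₁ : Subgroup G := P ⊓ Subgroup.centralizer (Q : Set G) with hP₁def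
  have hP₁mem : ∀ x : G, x ∈ P₁ ↔ x ∈ P ∧ ∀ h ∈ Q, h * x * h⁻¹ = x := by
    intro x
    rw [hP₁def, Subgroup.mem_inf, Subgroup.mem_centralizer_iff]
    constructor
    · rintro ⟨h1, h2⟩
      exact ⟨h1, fun h hh => by rw [h2 h hh]; group⟩
    · rintro ⟨h1, h2⟩
      refine ⟨h1, fun h hh => ?_⟩
      have := h2 h hh
      rw [mul_inv_eq_iff_eq_mul] at this
      exact this
  -- normalizer helper
  have mem_norm : ∀ (H : Subgroup G) (k : G), (∀ x ∈ H, k * x * k⁻¹ ∈ H) →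
      (∀ x ∈ H, k⁻¹ * x * k ∈ H) → k ∈ Subgroup.normalizer (H : Set G) := by
    intro H k h1 h2
    rw [Subgroup.mem_normalizer_iff]
    intro x
    refine ⟨fun hx => h1 x hx, fun hx => ?_⟩
    have := h2 _ hx
    have e : k⁻¹ * (k * x * k⁻¹) * k = x := by group
    rwa [e] at this
  have hP₁conj : ∀ k : G, (k ∈ P ∨ k ∈ Subgroup.normalizer (Q : Set G)) → ∀ x ∈ P₁, k * x * k⁻¹ ∈ P₁ := by
    intro k hk x hx
    rw [hP₁mem] at hx ⊢
    obtain ⟨hxP, hxc⟩ := hx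
    rcases hk with hkP | hkN
    · have e : k * x * k⁻¹ = x := by rw [hPab k x hkP hxP]; group
      rw [e]; exact ⟨hxP, hxc⟩
    · refine ⟨hPn.conj_mem x hxP k, fun h hh => ?_⟩
      have h1 : k⁻¹ * h * k ∈ Q := by
        have := (Subgroup.mem_normalizer_iff.mp (inv_mem hkN) h).mp hh
        simpa using this
      have h2 := hxc _ h1
      calc h * (k * x * k⁻¹) * h⁻¹
          = k * ((k⁻¹ * h * k) * x * (k⁻¹ * h * k)⁻¹) * k⁻¹ := by group
        _ = k * x * k⁻¹ := by rw [h2]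
  have hP₁norm : P₁.Normal := by
    rw [← Subgroup.normalizer_eq_top_iff, eq_top_iff, ← htop]
    refine sup_le (sup_le ?_ ?_) ?_ <;> intro k hk
    · exact mem_norm P₁ k (hP₁conj k (Or.inl hk))
        (by simpa using hP₁conj k⁻¹ (Or.inl (inv_mem hk)))
    · exact mem_norm P₁ k (hP₁conj k (Or.inr (Subgroup.le_normalizer hk)))
        (by simpa using hP₁conj k⁻¹ (Or.inr (Subgroup.le_normalizer (inv_mem hk))))
    · exact mem_norm P₁ k (hP₁conj k (Or.inr (hRQ hk)))
        (by simpa using hP₁conj k⁻¹ (Or.inr (hRQ (inv_mem hk))))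
  -- trivial-centre argument
  have hcentral : ∀ x : G, x ∈ P → (∀ h ∈ Q, h * x * h⁻¹ = x) →
      (∀ h ∈ R, h * x * h⁻¹ = x) → x = 1 := by
    intro x hxP hxQ hxR
    have hC : P ⊔ Q ⊔ R ≤ Subgroup.centralizer {x} := by
      refine sup_le (sup_le ?_ ?_) ?_ <;> intro k hk <;>
        rw [Subgroup.mem_centralizer_iff] <;> intro m hm <;>
        rw [Set.mem_singleton_iff] at hm <;> rw [hm]
      · exact hPab x k hxP hk
      · have := hxQ k hk; rw [mul_inv_eq_iff_eq_mul] at this; exact this.symm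
      · have := hxR k hk; rw [mul_inv_eq_iff_eq_mul] at this; exact this.symm
    have hxZ : x ∈ Subgroup.center G := by
      rw [Subgroup.mem_center_iff]
      intro g
      have hg : g ∈ Subgroup.centralizer {x} := hC (htop ▸ Subgroup.mem_top g)
      exact (Subgroup.mem_centralizer_iff.mp hg x rfl).symm
    rw [hZ] at hxZ
    exact Subgroup.mem_bot.mp hxZ
  -- commutative group structure on P, averaging map
  letI : Fintype ↥Q := Fintype.ofFinite _
  letI instCP : CommGroup ↥P :=
    { (inferInstance : Group ↥P) with
      mul_comm := fun a b => Subtype.ext (hPab ↑a ↑b a.2 b.2) }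
  set F : ↥P → ↥Q → ↥P := fun x h => ⟨(h : G) * ↑x * (h : G)⁻¹, hPn.conj_mem ↑x x.2 ↑h⟩
    with hF
  set Tm : ↥P → ↥P := fun x => ∏ h : ↥Q, F x h with hTm
  set n : ℕ := Fintype.card ↥Q with hn
  have Tm_map_mul : ∀ x y : ↥P, Tm (x * y) = Tm x * Tm y := by
    intro x y
    rw [hTm]
    simp only
    rw [← Finset.prod_mul_distrib]
    refine Finset.prod_congr rfl fun h _ => ?_
    apply Subtype.ext
    show (h : G) * (↑x * ↑y) * (↑h)⁻¹ = ((h : G) * ↑x * (↑h)⁻¹) * ((h : G) * ↑y * (↑h)⁻¹)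
    group
  have Tm_map_one : Tm 1 = 1 := by
    rw [hTm]
    simp only
    refine Finset.prod_eq_one fun h _ => ?_
    apply Subtype.ext
    show (h : G) * ↑(1 : ↥P) * (↑h)⁻¹ = ↑(1 : ↥P)
    simp
  set TmHom : ↥P →* ↥P := { toFun := Tm, map_one' := Tm_map_one, map_mul' := Tm_map_mul }
    with hTmHom
  -- conjugation by elements of Q fixes Tm x
  have Tm_cent : ∀ (x : ↥P) (k : G), k ∈ Q → k * ↑(Tm x) * k⁻¹ = (↑(Tm x) : G) := by
    intro x k hk
    set φ : ↥P →* ↥P :=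
      { toFun := fun y => ⟨k * ↑y * k⁻¹, hPn.conj_mem ↑y y.2 k⟩,
        map_one' := by apply Subtype.ext; show k * ↑(1 : ↥P) * k⁻¹ = ↑(1 : ↥P); simp,
        map_mul' := fun a b => by
          apply Subtype.ext
          show k * (↑a * ↑b) * k⁻¹ = (k * ↑a * k⁻¹) * (k * ↑b * k⁻¹)
          group } with hφ
    have h1 : φ (Tm x) = ∏ h : ↥Q, φ (F x h) := map_prod φ _ _
    have h2 : ∀ h : ↥Q, φ (F x h) = F x (⟨k, hk⟩ * h) := by
      intro h
      apply Subtype.ext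
      show k * ((h : G) * ↑x * (↑h)⁻¹) * k⁻¹ = (k * ↑h) * ↑x * (k * ↑h)⁻¹
      group
    have h3 : φ (Tm x) = Tm x := by
      rw [h1, Finset.prod_congr rfl fun h _ => h2 h]
      rw [hTm]
      simp only
      exact Equiv.prod_comp (Equiv.mulLeft (⟨k, hk⟩ : ↥Q)) (F x)
    exact congrArg Subtype.val h3
  -- Tm is invariant under precomposition with conjugation
  have Tm_conjx : ∀ (x : ↥P) (h₀ : ↥Q), Tm (F x h₀) = Tm x := by
    intro x h₀
    have h2 : ∀ h : ↥Q, F (F x h₀) h = F x (h * h₀) := by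
      intro h
      apply Subtype.ext
      show (h : G) * ((h₀ : G) * ↑x * (↑h₀)⁻¹) * (↑h)⁻¹ = ((h : G) * ↑h₀) * ↑x * ((h : G) * ↑h₀)⁻¹
      group
    rw [hTm]
    simp only
    rw [Finset.prod_congr rfl fun h _ => h2 h]
    exact Equiv.prod_comp (Equiv.mulRight h₀) (F x)
  have Tm_fixed : ∀ x : ↥P, (∀ h ∈ Q, h * ↑x * h⁻¹ = (↑x : G)) → Tm x = x ^ n := by
    intro x hx
    rw [hTm]
    simp only
    rw [Finset.prod_congr rfl fun (h : ↥Q) _ => Subtype.ext (hx ↑h h.2), Finset.prod_const,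
      Finset.card_univ, hn]
  have Tm_gen : ∀ (x : ↥P) (h₀ : ↥Q), Tm (x⁻¹ * F x h₀) = 1 := by
    intro x h₀
    have : Tm x⁻¹ = (Tm x)⁻¹ := by
      have := Tm_map_mul x⁻¹ x
      rw [inv_mul_cancel] at this
      rw [Tm_map_one] at this
      exact eq_inv_of_mul_eq_one_left this.symm
    rw [Tm_map_mul, this, Tm_conjx, inv_mul_cancel]
  -- the complement P₂
  set Sgen : Set G := {g | ∃ x ∈ P, ∃ h ∈ Q, g = x⁻¹ * (h * x * h⁻¹)} with hSgen
  set P₂ : Subgroup G := Subgroup.closure Sgen with hP₂def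
  have hSP : Sgen ⊆ (P : Set G) := by
    rintro g ⟨x, hx, h, hh, rfl⟩
    exact P.mul_mem (P.inv_mem hx) (hPn.conj_mem x hx h)
  have hP₂P : P₂ ≤ P := (Subgroup.closure_le P).mpr hSP
  -- Tm vanishes on P₂
  have hTmP₂ : ∀ g : G, g ∈ P₂ → ∀ hg : g ∈ P, Tm ⟨g, hg⟩ = 1 := by
    have hle : P₂ ≤ Subgroup.map P.subtype TmHom.ker := by
      rw [hP₂def, Subgroup.closure_le]
      rintro g ⟨x, hx, h, hh, rfl⟩
      refine ⟨(⟨x, hx⟩ : ↥P)⁻¹ * F ⟨x, hx⟩ ⟨h, hh⟩, ?_, rfl⟩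
      have : (⟨x, hx⟩ : ↥P)⁻¹ * F ⟨x, hx⟩ ⟨h, hh⟩ ∈ TmHom.ker := by
        rw [MonoidHom.mem_ker]; exact Tm_gen _ _
      exact this
    intro g hg hgP
    obtain ⟨y, hy, hyg⟩ := hle hg
    have hyg' : y = ⟨g, hgP⟩ := Subtype.ext hyg
    rw [← hyg']
    exact MonoidHom.mem_ker.mp hy
  -- decomposition Tm x = x ^ n * c with c ∈ P₂
  have hdecomp : ∀ x : ↥P, ∃ c : ↥P, (↑c : G) ∈ P₂ ∧ Tm x = x ^ n * c := by
    intro x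
    refine ⟨∏ h : ↥Q, (x⁻¹ * F x h), ?_, ?_⟩
    · have : (∏ h : ↥Q, (x⁻¹ * F x h)) ∈ P₂.comap P.subtype := by
        refine Subgroup.prod_mem _ fun h _ => ?_
        rw [Subgroup.mem_comap]
        refine Subgroup.subset_closure ⟨↑x, x.2, ↑h, h.2, rfl⟩
      exact this
    · calc Tm x = ∏ h : ↥Q, (x * (x⁻¹ * F x h)) := by
            rw [hTm]; simp only
            exact Finset.prod_congr rfl fun h _ => by group
        _ = (∏ _h : ↥Q, x) * ∏ h : ↥Q, (x⁻¹ * F x h) := Finset.prod_mul_distrib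
        _ = x ^ n * ∏ h : ↥Q, (x⁻¹ * F x h) := by
            rw [Finset.prod_const, Finset.card_univ, hn]
  -- coprimality of n and p
  have hnp : Nat.Coprime n p := by
    haveI : Fact q.Prime := ⟨hq⟩
    obtain ⟨k, hk⟩ := IsPGroup.exists_card_eq hQ.1
    have : n = q ^ k := by rw [hn, ← Nat.card_eq_fintype_card, hk]
    rw [this]
    exact Nat.Coprime.pow_left k ((Nat.coprime_primes hq hp).mpr (Ne.symm hpq))
  obtain ⟨e, -, he⟩ := Nat.exists_mul_mod_eq_one_of_coprime hnp hp.one_lt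
  have hpowne : ∀ x : ↥P, x ^ (n * e) = x := by
    intro x
    have hxp : x ^ p = 1 := by
      apply Subtype.ext
      show (↑x : G) ^ p = 1
      exact hPexp ↑x x.2
    have hne : n * e = p * (n * e / p) + 1 := by
      conv_lhs => rw [← Nat.div_add_mod (n * e) p]
      rw [he]
    rw [hne, pow_add, pow_mul, hxp, one_pow, one_mul, pow_one]
  -- P₁ ⊔ P₂ = P
  have hsup : P₁ ⊔ P₂ = P := by
    refine le_antisymm (sup_le (hP₁def ▸ inf_le_left) hP₂P) ?_
    intro g hg
    obtain ⟨c, hcP₂, hc⟩ := hdecomp ⟨g, hg⟩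
    set x : ↥P := ⟨g, hg⟩ with hxdef
    have hxn : x ^ n = Tm x * c⁻¹ := by rw [hc]; group
    have h1 : x = (Tm x) ^ e * (c⁻¹) ^ e := by
      calc x = x ^ (n * e) := (hpowne x).symm
        _ = (x ^ n) ^ e := by rw [pow_mul]
        _ = (Tm x * c⁻¹) ^ e := by rw [hxn]
        _ = (Tm x) ^ e * (c⁻¹) ^ e := mul_pow _ _ _
    have hA : (↑((Tm x) ^ e) : G) ∈ P₁ := by
      have hTmP₁ : (↑(Tm x) : G) ∈ P₁ :=
        (hP₁mem _).mpr ⟨(Tm x).2, fun h hh => Tm_cent x h hh⟩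
      have := P₁.pow_mem hTmP₁ e
      simpa using this
    have hB : (↑((c⁻¹) ^ e) : G) ∈ P₂ := by
      have := P₂.pow_mem (P₂.inv_mem hcP₂) e
      simpa using this
    have h2 : g = ↑((Tm x) ^ e) * ↑((c⁻¹) ^ e) := by
      have := congrArg Subtype.val h1
      simpa using this
    rw [h2]
    exact Subgroup.mul_mem _ (Subgroup.mem_sup_left hA) (Subgroup.mem_sup_right hB)
  -- P₁ ⊓ P₂ = ⊥
  have hinf : P₁ ⊓ P₂ = ⊥ := by
    rw [eq_bot_iff]
    intro g hg
    obtain ⟨hg1, hg2⟩ := Subgroup.mem_inf.mp hg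
    obtain ⟨hgP, hgc⟩ := (hP₁mem g).mp hg1
    have h1 : Tm ⟨g, hgP⟩ = (⟨g, hgP⟩ : ↥P) ^ n := Tm_fixed _ hgc
    have h2 : Tm ⟨g, hgP⟩ = 1 := hTmP₂ g hg2 hgP
    have h3 : (⟨g, hgP⟩ : ↥P) ^ n = 1 := h1 ▸ h2
    have h4 : (⟨g, hgP⟩ : ↥P) ^ p = 1 := by
      apply Subtype.ext
      show g ^ p = 1
      exact hPexp g hgP
    have h5 : orderOf (⟨g, hgP⟩ : ↥P) = 1 :=
      Nat.dvd_one.mp (hnp ▸ Nat.dvd_gcd (orderOf_dvd_of_pow_eq_one h3)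
        (orderOf_dvd_of_pow_eq_one h4))
    have h6 : (⟨g, hgP⟩ : ↥P) = 1 := orderOf_eq_one_iff.mp h5
    have : g = 1 := by simpa using congrArg Subtype.val h6
    simpa [Subgroup.mem_bot] using this
  -- normalizers of P₂
  have hconjS : ∀ k : G, k ∈ Subgroup.normalizer (Q : Set G) → ∀ g ∈ Sgen, k * g * k⁻¹ ∈ Sgen := by
    rintro k hk g ⟨x, hx, h, hh, rfl⟩
    refine ⟨k * x * k⁻¹, hPn.conj_mem x hx k, k * h * k⁻¹,
      (Subgroup.mem_normalizer_iff.mp hk h).mp hh, ?_⟩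
    group
  have hconjP₂ : ∀ k : G, k ∈ Subgroup.normalizer (Q : Set G) → ∀ g ∈ P₂, k * g * k⁻¹ ∈ P₂ := by
    intro k hk g hg
    rw [hP₂def] at hg
    refine Subgroup.closure_induction
      (fun y hy => Subgroup.subset_closure (hconjS k hk y hy)) ?_ ?_ ?_ hg
    · simpa using P₂.one_mem
    · intro a b _ _ ha hb
      have e : k * (a * b) * k⁻¹ = (k * a * k⁻¹) * (k * b * k⁻¹) := by group
      rw [e]; exact mul_mem ha hb
    · intro a _ ha
      have e : k * a⁻¹ * k⁻¹ = (k * a * k⁻¹)⁻¹ := by group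
      rw [e]; exact inv_mem ha
  have hQnorm : Q ≤ Subgroup.normalizer (P₂ : Set G) := fun k hk =>
    mem_norm P₂ k (hconjP₂ k (Subgroup.le_normalizer hk))
      (fun x hx => by simpa using hconjP₂ k⁻¹ (inv_mem (Subgroup.le_normalizer hk)) x hx)
  have hRnorm : R ≤ Subgroup.normalizer (P₂ : Set G) := fun k hk =>
    mem_norm P₂ k (hconjP₂ k (hRQ hk))
      (fun x hx => by simpa using hconjP₂ k⁻¹ (inv_mem (hRQ hk)) x hx)
  -- assembling
  refine ⟨P₁, ?_, hP₁norm, ?_, P₂, hP₂P, hQnorm, hRnorm, hinf, hsup, ?_⟩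
  · ext x
    simpa using hP₁mem x
  · intro x hx hRcent
    obtain ⟨hxP, hxQ⟩ := (hP₁mem x).mp hx
    exact hcentral x hxP hxQ hRcent
  · intro x hx hc
    have hx1 : x ∈ P₁ := (hP₁mem x).mpr ⟨hP₂P hx, hc⟩
    have : x ∈ P₁ ⊓ P₂ := Subgroup.mem_inf.mpr ⟨hx1, hx⟩
    rw [hinf] at this
    exact Subgroup.mem_bot.mp this
end

section
/- Let n be a squarefree natural number (i.e., n is not divisible by the square of any prime) and let G be a group of order n. Then G has a cyclic normal subgroup N such that the quotient G/N is cyclic. -/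
open Subgroup
open scoped commutatorElement

universe u

/-- A group of squarefree order which is commutative is cyclic. -/
lemma Meta.isCyclic_of_squarefree_of_comm {H : Type u} [Group H]
    (hH : Squarefree (Nat.card H)) (comm : ∀ a b : H, a * b = b * a) : IsCyclic H := by
  have hfin : Finite H := Nat.finite_of_card_ne_zero hH.ne_zero
  letI : CommGroup H := { (inferInstance : Group H) with mul_comm := comm }
  refine IsCyclic.of_exponent_eq_card (Nat.dvd_antisymm Group.exponent_dvd_nat_card ?_)
  have h1 : ∀ p ∈ (Nat.card H).primeFactors, p ∣ Monoid.exponent H := by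
    intro p hp
    have hpp : p.Prime := Nat.prime_of_mem_primeFactors hp
    have := Fact.mk hpp
    obtain ⟨g, hg⟩ := exists_prime_orderOf_dvd_card' p (Nat.dvd_of_mem_primeFactors hp)
    exact hg ▸ Monoid.order_dvd_exponent g
  calc Nat.card H = ∏ p ∈ (Nat.card H).primeFactors, p :=
        (Nat.prod_primeFactors_of_squarefree hH).symm
    _ ∣ Monoid.exponent H := Finset.prod_primes_dvd _
        (fun p hp => (Nat.prime_of_mem_primeFactors hp).prime) h1

/-- Automorphisms of a cyclic group commute. -/
lemma Meta.mulAut_comm {H : Type u} [Group H] [IsCyclic H] (σ τ : MulAut H) :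
    σ * τ = τ * σ := by
  obtain ⟨g, hg⟩ := IsCyclic.exists_generator (α := H)
  obtain ⟨a, ha⟩ := Subgroup.mem_zpowers_iff.mp (hg (σ g))
  obtain ⟨b, hb⟩ := Subgroup.mem_zpowers_iff.mp (hg (τ g))
  ext x
  obtain ⟨k, hk⟩ := Subgroup.mem_zpowers_iff.mp (hg x)
  subst hk
  show σ (τ (g ^ k)) = τ (σ (g ^ k))
  rw [map_zpow, ← hb, ← zpow_mul, map_zpow, ← ha, ← zpow_mul,
      map_zpow, ← ha, ← zpow_mul, map_zpow, ← hb, ← zpow_mul]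
  ring_nf

lemma Meta.isSolvable_of_squarefree :
    ∀ n : ℕ, ∀ (G : Type u) (_ : Group G), Squarefree n → Nat.card G = n → Group.IsSolvable G := by
  intro n
  induction n using Nat.strong_induction_on with
  | _ n ih =>
    intro G _ hsq hcard
    have hfin : Finite G := Nat.finite_of_card_ne_zero (hcard ▸ hsq.ne_zero)
    rcases eq_or_ne n 1 with rfl | h1
    · have : Subsingleton G := (Nat.card_eq_one_iff_unique.mp hcard).1
      infer_instance
    have hpp : n.minFac.Prime := Nat.minFac_prime h1
    set p := n.minFac with hpdef
    have := Fact.mk hpp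
    obtain ⟨P⟩ : Nonempty (Sylow p G) := inferInstance
    have hn0 : n ≠ 0 := hsq.ne_zero
    have hPcard : Nat.card P = p := by
      rw [P.card_eq_multiplicity, hcard]
      have h1' : n.factorization p ≤ 1 := hsq.natFactorization_le_one p
      have h2' : 1 ≤ n.factorization p :=
        (Nat.Prime.factorization_pos_of_dvd hpp hn0 n.minFac_dvd)
      rw [le_antisymm h1' h2', pow_one]
    have hcyc : IsCyclic P := isCyclic_of_prime_card hPcard
    -- coprimality of n with p - 1
    have hcop : Nat.Coprime n (p - 1) := by
      by_contra h
      obtain ⟨q, hq, hqd⟩ := Nat.exists_prime_and_dvd h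
      have hq1 : q ∣ n := hqd.trans (Nat.gcd_dvd_left _ _)
      have hq2 : q ∣ p - 1 := hqd.trans (Nat.gcd_dvd_right _ _)
      have hle1 : p ≤ q := Nat.minFac_le_of_dvd hq.two_le hq1
      have hle2 : q ≤ p - 1 := Nat.le_of_dvd (by have := hpp.two_le; omega) hq2
      have h2p := hpp.two_le
      omega
    -- Burnside's condition
    have hP : Subgroup.normalizer ((P : Subgroup G) : Set G) ≤ Subgroup.centralizer (P : Set G) := by
      intro x hx
      have hfinAut : Finite (MulAut P) :=
        Finite.of_injective (fun σ : MulAut P => (σ : P → P))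
          fun σ τ h => DFunLike.coe_injective h
      set φ := (P : Subgroup G).normalizerMonoidHom with hφ
      have hord1 : orderOf (φ ⟨x, hx⟩) ∣ p - 1 := by
        have := _root_.orderOf_dvd_natCard (φ ⟨x, hx⟩)
        rwa [IsCyclic.card_mulAut, hPcard, Nat.totient_prime hpp] at this
      have hord2 : orderOf (φ ⟨x, hx⟩) ∣ n := by
        refine (orderOf_map_dvd φ ⟨x, hx⟩).trans ((_root_.orderOf_dvd_natCard _).trans ?_)
        rw [← hcard]
        exact Subgroup.card_subgroup_dvd_card _
      have h1 : φ ⟨x, hx⟩ = 1 := by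
        rw [← orderOf_eq_one_iff]
        have hg := Nat.dvd_gcd hord2 hord1
        rw [Nat.Coprime.gcd_eq_one hcop] at hg
        exact Nat.dvd_one.mp hg
      rw [Subgroup.mem_centralizer_iff]
      intro h hh
      have := congrArg (fun σ : MulAut P => ((σ ⟨h, hh⟩ : P) : G)) h1
      simp only [MulAut.one_apply] at this
      have hxh : x * h * x⁻¹ = h := this
      calc h * x = (x * h * x⁻¹) * x := by rw [hxh]
        _ = x * h := by group
    -- Burnside's normal p-complement theorem
    have hK := MonoidHom.ker_transferSylow_isComplement' P hP
    set K := (MonoidHom.transferSylow P hP).ker with hKdef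
    have hKmul : Nat.card K * Nat.card P = Nat.card G := hK.card_mul
    have hKcard : Nat.card K * p = n := by rw [← hPcard, hKmul, hcard]
    have hKlt : Nat.card K < n := by
      have := hpp.two_le
      have h0 : 0 < Nat.card K := Nat.card_pos
      nlinarith
    have hsolvK : Group.IsSolvable K :=
      ih _ hKlt K inferInstance (hsq.squarefree_of_dvd ⟨p, hKcard.symm⟩) rfl
    have hQcard : Nat.card (G ⧸ K) = p := by
      have := Subgroup.card_eq_card_quotient_mul_card_subgroup K
      rw [hcard] at this
      have h0 : 0 < Nat.card K := Nat.card_pos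
      nlinarith [this, hKcard]
    have hQcyc : IsCyclic (G ⧸ K) := isCyclic_of_prime_card hQcard
    letI : CommGroup (G ⧸ K) := IsCyclic.commGroup
    have hsolvQ : Group.IsSolvable (G ⧸ K) := inferInstance
    exact solvable_of_ker_le_range K.subtype (QuotientGroup.mk' K)
      (by rw [QuotientGroup.ker_mk', Subgroup.range_subtype])

/-- Hölder.  A group of squarefree order is metacyclic: it has a cyclic
normal subgroup with cyclic quotient. -/
theorem metacyclic_of_squarefree_order (n : ℕ) (hn : Squarefree n)
    (G : Type*) [Group G] (hG : Nat.card G = n) :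
    ∃ N : Subgroup G, ∃ _ : N.Normal, IsCyclic N ∧ IsCyclic (G ⧸ N) := by
  subst hG
  have hfin : Finite G := Nat.finite_of_card_ne_zero hn.ne_zero
  have hsolv : Group.IsSolvable G := Meta.isSolvable_of_squarefree _ G ‹_› hn rfl
  have hfinSub : Finite (Subgroup G) :=
    Finite.of_injective (fun H : Subgroup G => (H : Set G)) SetLike.coe_injective
  set S : Set (Subgroup G) := {H | H.Normal ∧ ∀ a ∈ H, ∀ b ∈ H, a * b = b * a} with hS
  have hbot : (⊥ : Subgroup G) ∈ S := ⟨inferInstance, by simp⟩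
  obtain ⟨F, hFS, hFmax⟩ := Set.Finite.exists_maximalFor (fun H : Subgroup G => Nat.card H) S
    (Set.toFinite S) ⟨⊥, hbot⟩
  obtain ⟨hFnormal, hFcomm⟩ := hFS
  set C := Subgroup.centralizer (F : Set G) with hC
  have hFleC : F ≤ C := fun a ha => Subgroup.mem_centralizer_iff.mpr fun b hb => hFcomm b hb a ha
  have hCnormal : C.Normal := by
    constructor
    intro c hc g
    rw [hC, Subgroup.mem_centralizer_iff] at hc ⊢
    intro h hh
    have hh' : g⁻¹ * h * g ∈ F := by
      have := hFnormal.conj_mem h hh g⁻¹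
      simpa [mul_assoc] using this
    have h2 := hc _ hh'
    calc h * (g * c * g⁻¹) = g * ((g⁻¹ * h * g) * c) * g⁻¹ := by group
      _ = g * (c * (g⁻¹ * h * g)) * g⁻¹ := by rw [h2]
      _ = g * c * g⁻¹ * h := by group
  -- The key step: C = F.
  have hCF : C = F := by
    by_contra hne
    have hFC : F < C := lt_of_le_of_ne hFleC (Ne.symm hne)
    set π := QuotientGroup.mk' F with hπdef
    have hπ : Function.Surjective π := QuotientGroup.mk'_surjective F
    set Cb := C.map π with hCb
    have hCbN : Cb.Normal := hCnormal.map π hπ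
    have hCbne : Cb ≠ ⊥ := by
      obtain ⟨c, hcC, hcF⟩ := SetLike.exists_of_lt hFC
      intro hb
      have hmem : π c ∈ Cb := Subgroup.mem_map_of_mem π hcC
      rw [hb, Subgroup.mem_bot] at hmem
      exact hcF (by rwa [hπdef, QuotientGroup.mk'_apply, QuotientGroup.eq_one_iff] at hmem)
    set T : Set (Subgroup (G ⧸ F)) := {K | K.Normal ∧ K ≠ ⊥ ∧ K ≤ Cb} with hT
    have hfinSub2 : Finite (Subgroup (G ⧸ F)) :=
      Finite.of_injective (fun H : Subgroup (G ⧸ F) => (H : Set (G ⧸ F))) SetLike.coe_injective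
    obtain ⟨Mb, hMbT, hMbmin⟩ := Set.Finite.exists_minimalFor
      (fun K : Subgroup (G ⧸ F) => Nat.card K) T (Set.toFinite T) ⟨Cb, hCbN, hCbne, le_rfl⟩
    obtain ⟨hMbN, hMbne, hMbC⟩ := hMbT
    -- Mb is abelian
    have hMbcommbot : ⁅Mb, Mb⁆ = ⊥ := by
      by_contra hbot2
      have hle : ⁅Mb, Mb⁆ ≤ Mb := Subgroup.commutator_le.mpr fun g hg h hh => by
        simpa [commutatorElement_def] using
          Mb.mul_mem (Mb.mul_mem (Mb.mul_mem hg hh) (Mb.inv_mem hg)) (Mb.inv_mem hh)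
      have hmemT : ⁅Mb, Mb⁆ ∈ T := ⟨Subgroup.commutator_normal Mb Mb, hbot2, hle.trans hMbC⟩
      have hcardeq := hMbmin hmemT (Subgroup.card_le_of_le hle)
      have heq : ⁅Mb, Mb⁆ = Mb := Subgroup.eq_of_le_of_card_ge hle hcardeq
      have hmap : Subgroup.map Mb.subtype ⁅(⊤ : Subgroup Mb), ⊤⁆ = Subgroup.map Mb.subtype ⊤ := by
        rw [Subgroup.map_commutator, ← MonoidHom.range_eq_map, Subgroup.range_subtype, heq]
      have htop : ⁅(⊤ : Subgroup Mb), ⊤⁆ = ⊤ :=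
        Subgroup.map_injective Mb.subtype_injective hmap
      have hds : ∀ k, derivedSeries Mb k = ⊤ := by
        intro k; induction k with
        | zero => rfl
        | succ k ihk => rw [derivedSeries_succ, ihk, htop]
      obtain ⟨k, hk⟩ := (inferInstance : Group.IsSolvable Mb).solvable
      rw [hds k] at hk
      apply hMbne
      rw [eq_bot_iff]
      intro x hx
      have hx2 : (⟨x, hx⟩ : Mb) ∈ (⊥ : Subgroup Mb) := hk ▸ Subgroup.mem_top _
      rw [Subgroup.mem_bot] at hx2
      rw [Subgroup.mem_bot]
      exact congrArg Subtype.val hx2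
    have hMbcomm : ∀ a b : Mb, a * b = b * a := by
      intro a b
      have h1 : ⁅(a : G ⧸ F), (b : G ⧸ F)⁆ ∈ ⁅Mb, Mb⁆ :=
        Subgroup.commutator_mem_commutator a.2 b.2
      rw [hMbcommbot, Subgroup.mem_bot, commutatorElement_eq_one_iff_mul_comm] at h1
      exact Subtype.ext h1
    have hMbsq : Squarefree (Nat.card Mb) := hn.squarefree_of_dvd
      ((Subgroup.card_subgroup_dvd_card Mb).trans (Subgroup.card_quotient_dvd_card F))
    have hMbcyc : IsCyclic Mb := Meta.isCyclic_of_squarefree_of_comm hMbsq hMbcomm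
    -- pull Mb back to a subgroup M of G
    set M := Mb.comap π with hM
    have hMN : M.Normal := hMbN.comap π
    have hFM : F ≤ M := by
      intro x hx
      rw [hM, Subgroup.mem_comap]
      have hx1 : π x = 1 := by
        rw [hπdef, QuotientGroup.mk'_apply, QuotientGroup.eq_one_iff]; exact hx
      rw [hx1]; exact Mb.one_mem
    have hMC : M ≤ C := by
      intro x hx
      rw [hM, Subgroup.mem_comap] at hx
      obtain ⟨c, hcC, hceq⟩ := hMbC hx
      have hfmem : c⁻¹ * x ∈ F := by
        refine (QuotientGroup.eq).mp ?_
        simpa [hπdef] using hceq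
      have hxeq : x = c * (c⁻¹ * x) := by group
      rw [hxeq]
      exact C.mul_mem hcC (hFleC hfmem)
    have hMbar : ∀ x : M, π (x : G) ∈ Mb := fun x => Subgroup.mem_comap.mp x.2
    set f : M →* Mb := (π.comp M.subtype).codRestrict Mb (fun x => hMbar x) with hfdef
    have hfker : f.ker ≤ Subgroup.center M := by
      intro x hx
      rw [MonoidHom.mem_ker] at hx
      have hx1 : π (x : G) = 1 := congrArg Subtype.val hx
      have hxF : (x : G) ∈ F := by
        rwa [hπdef, QuotientGroup.mk'_apply, QuotientGroup.eq_one_iff] at hx1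
      rw [Subgroup.mem_center_iff]
      intro m
      exact Subtype.ext (Subgroup.mem_centralizer_iff.mp (hMC m.2) _ hxF).symm
    have hMcomm : ∀ a b : M, a * b = b * a := commutative_of_cyclic_center_quotient f hfker
    have hMS : M ∈ S := ⟨hMN, fun a ha b hb => congrArg Subtype.val (hMcomm ⟨a, ha⟩ ⟨b, hb⟩)⟩
    have hFMne : F ≠ M := by
      obtain ⟨y, hyMb, hyne⟩ := SetLike.exists_of_lt (show (⊥ : Subgroup (G ⧸ F)) < Mb from bot_lt_iff_ne_bot.mpr hMbne)
      obtain ⟨x', hx'⟩ := hπ y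
      intro hFMeq
      have hx'M : x' ∈ M := by rw [hM, Subgroup.mem_comap, hx']; exact hyMb
      rw [← hFMeq] at hx'M
      apply hyne
      rw [Subgroup.mem_bot, ← hx', hπdef, QuotientGroup.mk'_apply, QuotientGroup.eq_one_iff]
      exact hx'M
    have hcardle : Nat.card F ≤ Nat.card M := Subgroup.card_le_of_le hFM
    have hcardeq := hFmax hMS hcardle
    exact hFMne (Subgroup.eq_of_le_of_card_ge hFM hcardeq.ge)
  -- F is cyclic
  have hFsq : Squarefree (Nat.card F) := hn.squarefree_of_dvd (Subgroup.card_subgroup_dvd_card F)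
  have hFcyc : IsCyclic F := Meta.isCyclic_of_squarefree_of_comm hFsq
    (fun a b => Subtype.ext (hFcomm a a.2 b b.2))
  -- the conjugation action of G on F
  have hFtop : Subgroup.normalizer (F : Set G) = ⊤ := Subgroup.normalizer_eq_top_iff.mpr hFnormal
  set e : G ≃* Subgroup.normalizer (F : Set G) :=
    Subgroup.topEquiv.symm.trans (MulEquiv.subgroupCongr hFtop.symm) with he
  set φ : G →* MulAut F := F.normalizerMonoidHom.comp e.toMonoidHom with hφ
  have hcommF : ∀ g h : G, ⁅g, h⁆ ∈ F := by
    intro g h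
    have h1 : φ ⁅g, h⁆ = 1 := by
      rw [map_commutatorElement, commutatorElement_def, Meta.mulAut_comm (φ g) (φ h)]
      group
    have h2 : ⁅g, h⁆ ∈ C := by
      rw [hC, Subgroup.mem_centralizer_iff]
      intro y hy
      have h3 := congrArg (fun σ : MulAut F => ((σ ⟨y, hy⟩ : F) : G)) h1
      simp only [MulAut.one_apply] at h3
      have h4 : ⁅g, h⁆ * y * ⁅g, h⁆⁻¹ = y := h3
      calc y * ⁅g, h⁆ = (⁅g, h⁆ * y * ⁅g, h⁆⁻¹) * ⁅g, h⁆ := by rw [h4]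
        _ = ⁅g, h⁆ * y := by group
    rw [← hCF]
    exact h2
  have hQcomm : ∀ a b : G ⧸ F, a * b = b * a := by
    intro a b
    obtain ⟨g, rfl⟩ := QuotientGroup.mk'_surjective F a
    obtain ⟨h, rfl⟩ := QuotientGroup.mk'_surjective F b
    rw [← map_mul, ← map_mul, QuotientGroup.mk'_apply, QuotientGroup.mk'_apply]
    refine (QuotientGroup.eq).mpr ?_
    have hrw : (g * h)⁻¹ * (h * g) = ⁅h⁻¹, g⁻¹⁆ := by
      rw [commutatorElement_def]; group
    rw [hrw]
    exact hcommF h⁻¹ g⁻¹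
  have hQsq : Squarefree (Nat.card (G ⧸ F)) :=
    hn.squarefree_of_dvd (Subgroup.card_quotient_dvd_card F)
  exact ⟨F, hFnormal, hFcyc, Meta.isCyclic_of_squarefree_of_comm hQsq hQcomm⟩
end

section
/- Let p and q be distinct primes and let G be a finite group whose order is of the form p^α q^β and whose Sylow p-subgroups and Sylow q-subgroups are all abelian of exponent dividing p and q respectively. Then there exist finite groups X and Y with X lying in 𝔄_p𝔄_q and Y lying in 𝔄_q𝔄_p such that G is isomorphic to X × Y. -/
open Subgroup
open scoped commutatorElement

section Helpers

variable {G : Type*} [Group G]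

lemma conj_comm_el (g a b : G) :
    g⁻¹ * ⁅a, b⁆ * g = ⁅g⁻¹ * a * g, g⁻¹ * b * g⁆ := by
  rw [commutatorElement_def, commutatorElement_def]; group

lemma conj_eq_self {x y : G} (h : y * x = x * y) : x⁻¹ * y * x = y := by
  rw [mul_assoc, h, inv_mul_cancel_left]

lemma comm_el_mul_right {a z : G} (w : G) (h : Commute a z) : ⁅a, w * z⁆ = ⁅a, w⁆ := by
  have hz : z * a⁻¹ = a⁻¹ * z := h.inv_left.symm.eq
  rw [commutatorElement_def, commutatorElement_def]
  calc a * (w * z) * a⁻¹ * (w * z)⁻¹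
      = a * w * (z * a⁻¹ * z⁻¹) * w⁻¹ := by group
    _ = a * w * a⁻¹ * w⁻¹ := by rw [hz]; group

lemma comm_el_mul_left {z b : G} (a : G) (h : Commute z b) : ⁅a * z, b⁆ = ⁅a, b⁆ := by
  have hz : z * b = b * z := h.eq
  rw [commutatorElement_def, commutatorElement_def]
  calc a * z * b * (a * z)⁻¹ * b⁻¹
      = a * (z * b) * z⁻¹ * a⁻¹ * b⁻¹ := by group
    _ = a * b * a⁻¹ * b⁻¹ := by rw [hz]; group

end Helpers

section Ito

variable {G : Type*} [Group G] {P Q : Subgroup G}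

/-- Conjugating an elementary commutator by `a₁ ∈ P` then `b₁ ∈ Q`, or by `b₁` then `a₁`,
gives the same elementary commutator. -/
lemma ito_conj_gen
    (hPc : ∀ x ∈ P, ∀ y ∈ P, x * y = y * x)
    (hQc : ∀ x ∈ Q, ∀ y ∈ Q, x * y = y * x)
    (hdec : ∀ g : G, ∃ a ∈ P, ∃ b ∈ Q, g = a * b)
    (hdec' : ∀ g : G, ∃ b ∈ Q, ∃ a ∈ P, g = b * a)
    {a b a₁ b₁ : G} (ha : a ∈ P) (hb : b ∈ Q) (ha₁ : a₁ ∈ P) (hb₁ : b₁ ∈ Q) :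
    ∃ a' ∈ P, ∃ b' ∈ Q,
      b₁⁻¹ * (a₁⁻¹ * ⁅a, b⁆ * a₁) * b₁ = ⁅a', b'⁆ ∧
      a₁⁻¹ * (b₁⁻¹ * ⁅a, b⁆ * b₁) * a₁ = ⁅a', b'⁆ := by
  obtain ⟨b₂, hb₂, a₂, ha₂, hd1⟩ := hdec' (a₁⁻¹ * b * a₁)
  obtain ⟨a₃, ha₃, b₃, hb₃, hd2⟩ := hdec (b₁⁻¹ * a * b₁)
  have e1 : a₁⁻¹ * ⁅a, b⁆ * a₁ = ⁅a, b₂⁆ := by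
    rw [conj_comm_el, conj_eq_self (hPc a ha a₁ ha₁), hd1,
      comm_el_mul_right b₂ (hPc a ha a₂ ha₂)]
  have e2 : b₁⁻¹ * ⁅a, b₂⁆ * b₁ = ⁅a₃, b₂⁆ := by
    rw [conj_comm_el, conj_eq_self (hQc b₂ hb₂ b₁ hb₁), hd2,
      comm_el_mul_left a₃ (hQc b₃ hb₃ b₂ hb₂)]
  have e3 : b₁⁻¹ * ⁅a, b⁆ * b₁ = ⁅a₃, b⁆ := by
    rw [conj_comm_el, conj_eq_self (hQc b hb b₁ hb₁), hd2,
      comm_el_mul_left a₃ (hQc b₃ hb₃ b hb)]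
  have e4 : a₁⁻¹ * ⁅a₃, b⁆ * a₁ = ⁅a₃, b₂⁆ := by
    rw [conj_comm_el, conj_eq_self (hPc a₃ ha₃ a₁ ha₁), hd1,
      comm_el_mul_right b₂ (hPc a₃ ha₃ a₂ ha₂)]
  exact ⟨a₃, ha₃, b₂, hb₂, by rw [e1, e2], by rw [e3, e4]⟩

lemma ito_mem_commutator {x : G} (hx : x ∈ {x : G | ∃ p ∈ P, ∃ q ∈ Q, ⁅p, q⁆ = x}) :
    x ∈ ⁅P, Q⁆ := by
  obtain ⟨p, hp, q, hq, rfl⟩ := hx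
  exact commutator_mem_commutator hp hq

lemma ito_conj_mem
    (hPc : ∀ x ∈ P, ∀ y ∈ P, x * y = y * x)
    (hQc : ∀ x ∈ Q, ∀ y ∈ Q, x * y = y * x)
    (hdec : ∀ g : G, ∃ a ∈ P, ∃ b ∈ Q, g = a * b)
    (hdec' : ∀ g : G, ∃ b ∈ Q, ∃ a ∈ P, g = b * a) :
    ∀ g : G, ∀ k ∈ ⁅P, Q⁆, g⁻¹ * k * g ∈ ⁅P, Q⁆ := by
  intro g k hk
  obtain ⟨a₁, ha₁, b₁, hb₁, rfl⟩ := hdec g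
  rw [Subgroup.commutator_def] at hk
  induction hk using Subgroup.closure_induction with
  | mem x hx =>
      obtain ⟨a, ha, b, hb, rfl⟩ := hx
      obtain ⟨a', ha', b', hb', h1, _⟩ := ito_conj_gen hPc hQc hdec hdec' ha hb ha₁ hb₁
      have : (a₁ * b₁)⁻¹ * ⁅a, b⁆ * (a₁ * b₁) = ⁅a', b'⁆ := by
        rw [← h1]; group
      rw [this]
      exact commutator_mem_commutator ha' hb'
  | one =>
      have h1 : (a₁ * b₁)⁻¹ * 1 * (a₁ * b₁) = 1 := by group
      rw [h1]; exact one_mem _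
  | mul x y hx hy ihx ihy =>
      have h : (a₁ * b₁)⁻¹ * (x * y) * (a₁ * b₁) =
          ((a₁ * b₁)⁻¹ * x * (a₁ * b₁)) * ((a₁ * b₁)⁻¹ * y * (a₁ * b₁)) := by group
      rw [h]
      exact mul_mem ihx ihy
  | inv x hx ihx =>
      have h : (a₁ * b₁)⁻¹ * x⁻¹ * (a₁ * b₁) = ((a₁ * b₁)⁻¹ * x * (a₁ * b₁))⁻¹ := by group
      rw [h]
      exact inv_mem ihx

lemma ito_normal
    (hPc : ∀ x ∈ P, ∀ y ∈ P, x * y = y * x)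
    (hQc : ∀ x ∈ Q, ∀ y ∈ Q, x * y = y * x)
    (hdec : ∀ g : G, ∃ a ∈ P, ∃ b ∈ Q, g = a * b)
    (hdec' : ∀ g : G, ∃ b ∈ Q, ∃ a ∈ P, g = b * a) :
    (⁅P, Q⁆ : Subgroup G).Normal := by
  constructor
  intro n hn g
  have := ito_conj_mem hPc hQc hdec hdec' g⁻¹ n hn
  simpa using this

lemma ito_tstar
    (hPc : ∀ x ∈ P, ∀ y ∈ P, x * y = y * x)
    (hQc : ∀ x ∈ Q, ∀ y ∈ Q, x * y = y * x)
    (hdec : ∀ g : G, ∃ a ∈ P, ∃ b ∈ Q, g = a * b)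
    (hdec' : ∀ g : G, ∃ b ∈ Q, ∃ a ∈ P, g = b * a)
    {a₁ b₁ : G} (ha₁ : a₁ ∈ P) (hb₁ : b₁ ∈ Q) :
    ∀ k ∈ ⁅P, Q⁆, b₁⁻¹ * (a₁⁻¹ * k * a₁) * b₁ = a₁⁻¹ * (b₁⁻¹ * k * b₁) * a₁ := by
  intro k hk
  rw [Subgroup.commutator_def] at hk
  induction hk using Subgroup.closure_induction with
  | mem x hx =>
      obtain ⟨a, ha, b, hb, rfl⟩ := hx
      obtain ⟨a', ha', b', hb', h1, h2⟩ := ito_conj_gen hPc hQc hdec hdec' ha hb ha₁ hb₁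
      rw [h1, h2]
  | one => group
  | mul x y hx hy ihx ihy =>
      have l : ∀ u v w z : G,
          z⁻¹ * (w⁻¹ * (u * v) * w) * z =
            (z⁻¹ * (w⁻¹ * u * w) * z) * (z⁻¹ * (w⁻¹ * v * w) * z) := by intros; group
      rw [l, ihx, ihy, ← l]
  | inv x hx ihx =>
      have l : ∀ u w z : G, z⁻¹ * (w⁻¹ * u⁻¹ * w) * z = (z⁻¹ * (w⁻¹ * u * w) * z)⁻¹ := by
        intros; group
      rw [l, ihx, ← l]

lemma ito_comm
    (hPc : ∀ x ∈ P, ∀ y ∈ P, x * y = y * x)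
    (hQc : ∀ x ∈ Q, ∀ y ∈ Q, x * y = y * x)
    (hdec : ∀ g : G, ∃ a ∈ P, ∃ b ∈ Q, g = a * b)
    (hdec' : ∀ g : G, ∃ b ∈ Q, ∃ a ∈ P, g = b * a) :
    ∀ u ∈ ⁅P, Q⁆, ∀ v ∈ ⁅P, Q⁆, Commute u v := by
  intro u hu v hv
  rw [Subgroup.commutator_def] at hv
  induction hv using Subgroup.closure_induction with
  | mem x hx =>
      obtain ⟨a, ha, b, hb, rfl⟩ := hx
      have h := ito_tstar hPc hQc hdec hdec' ha hb u hu
      have h' : a * b * (b⁻¹ * (a⁻¹ * u * a) * b) * (b⁻¹ * a⁻¹) =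
          a * b * (a⁻¹ * (b⁻¹ * u * b) * a) * (b⁻¹ * a⁻¹) := by rw [h]
      have l : a * b * (b⁻¹ * (a⁻¹ * u * a) * b) * (b⁻¹ * a⁻¹) = u := by group
      have r : a * b * (a⁻¹ * (b⁻¹ * u * b) * a) * (b⁻¹ * a⁻¹) =
          ⁅a, b⁆ * u * ⁅a, b⁆⁻¹ := by
        rw [commutatorElement_def]; group
      rw [l, r] at h'
      have : ⁅a, b⁆ * u = u * ⁅a, b⁆ := by
        rw [← mul_inv_eq_iff_eq_mul]; exact h'.symm
      exact this.symm
  | one => exact Commute.one_right u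
  | mul x y hx hy ihx ihy => exact Commute.mul_right ihx ihy
  | inv x hx ihx => exact Commute.inv_right ihx

end Ito

section Avg

open Subgroup
open scoped IsMulCommutative

variable {H : Type*} [Group H] [Finite H]

/-- Averaging over a coprime "acting" subgroup `S` on an abelian normal subgroup `R`
of exponent dividing `r`. -/
lemma avg_main (R S : Subgroup H) (hRn : R.Normal)
    (hRc : ∀ x ∈ R, ∀ y ∈ R, x * y = y * x)
    {r : ℕ} (hr : 1 < r)
    (hRe : ∀ x ∈ R, x ^ r = 1)
    (hco : Nat.Coprime (Nat.card S) r) :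
    (∀ z ∈ R, (∀ s ∈ S, s * z = z * s) →
        z ∈ Subgroup.closure {x : H | ∃ s ∈ S, ∃ w ∈ R, ⁅s, w⁆ = x} → z = 1) ∧
    (∀ z ∈ R, ∃ c ∈ R, (∀ s ∈ S, s * c = c * s) ∧
        ∃ t ∈ Subgroup.closure {x : H | ∃ s ∈ S, ∃ w ∈ R, ⁅s, w⁆ = x}, z = c * t) := by
  classical
  haveI : Fintype S := Fintype.ofFinite _
  haveI : IsMulCommutative R := ⟨⟨fun a b => Subtype.ext (hRc a a.2 b b.2)⟩⟩
  set T : Subgroup H := Subgroup.closure {x : H | ∃ s ∈ S, ∃ w ∈ R, ⁅s, w⁆ = x} with hT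
  have hTR : T ≤ R := by
    rw [hT]
    apply (Subgroup.closure_le _).mpr
    rintro x ⟨s, hs, w, hw, rfl⟩
    have h1 : ⁅s, w⁆ = (s * w * s⁻¹) * w⁻¹ := by rw [commutatorElement_def]
    rw [h1]
    exact mul_mem (hRn.conj_mem w hw s) (inv_mem hw)
  have hφmem : ∀ (s : S) (z : R), (s : H) * (z : H) * (s : H)⁻¹ ∈ R :=
    fun s z => hRn.conj_mem z z.2 s
  -- conjugation as a homomorphism `R →* R`
  set ψ : S → (R →* R) := fun s =>
    { toFun := fun z => ⟨(s : H) * (z : H) * (s : H)⁻¹, hφmem s z⟩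
      map_one' := by apply Subtype.ext; simp
      map_mul' := by
        intro z w
        apply Subtype.ext
        show (s : H) * (z * w : H) * (s : H)⁻¹ = _
        push_cast
        group } with hψ
  have ψval : ∀ (s : S) (z : R), (ψ s z : H) = (s : H) * z * (s : H)⁻¹ := fun s z => rfl
  have ψcomp : ∀ (s₁ s₂ : S) (z : R), ψ s₁ (ψ s₂ z) = ψ (s₁ * s₂) z := by
    intro s₁ s₂ z
    apply Subtype.ext
    rw [ψval, ψval, ψval]
    push_cast
    group
  set F : R → R := fun z => ∏ s : S, ψ s z with hF
  have Fmul : ∀ z w : R, F (z * w) = F z * F w := by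
    intro z w
    simp only [hF, map_mul]
    exact Finset.prod_mul_distrib
  have Fone : F 1 = 1 := by
    simp only [hF, map_one, Finset.prod_const_one]
  have Freindex : ∀ (s₀ : S) (z : R), F (ψ s₀ z) = F z := by
    intro s₀ z
    simp only [hF, ψcomp]
    exact Fintype.prod_equiv (Equiv.mulRight s₀) _ _ (fun s => rfl)
  have Fcentral : ∀ (s₀ : S) (z : R), ψ s₀ (F z) = F z := by
    intro s₀ z
    rw [hF, map_prod]
    simp only [ψcomp]
    exact Fintype.prod_equiv (Equiv.mulLeft s₀) _ _ (fun s => rfl)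
  have Finv : ∀ z : R, F z⁻¹ = (F z)⁻¹ := by
    intro z
    simp only [hF, map_inv]
    rw [Finset.prod_inv_distrib]
  -- F kills T
  have FT : ∀ t, t ∈ T → ∀ htR : t ∈ R, F ⟨t, htR⟩ = 1 := by
    intro t htT
    rw [hT] at htT
    induction htT using Subgroup.closure_induction with
    | mem x hx =>
        intro hxR
        obtain ⟨s, hs, w, hw, rfl⟩ := hx
        have h1 : (⟨⁅s, w⁆, hxR⟩ : R) = ψ ⟨s, hs⟩ ⟨w, hw⟩ * (⟨w, hw⟩ : R)⁻¹ := by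
          apply Subtype.ext
          push_cast [ψval, commutatorElement_def]
          group
        rw [h1, Fmul, Finv, Freindex, mul_inv_cancel]
    | one =>
        intro h1R
        have h2 : (⟨(1 : H), h1R⟩ : R) = 1 := rfl
        rw [h2, Fone]
    | mul x y hx hy ihx ihy =>
        intro hxyR
        have hxR : x ∈ R := hTR hx
        have hyR : y ∈ R := hTR hy
        have h1 : (⟨x * y, hxyR⟩ : R) = ⟨x, hxR⟩ * ⟨y, hyR⟩ := rfl
        rw [h1, Fmul, ihx hxR, ihy hyR, mul_one]
    | inv x hx ihx =>
        intro hxiR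
        have hxR : x ∈ R := hTR hx
        have h1 : (⟨x⁻¹, hxiR⟩ : R) = (⟨x, hxR⟩ : R)⁻¹ := rfl
        rw [h1, Finv, ihx hxR, inv_one]
  -- value of F on S-central elements
  have FC : ∀ z : R, (∀ s ∈ S, s * (z : H) = (z : H) * s) → F z = z ^ (Nat.card S) := by
    intro z hz
    have h1 : ∀ s : S, ψ s z = z := by
      intro s
      apply Subtype.ext
      rw [ψval, hz s s.2]
      group
    rw [hF]
    simp only [h1]
    rw [Finset.prod_const, Finset.card_univ, Nat.card_eq_fintype_card]
  -- F z ≡ z ^ card S mod T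
  have FmodT : ∀ z : R, ((F z * (z ^ (Nat.card S))⁻¹ : R) : H) ∈ T := by
    intro z
    have h1 : F z * (z ^ (Nat.card S))⁻¹ = ∏ s : S, (ψ s z * z⁻¹) := by
      rw [Finset.prod_mul_distrib, Finset.prod_const, Finset.card_univ,
        Nat.card_eq_fintype_card, ← inv_pow, hF]
    rw [h1]
    have h2 : (∏ s : S, (ψ s z * z⁻¹)) ∈ T.subgroupOf R := by
      apply Subgroup.prod_mem
      intro s _
      rw [Subgroup.mem_subgroupOf]
      apply Subgroup.subset_closure
      refine ⟨s, s.2, z, z.2, ?_⟩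
      push_cast [ψval, commutatorElement_def]
      group
    rwa [Subgroup.mem_subgroupOf] at h2
  constructor
  · -- central elements of T are trivial
    intro z hzR hzc hzT
    have h1 : F ⟨z, hzR⟩ = 1 := FT z hzT hzR
    have h2 : F ⟨z, hzR⟩ = ⟨z, hzR⟩ ^ (Nat.card S) := FC ⟨z, hzR⟩ hzc
    have h3 : (⟨z, hzR⟩ : R) ^ (Nat.card S) = 1 := by rw [← h2, h1]
    have h4 : (⟨z, hzR⟩ : R) ^ r = 1 := by
      apply Subtype.ext
      push_cast
      exact hRe z hzR
    have h5 : orderOf (⟨z, hzR⟩ : R) ∣ Nat.gcd (Nat.card S) r :=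
      Nat.dvd_gcd (orderOf_dvd_of_pow_eq_one h3) (orderOf_dvd_of_pow_eq_one h4)
    rw [Nat.Coprime.gcd_eq_one hco] at h5
    have h6 : (⟨z, hzR⟩ : R) = 1 := by
      rw [← orderOf_eq_one_iff]
      exact Nat.dvd_one.mp h5
    exact congrArg Subtype.val h6
  · -- decomposition z = c * t
    intro z hzR
    obtain ⟨m', -, hm'⟩ := Nat.exists_mul_mod_eq_one_of_coprime hco hr
    set zz : R := ⟨z, hzR⟩ with hzz
    have hzr : zz ^ r = 1 := by
      apply Subtype.ext
      push_cast
      exact hRe z hzR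
    set x : R := F zz * (zz ^ (Nat.card S))⁻¹ with hx
    set c : R := (F zz) ^ m' with hc
    set t : R := (x⁻¹) ^ m' with ht'
    have h1 : F zz * x⁻¹ = zz ^ (Nat.card ↥S) := by
      rw [hx, mul_inv_rev, inv_inv, mul_comm (zz ^ Nat.card ↥S) (F zz)⁻¹, ← mul_assoc,
        mul_inv_cancel, one_mul]
    have h2 : zz ^ (Nat.card ↥S * m') = zz := by
      have hd : Nat.card ↥S * m' = r * (Nat.card ↥S * m' / r) + 1 := by
        conv_lhs => rw [← Nat.div_add_mod (Nat.card ↥S * m') r]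
        rw [hm']
      rw [hd, pow_add, pow_mul, hzr, one_pow, one_mul, pow_one]
    have hct : c * t = zz := by
      rw [hc, ht', ← mul_pow, h1, ← pow_mul, h2]
    refine ⟨(c : H), c.2, ?_, (t : H), ?_, ?_⟩
    · intro s hs
      have h3 := congrArg (Subtype.val) (Fcentral ⟨s, hs⟩ zz)
      rw [ψval] at h3
      have h4 : s * (F zz : H) = (F zz : H) * s := by
        rw [mul_inv_eq_iff_eq_mul] at h3; exact h3
      have h5 : Commute s ((F zz : H)) := h4
      have h6 : (c : H) = (F zz : H) ^ m' := by
        rw [hc]; push_cast; rfl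
      rw [h6]
      exact (h5.pow_right m').eq
    · have h7 : (t : H) = ((x : H))⁻¹ ^ m' := by
        rw [ht']; push_cast; rfl
      rw [h7]
      exact pow_mem (inv_mem (FmodT zz)) m'
    · have := congrArg Subtype.val hct
      push_cast at this
      exact this.symm

end Avg

section MoreHelpers

open Subgroup

lemma comm_el_split {G : Type*} [Group G] (u v w : G) :
    ⁅u * v, w⁆ = u * ⁅v, w⁆ * u⁻¹ * ⁅u, w⁆ := by
  simp only [commutatorElement_def]; group

/-- A normal p-subgroup is contained in every Sylow p-subgroup. -/
lemma normal_le_sylow {G : Type*} [Group G] [Finite G] {p : ℕ} [Fact p.Prime]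
    {R : Subgroup G} (hR : IsPGroup p R) (hRn : R.Normal) (Ps : Sylow p G) :
    R ≤ (Ps : Subgroup G) := by
  obtain ⟨Q0, hle⟩ := hR.exists_le_sylow
  obtain ⟨g, hg⟩ := MulAction.exists_smul_eq G Q0 Ps
  intro x hx
  rw [← hg]
  have h1 : g⁻¹ * x * g ∈ R := by
    have := hRn.conj_mem x hx g⁻¹
    simpa using this
  have h2 : g⁻¹ * x * g ∈ Q0 := hle h1
  show x ∈ ((g • Q0 : Sylow p G) : Subgroup G)
  rw [Sylow.coe_subgroup_smul, Subgroup.mem_pointwise_smul_iff_inv_smul_mem]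
  simp [MulAut.smul_def, mul_assoc]
  rw [← mul_assoc]; exact h2

end MoreHelpers

section Side

open Subgroup QuotientGroup

lemma side_main {G : Type} [Group G] [Finite G] {p q : ℕ} (hq1 : 1 < q)
    {P Q A B K : Subgroup G}
    (hPc : ∀ x ∈ P, ∀ y ∈ P, x * y = y * x)
    (hQc : ∀ x ∈ Q, ∀ y ∈ Q, x * y = y * x)
    (hQe : ∀ x ∈ Q, x ^ q = 1)
    (hAe : ∀ x ∈ A, x ^ p = 1)
    (hdec : ∀ g : G, ∃ a ∈ P, ∃ b ∈ Q, g = a * b)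
    (hPQbot : P ⊓ Q = ⊥)
    (hAn : A.Normal) (hBn : B.Normal) (hAP : A ≤ P) (hBQ : B ≤ Q) (hBK : B ≤ K)
    (hKn : K.Normal)
    (hKgen : ∀ a ∈ P, ∀ b ∈ Q, ⁅a, b⁆ ∈ K)
    (hKle : K ≤ Subgroup.closure {x : G | ∃ a ∈ P, ∃ b ∈ Q, ⁅a, b⁆ = x})
    (hKdec : ∀ k ∈ K, ∃ a ∈ A, ∃ b ∈ B, k = a * b)
    (hABbot : A ⊓ B = ⊥)
    (hPq : Nat.Coprime (Nat.card P) q) :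
    ∃ Q₂ M : Subgroup G,
      Q₂ ≤ Q ∧
      M.Normal ∧
      (∀ m ∈ M, ∃ a ∈ A, ∃ x ∈ Q₂, m = a * x) ∧
      A ≤ M ∧ Q₂ ≤ M ∧
      (∀ ω ∈ Q, ∃ x ∈ Q₂, ∃ b ∈ B, ω = x * b) ∧
      (∀ x ∈ B, x ∈ Q₂ → x = 1) ∧
      Nat.card B * Nat.card Q₂ = Nat.card Q ∧
      Nat.card A * Nat.card Q₂ = Nat.card M ∧
      InApAq p q M := by
  classical
  haveI := hAn
  set πA : G →* G ⧸ A := QuotientGroup.mk' A with hπA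
  have hπ1 : ∀ a ∈ A, πA a = 1 := by
    intro a ha
    exact (QuotientGroup.eq_one_iff a).mpr ha
  have hπmem : ∀ x : G, πA x = 1 → x ∈ A := by
    intro x hx
    exact (QuotientGroup.eq_one_iff x).mp hx
  have hπcomm : ∀ x y : G, x⁻¹ * y⁻¹ * x * y ∈ A ↔ πA y * πA x = πA x * πA y := by
    intro x y
    constructor
    · intro h
      have h1 : πA (x⁻¹ * y⁻¹ * x * y) = 1 := hπ1 _ h
      have h2 : (πA x)⁻¹ * (πA y)⁻¹ * πA x * πA y = 1 := by
        simpa [map_mul, map_inv] using h1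
      calc πA y * πA x
          = πA y * πA x * ((πA x)⁻¹ * (πA y)⁻¹ * πA x * πA y) := by rw [h2, mul_one]
        _ = πA x * πA y := by group
    · intro h
      apply hπmem
      have h2 : πA (x⁻¹ * y⁻¹ * x * y) = (πA x)⁻¹ * (πA y)⁻¹ * (πA x * πA y) := by
        simp [map_mul, map_inv, mul_assoc]
      rw [h2, ← h]
      group
  -- the subgroup Q₂
  set Q₂ : Subgroup G :=
    Q ⊓ Subgroup.comap πA (Subgroup.centralizer ((P.map πA) : Set (G ⧸ A))) with hQ₂
  have hQ₂iff : ∀ x : G, x ∈ Q₂ ↔ x ∈ Q ∧ ∀ y ∈ P, x⁻¹ * y⁻¹ * x * y ∈ A := by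
    intro x
    rw [hQ₂]
    simp only [Subgroup.mem_inf, Subgroup.mem_comap, Subgroup.mem_centralizer_iff]
    constructor
    · rintro ⟨h1, h2⟩
      refine ⟨h1, fun y hy => ?_⟩
      have h3 : πA y * πA x = πA x * πA y := by
        apply h2
        exact ⟨y, hy, rfl⟩
      exact (hπcomm x y).mpr h3
    · rintro ⟨h1, h2⟩
      refine ⟨h1, ?_⟩
      rintro h ⟨y, hy, rfl⟩
      exact (hπcomm x y).mp (h2 y hy)
  have hQ₂Q : Q₂ ≤ Q := fun x hx => ((hQ₂iff x).mp hx).1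
  have hQ₂prop : ∀ x ∈ Q₂, ∀ y ∈ P, x⁻¹ * y⁻¹ * x * y ∈ A :=
    fun x hx => ((hQ₂iff x).mp hx).2
  -- M
  set M : Subgroup G := A ⊔ Q₂ with hM
  have hAM : A ≤ M := le_sup_left
  have hQ₂M : Q₂ ≤ M := le_sup_right
  have hMdec : ∀ m ∈ M, ∃ a ∈ A, ∃ x ∈ Q₂, m = a * x := by
    intro m hm
    have h1 : m ∈ (↑(A ⊔ Q₂) : Set G) := by rw [← hM]; exact hm
    rw [Subgroup.normal_mul] at h1
    obtain ⟨a, ha, x, hx, hax⟩ := h1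
    exact ⟨a, ha, x, hx, hax.symm⟩
  have hconjQ₂ : ∀ x ∈ Q₂, ∀ g : G, g * x * g⁻¹ ∈ M := by
    intro x hx g
    obtain ⟨a₁, ha₁, b₁, hb₁, hg⟩ := hdec g
    have hxb : b₁ * x = x * b₁ := hQc b₁ hb₁ x (hQ₂Q hx)
    have h1 : g * x * g⁻¹ = x * (x⁻¹ * a₁ * x * a₁⁻¹) := by
      rw [hg]
      calc a₁ * b₁ * x * (a₁ * b₁)⁻¹
          = a₁ * (b₁ * x) * (b₁⁻¹ * a₁⁻¹) := by group
        _ = a₁ * (x * b₁) * (b₁⁻¹ * a₁⁻¹) := by rw [hxb]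
        _ = x * (x⁻¹ * a₁ * x * a₁⁻¹) := by group
    have h2 : x⁻¹ * a₁ * x * a₁⁻¹ ∈ A := by
      have h3 := hQ₂prop x hx a₁⁻¹ (inv_mem ha₁)
      simpa using h3
    rw [h1]
    exact mul_mem (hQ₂M hx) (hAM h2)
  have hMn : M.Normal := by
    constructor
    intro n hn g
    obtain ⟨a, ha, x, hx, rfl⟩ := hMdec n hn
    have h1 : g * (a * x) * g⁻¹ = (g * a * g⁻¹) * (g * x * g⁻¹) := by group
    rw [h1]
    exact mul_mem (hAM (hAn.conj_mem a ha g)) (hconjQ₂ x hx g)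
  -- the quotient picture
  set R : Subgroup (G ⧸ A) := Q.map πA with hR
  set S : Subgroup (G ⧸ A) := P.map πA with hS
  have hKcomm : ∀ (g : G), ∀ ω ∈ Q, ⁅g, ω⁆ ∈ K := by
    intro g ω hω
    obtain ⟨a₁, ha₁, b₁, hb₁, hg⟩ := hdec g
    have h1 : ⁅b₁, ω⁆ = 1 := by
      rw [commutatorElement_eq_one_iff_mul_comm]
      exact hQc b₁ hb₁ ω hω
    rw [hg, comm_el_split, h1]
    simpa using hKgen a₁ ha₁ ω hω
  have hRn : R.Normal := by
    constructor
    intro n hn g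
    obtain ⟨ω, hω, rfl⟩ := hn
    obtain ⟨g₀, rfl⟩ := QuotientGroup.mk'_surjective A g
    have h1 : g₀ * ω * g₀⁻¹ = ⁅g₀, ω⁆ * ω := by
      rw [commutatorElement_def]; group
    have h2 : πA g₀ * πA ω * (πA g₀)⁻¹ = πA (g₀ * ω * g₀⁻¹) := by
      simp [map_mul, map_inv]
    rw [h2, h1]
    obtain ⟨a, ha, b, hb, hab⟩ := hKdec _ (hKcomm g₀ ω hω)
    rw [hab, map_mul, map_mul, hπ1 a ha, one_mul]
    exact mul_mem (Subgroup.mem_map_of_mem _ (hBQ hb)) (Subgroup.mem_map_of_mem _ hω)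
  have hRc : ∀ x ∈ R, ∀ y ∈ R, x * y = y * x := by
    rintro x ⟨ω, hω, rfl⟩ y ⟨ω', hω', rfl⟩
    rw [← map_mul, ← map_mul, hQc ω hω ω' hω']
  have hRe : ∀ x ∈ R, x ^ q = 1 := by
    rintro x ⟨ω, hω, rfl⟩
    rw [← map_pow, hQe ω hω, map_one]
  have hco : Nat.Coprime (Nat.card S) q := by
    have h1 : Nat.card S ∣ Nat.card P :=
      Subgroup.card_dvd_of_surjective (πA.subgroupMap P) (MonoidHom.subgroupMap_surjective πA P)
    exact Nat.Coprime.coprime_dvd_left h1 hPq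
  obtain ⟨avg1, avg2⟩ := avg_main R S hRn hRc hq1 hRe hco
  have hKT : ∀ k ∈ K, πA k ∈
      Subgroup.closure {x : G ⧸ A | ∃ s ∈ S, ∃ w ∈ R, ⁅s, w⁆ = x} := by
    intro k hk
    have hk' := hKle hk
    clear hk
    induction hk' using Subgroup.closure_induction with
    | mem x hx =>
        obtain ⟨a, ha, b, hb, rfl⟩ := hx
        rw [map_commutatorElement]
        exact Subgroup.subset_closure
          ⟨πA a, Subgroup.mem_map_of_mem _ ha, πA b, Subgroup.mem_map_of_mem _ hb, rfl⟩
    | one => rw [map_one]; exact one_mem _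
    | mul x y hx hy ihx ihy => rw [map_mul]; exact mul_mem ihx ihy
    | inv x hx ihx => rw [map_inv]; exact inv_mem ihx
  have hTK : Subgroup.closure {x : G ⧸ A | ∃ s ∈ S, ∃ w ∈ R, ⁅s, w⁆ = x} ≤ K.map πA := by
    apply (Subgroup.closure_le _).mpr
    rintro x ⟨s, hs, w, hw, rfl⟩
    obtain ⟨y, hy, rfl⟩ := hs
    obtain ⟨v, hv, rfl⟩ := hw
    rw [← map_commutatorElement]
    exact Subgroup.mem_map_of_mem _ (hKgen y hy v hv)
  have hBQ₂bot : ∀ x ∈ B, x ∈ Q₂ → x = 1 := by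
    intro x hxB hxQ₂
    have h1 : πA x ∈ R := Subgroup.mem_map_of_mem _ (hBQ hxB)
    have h2 : ∀ s ∈ S, s * πA x = πA x * s := by
      rintro s ⟨y, hy, rfl⟩
      exact (hπcomm x y).mp (hQ₂prop x hxQ₂ y hy)
    have h3 := avg1 (πA x) h1 h2 (hKT x (hBK hxB))
    have h5 : x ∈ A := hπmem x h3
    have h6 : x ∈ A ⊓ B := ⟨h5, hxB⟩
    rw [hABbot, Subgroup.mem_bot] at h6
    exact h6
  have hQsplit : ∀ ω ∈ Q, ∃ x ∈ Q₂, ∃ b ∈ B, ω = x * b := by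
    intro ω hω
    obtain ⟨c, hcR, hcC, t, htT, hct⟩ := avg2 (πA ω) (Subgroup.mem_map_of_mem _ hω)
    obtain ⟨k, hkK, hkt⟩ := hTK htT
    obtain ⟨a, ha, b, hb, hkab⟩ := hKdec k hkK
    have hπb : πA b = t := by
      rw [← hkt, hkab, map_mul, hπ1 a ha, one_mul]
    have hx₀Q : ω * b⁻¹ ∈ Q := mul_mem hω (inv_mem (hBQ hb))
    have hπx₀ : πA (ω * b⁻¹) = c := by
      rw [map_mul, map_inv, hπb, hct]
      group
    have hx₀Q₂ : ω * b⁻¹ ∈ Q₂ := by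
      rw [hQ₂iff]
      refine ⟨hx₀Q, fun y hy => ?_⟩
      apply (hπcomm _ y).mpr
      rw [hπx₀]
      exact hcC (πA y) (Subgroup.mem_map_of_mem _ hy)
    exact ⟨ω * b⁻¹, hx₀Q₂, b, hb, by group⟩
  -- cardinalities
  have hAQ₂bot : ∀ g : G, g ∈ A → g ∈ Q₂ → g = 1 := by
    intro g hgA hgQ₂
    have : g ∈ P ⊓ Q := ⟨hAP hgA, hQ₂Q hgQ₂⟩
    rwa [hPQbot, Subgroup.mem_bot] at this
  have hcardQ : Nat.card B * Nat.card Q₂ = Nat.card Q := by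
    have hf : Function.Bijective (fun z : B × Q₂ =>
        (⟨(z.1 : G) * z.2, mul_mem (hBQ z.1.2) (hQ₂Q z.2.2)⟩ : Q)) := by
      constructor
      · rintro ⟨b, x⟩ ⟨b', x'⟩ h
        have h1 : (b : G) * x = (b' : G) * x' := by
          simpa [Subtype.ext_iff] using h
        have h2 : ((b' : G)⁻¹ * b : G) = (x' : G) * (x : G)⁻¹ := by
          rw [inv_mul_eq_iff_eq_mul, ← mul_assoc, ← h1]
          group
        have h3 : ((b' : G)⁻¹ * b : G) ∈ B := mul_mem (inv_mem b'.2) b.2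
        have h4 : ((b' : G)⁻¹ * b : G) ∈ Q₂ := by
          rw [h2]; exact mul_mem x'.2 (inv_mem x.2)
        have h5 := hBQ₂bot _ h3 h4
        have hb : (b : G) = b' := by
          rw [inv_mul_eq_one] at h5
          exact h5.symm
        have hx : (x : G) = x' := by
          have h6 : (x' : G) * (x : G)⁻¹ = 1 := by rw [← h2, h5]
          rw [mul_inv_eq_one] at h6
          exact h6.symm
        exact Prod.ext (Subtype.ext hb) (Subtype.ext hx)
      · rintro ⟨ω, hω⟩
        obtain ⟨x, hx, b, hb, heq⟩ := hQsplit ω hω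
        refine ⟨(⟨b, hb⟩, ⟨x, hx⟩), ?_⟩
        apply Subtype.ext
        show (b : G) * x = ω
        rw [heq]
        exact hQc b (hBQ hb) x (hQ₂Q hx)
    have := Nat.card_eq_of_bijective _ hf
    rwa [Nat.card_prod] at this
  have hcardM : Nat.card A * Nat.card Q₂ = Nat.card M := by
    have hf : Function.Bijective (fun z : A × Q₂ =>
        (⟨(z.1 : G) * z.2, mul_mem (hAM z.1.2) (hQ₂M z.2.2)⟩ : M)) := by
      constructor
      · rintro ⟨a, x⟩ ⟨a', x'⟩ h
        have h1 : (a : G) * x = (a' : G) * x' := by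
          simpa [Subtype.ext_iff] using h
        have h2 : ((a' : G)⁻¹ * a : G) = (x' : G) * (x : G)⁻¹ := by
          rw [inv_mul_eq_iff_eq_mul, ← mul_assoc, ← h1]
          group
        have h3 : ((a' : G)⁻¹ * a : G) ∈ A := mul_mem (inv_mem a'.2) a.2
        have h4 : ((a' : G)⁻¹ * a : G) ∈ Q₂ := by
          rw [h2]; exact mul_mem x'.2 (inv_mem x.2)
        have h5 := hAQ₂bot _ h3 h4
        have ha : (a : G) = a' := by
          rw [inv_mul_eq_one] at h5
          exact h5.symm
        have hx : (x : G) = x' := by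
          have h6 : (x' : G) * (x : G)⁻¹ = 1 := by rw [← h2, h5]
          rw [mul_inv_eq_one] at h6
          exact h6.symm
        exact Prod.ext (Subtype.ext ha) (Subtype.ext hx)
      · rintro ⟨m, hm⟩
        obtain ⟨a, ha, x, hx, heq⟩ := hMdec m hm
        exact ⟨(⟨a, ha⟩, ⟨x, hx⟩), Subtype.ext heq.symm⟩
    have := Nat.card_eq_of_bijective _ hf
    rwa [Nat.card_prod] at this
  -- InApAq structure on M
  have hAc : ∀ x ∈ A, ∀ y ∈ A, x * y = y * x :=
    fun x hx y hy => hPc x (hAP hx) y (hAP hy)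
  have hMIn : InApAq p q M := by
    refine ⟨A.subgroupOf M, hAn.subgroupOf M, ⟨?_, ?_⟩, ?_, ?_⟩
    · intro u v
      apply Subtype.ext
      apply Subtype.ext
      show ((u : M) : G) * ((v : M) : G) = ((v : M) : G) * ((u : M) : G)
      exact hAc _ (Subgroup.mem_subgroupOf.mp u.2) _ (Subgroup.mem_subgroupOf.mp v.2)
    · intro u
      apply Subtype.ext
      apply Subtype.ext
      show (((u ^ p : A.subgroupOf M) : M) : G) = 1
      push_cast
      exact hAe _ (Subgroup.mem_subgroupOf.mp u.2)
    · intro u v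
      rw [Subgroup.mem_subgroupOf]
      obtain ⟨a, ha, x, hx, hux⟩ := hMdec (u : G) u.2
      obtain ⟨a', ha', x', hx', hvx⟩ := hMdec (v : G) v.2
      apply hπmem
      have hπu : πA (u : G) = πA x := by rw [hux, map_mul, hπ1 a ha, one_mul]
      have hπv : πA (v : G) = πA x' := by rw [hvx, map_mul, hπ1 a' ha', one_mul]
      have hxx' : x * x' * x⁻¹ * x'⁻¹ = 1 := by
        rw [hQc x (hQ₂Q hx) x' (hQ₂Q hx')]
        group
      have hcoe : ((u * v * u⁻¹ * v⁻¹ : M) : G)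
          = (u : G) * v * (u : G)⁻¹ * (v : G)⁻¹ := by push_cast; rfl
      have hsplit : πA x * πA x' * (πA x)⁻¹ * (πA x')⁻¹ = πA (x * x' * x⁻¹ * x'⁻¹) := by
        simp [map_mul, map_inv]
      rw [hcoe, map_mul, map_mul, map_mul, map_inv, map_inv, hπu, hπv, hsplit, hxx', map_one]
    · intro u
      rw [Subgroup.mem_subgroupOf]
      obtain ⟨a, ha, x, hx, hux⟩ := hMdec (u : G) u.2
      apply hπmem
      have hπu : πA (u : G) = πA x := by rw [hux, map_mul, hπ1 a ha, one_mul]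
      have hcoe : ((u ^ q : M) : G) = ((u : G)) ^ q := by push_cast; rfl
      rw [hcoe, map_pow, hπu, ← map_pow, hQe x (hQ₂Q hx), map_one]
  exact ⟨Q₂, M, hQ₂Q, hMn, hMdec, hAM, hQ₂M, hQsplit, hBQ₂bot, hcardQ, hcardM, hMIn⟩

end Side

section Main

open Subgroup

/-- A finite group of order `p^α q^β` whose Sylow `p`- and `q`-subgroups
are abelian of exponent dividing `p` and `q` respectively decomposes as `X × Y` with
`X ∈ 𝔄_p𝔄_q` and `Y ∈ 𝔄_q𝔄_p`. -/
theorem decomposition_in_join_variety (p q : ℕ) (hp : p.Prime) (hq : q.Prime) (hpq : p ≠ q)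
    (G : Type) [Group G] [Finite G]
    (horder : ∃ α β : ℕ, Nat.card G = p ^ α * q ^ β)
    (hSylp : ∀ P : Subgroup G, IsSylow' p P → ElemAbelian p P)
    (hSylq : ∀ Q : Subgroup G, IsSylow' q Q → ElemAbelian q Q) :
    ∃ (X : Type) (_ : Group X) (Y : Type) (_ : Group Y),
      Finite X ∧ Finite Y ∧ InApAq p q X ∧ InApAq q p Y ∧
      Nonempty (G ≃* X × Y) := by
  classical
  obtain ⟨α, β, hord⟩ := horder
  haveI : Fact p.Prime := ⟨hp⟩
  haveI : Fact q.Prime := ⟨hq⟩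
  obtain ⟨Ps⟩ : Nonempty (Sylow p G) := inferInstance
  obtain ⟨Qs⟩ : Nonempty (Sylow q G) := inferInstance
  set P : Subgroup G := ↑Ps with hPdef
  set Q : Subgroup G := ↑Qs with hQdef
  have hfp : (Nat.card G).factorization p = α := by
    rw [hord, Nat.factorization_mul (pow_ne_zero _ hp.pos.ne') (pow_ne_zero _ hq.pos.ne'),
      hp.factorization_pow, hq.factorization_pow]
    simp [Finsupp.single_apply, Ne.symm hpq]
  have hfq : (Nat.card G).factorization q = β := by
    rw [hord, Nat.factorization_mul (pow_ne_zero _ hp.pos.ne') (pow_ne_zero _ hq.pos.ne'),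
      hp.factorization_pow, hq.factorization_pow]
    simp [Finsupp.single_apply, hpq]
  have hcardP : Nat.card P = p ^ α := by rw [← hfp]; exact Ps.card_eq_multiplicity
  have hcardQ : Nat.card Q = q ^ β := by rw [← hfq]; exact Qs.card_eq_multiplicity
  have hcardPQ : Nat.card P * Nat.card Q = Nat.card G := by rw [hcardP, hcardQ, hord]
  have hcopq : Nat.Coprime p q := (Nat.coprime_primes hp hq).mpr hpq
  have hPQbot : P ⊓ Q = ⊥ := by
    apply inf_eq_bot_of_coprime
    rw [hcardP, hcardQ]
    exact hcopq.pow α β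
  -- elementary abelian Sylow subgroups
  have hPsyl : IsSylow' p P := by
    refine ⟨Ps.isPGroup', ?_⟩
    have h1 : ¬ p ∣ P.index := Ps.not_dvd_index
    exact Nat.coprime_comm.mp ((hp.coprime_iff_not_dvd).mpr h1)
  have hQsyl : IsSylow' q Q := by
    refine ⟨Qs.isPGroup', ?_⟩
    have h1 : ¬ q ∣ Q.index := Qs.not_dvd_index
    exact Nat.coprime_comm.mp ((hq.coprime_iff_not_dvd).mpr h1)
  have hPel := hSylp P hPsyl
  have hQel := hSylq Q hQsyl
  have hPc : ∀ x ∈ P, ∀ y ∈ P, x * y = y * x := by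
    intro x hx y hy
    exact congrArg Subtype.val (hPel.1 ⟨x, hx⟩ ⟨y, hy⟩)
  have hQc : ∀ x ∈ Q, ∀ y ∈ Q, x * y = y * x := by
    intro x hx y hy
    exact congrArg Subtype.val (hQel.1 ⟨x, hx⟩ ⟨y, hy⟩)
  have hPe : ∀ x ∈ P, x ^ p = 1 := by
    intro x hx
    have h2 := congrArg Subtype.val (hPel.2 ⟨x, hx⟩)
    push_cast at h2
    exact h2
  have hQe : ∀ x ∈ Q, x ^ q = 1 := by
    intro x hx
    have h2 := congrArg Subtype.val (hQel.2 ⟨x, hx⟩)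
    push_cast at h2
    exact h2
  -- product decomposition G = P * Q
  have hbij : Function.Bijective (fun z : P × Q => (z.1 : G) * z.2) := by
    rw [Nat.bijective_iff_injective_and_card]
    constructor
    · rintro ⟨a, b⟩ ⟨a', b'⟩ h
      simp only at h
      have h2 : ((a' : G)⁻¹ * a : G) = (b' : G) * (b : G)⁻¹ := by
        rw [inv_mul_eq_iff_eq_mul, ← mul_assoc, ← h]
        group
      have hP' : ((a' : G)⁻¹ * a : G) ∈ P := mul_mem (inv_mem a'.2) a.2
      have hQ' : ((a' : G)⁻¹ * a : G) ∈ Q := by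
        rw [h2]; exact mul_mem b'.2 (inv_mem b.2)
      have h3 : ((a' : G)⁻¹ * a : G) ∈ P ⊓ Q := Subgroup.mem_inf.mpr ⟨hP', hQ'⟩
      rw [hPQbot, Subgroup.mem_bot] at h3
      have ha : (a : G) = a' := by
        rw [inv_mul_eq_one] at h3; exact h3.symm
      have hb : (b : G) = b' := by
        have h4 : (b' : G) * (b : G)⁻¹ = 1 := by rw [← h2, h3]
        rw [mul_inv_eq_one] at h4; exact h4.symm
      exact Prod.ext (Subtype.ext ha) (Subtype.ext hb)
    · rw [Nat.card_prod]; exact hcardPQ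
  have hdec : ∀ g : G, ∃ a ∈ P, ∃ b ∈ Q, g = a * b := by
    intro g
    obtain ⟨⟨a, b⟩, hab⟩ := hbij.2 g
    exact ⟨a, a.2, b, b.2, hab.symm⟩
  have hdec' : ∀ g : G, ∃ b ∈ Q, ∃ a ∈ P, g = b * a := by
    intro g
    obtain ⟨a, ha, b, hb, h⟩ := hdec g⁻¹
    refine ⟨b⁻¹, inv_mem hb, a⁻¹, inv_mem ha, ?_⟩
    rw [← mul_inv_rev, ← h, inv_inv]
  -- Itô: K = [P, Q] is an abelian normal subgroup
  set K : Subgroup G := ⁅P, Q⁆ with hK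
  have hKn : K.Normal := ito_normal hPc hQc hdec hdec'
  have hKc : ∀ u ∈ K, ∀ v ∈ K, u * v = v * u := fun u hu v hv =>
    (ito_comm hPc hQc hdec hdec' u hu v hv).eq
  have hKgen : ∀ a ∈ P, ∀ b ∈ Q, ⁅a, b⁆ ∈ K := fun a ha b hb =>
    Subgroup.commutator_mem_commutator ha hb
  have hKle : K ≤ Subgroup.closure {x : G | ∃ a ∈ P, ∃ b ∈ Q, ⁅a, b⁆ = x} :=
    le_of_eq (Subgroup.commutator_def P Q)
  -- A and B : the p-part and q-part of K
  set A : Subgroup G :=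
    { carrier := {x : G | x ∈ K ∧ x ^ (p ^ α) = 1}
      one_mem' := ⟨one_mem K, one_pow _⟩
      mul_mem' := by
        rintro x y ⟨hxK, hxp⟩ ⟨hyK, hyp⟩
        refine ⟨mul_mem hxK hyK, ?_⟩
        have hc : Commute x y := hKc x hxK y hyK
        rw [hc.mul_pow, hxp, hyp, one_mul]
      inv_mem' := by
        rintro x ⟨hxK, hxp⟩
        exact ⟨inv_mem hxK, by rw [inv_pow, hxp, inv_one]⟩ } with hA
  set B : Subgroup G :=
    { carrier := {x : G | x ∈ K ∧ x ^ (q ^ β) = 1}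
      one_mem' := ⟨one_mem K, one_pow _⟩
      mul_mem' := by
        rintro x y ⟨hxK, hxp⟩ ⟨hyK, hyp⟩
        refine ⟨mul_mem hxK hyK, ?_⟩
        have hc : Commute x y := hKc x hxK y hyK
        rw [hc.mul_pow, hxp, hyp, one_mul]
      inv_mem' := by
        rintro x ⟨hxK, hxp⟩
        exact ⟨inv_mem hxK, by rw [inv_pow, hxp, inv_one]⟩ } with hB
  have hAmem : ∀ x : G, x ∈ A ↔ x ∈ K ∧ x ^ (p ^ α) = 1 := fun x => Iff.rfl
  have hBmem : ∀ x : G, x ∈ B ↔ x ∈ K ∧ x ^ (q ^ β) = 1 := fun x => Iff.rfl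
  have hAK : A ≤ K := fun x hx => ((hAmem x).mp hx).1
  have hBK : B ≤ K := fun x hx => ((hBmem x).mp hx).1
  have hAn : A.Normal := by
    constructor
    rintro n ⟨hnK, hnp⟩ g
    refine ⟨hKn.conj_mem n hnK g, ?_⟩
    rw [conj_pow, hnp, mul_one, mul_inv_cancel]
  have hBn : B.Normal := by
    constructor
    rintro n ⟨hnK, hnp⟩ g
    refine ⟨hKn.conj_mem n hnK g, ?_⟩
    rw [conj_pow, hnp, mul_one, mul_inv_cancel]
  have hApg : IsPGroup p A := by
    intro g
    refine ⟨α, ?_⟩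
    apply Subtype.ext
    push_cast
    exact g.2.2
  have hBpg : IsPGroup q B := by
    intro g
    refine ⟨β, ?_⟩
    apply Subtype.ext
    push_cast
    exact g.2.2
  have hAP : A ≤ P := normal_le_sylow hApg hAn Ps
  have hBQ : B ≤ Q := normal_le_sylow hBpg hBn Qs
  have hAe : ∀ x ∈ A, x ^ p = 1 := fun x hx => hPe x (hAP hx)
  have hBe : ∀ x ∈ B, x ^ q = 1 := fun x hx => hQe x (hBQ hx)
  have hABbot : A ⊓ B = ⊥ := by
    have h1 : A ⊓ B ≤ P ⊓ Q := inf_le_inf hAP hBQ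
    rw [hPQbot] at h1
    exact le_bot_iff.mp h1
  have hKdec : ∀ k ∈ K, ∃ a ∈ A, ∃ b ∈ B, k = a * b := by
    intro k hk
    have hco2 : Nat.Coprime (p ^ α) (q ^ β) := hcopq.pow α β
    obtain ⟨u, v, huv⟩ := Nat.Coprime.isCoprime hco2
    have hk1 : k ^ (q ^ β) ∈ A := by
      refine ⟨pow_mem hk _, ?_⟩
      rw [← pow_mul, mul_comm, ← hord]
      exact pow_card_eq_one'
    have hk2 : k ^ (p ^ α) ∈ B := by
      refine ⟨pow_mem hk _, ?_⟩
      rw [← pow_mul, ← hord]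
      exact pow_card_eq_one'
    refine ⟨(k ^ (q ^ β)) ^ v, Subgroup.zpow_mem A hk1 v,
      (k ^ (p ^ α)) ^ u, Subgroup.zpow_mem B hk2 u, ?_⟩
    have h1 : ((q ^ β : ℕ) : ℤ) * v + ((p ^ α : ℕ) : ℤ) * u = 1 := by
      rw [mul_comm ((q ^ β : ℕ) : ℤ) v, mul_comm ((p ^ α : ℕ) : ℤ) u, add_comm]
      exact huv
    calc k = k ^ (1 : ℤ) := (zpow_one k).symm
      _ = k ^ (((q ^ β : ℕ) : ℤ) * v + ((p ^ α : ℕ) : ℤ) * u) := by rw [h1]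
      _ = (k ^ (((q ^ β : ℕ) : ℤ))) ^ v * (k ^ (((p ^ α : ℕ) : ℤ))) ^ u := by
          rw [zpow_add, zpow_mul, zpow_mul]
      _ = (k ^ (q ^ β)) ^ v * (k ^ (p ^ α)) ^ u := by rw [zpow_natCast, zpow_natCast]
  have hPq' : Nat.Coprime (Nat.card P) q := by
    rw [hcardP]
    exact Nat.Coprime.pow_left α hcopq
  have hQp' : Nat.Coprime (Nat.card Q) p := by
    rw [hcardQ]
    exact Nat.Coprime.pow_left β hcopq.symm
  -- first side
  obtain ⟨Q₂, M, hQ₂Q, hMn, hMdec, hAM, hQ₂M, hQsplit, hBQ₂bot, hcardQ2, hcardM, hMIn⟩ :=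
    side_main hq.one_lt hPc hQc hQe hAe hdec hPQbot hAn hBn hAP hBQ hBK hKn hKgen hKle
      hKdec hABbot hPq'
  -- second (swapped) side
  have hQPbot : Q ⊓ P = ⊥ := by rw [inf_comm]; exact hPQbot
  have hKgen' : ∀ b ∈ Q, ∀ a ∈ P, ⁅b, a⁆ ∈ K := by
    intro b hb a ha
    rw [← commutatorElement_inv]
    exact inv_mem (hKgen a ha b hb)
  have hKle' : K ≤ Subgroup.closure {x : G | ∃ b ∈ Q, ∃ a ∈ P, ⁅b, a⁆ = x} := by
    have h1 : K ≤ ⁅Q, P⁆ := Subgroup.commutator_comm_le P Q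
    exact h1.trans (le_of_eq (Subgroup.commutator_def Q P))
  have hKdec' : ∀ k ∈ K, ∃ b ∈ B, ∃ a ∈ A, k = b * a := by
    intro k hk
    obtain ⟨a, ha, b, hb, hab⟩ := hKdec k hk
    exact ⟨b, hb, a, ha, by rw [hab]; exact hKc a (hAK ha) b (hBK hb)⟩
  have hBAbot : B ⊓ A = ⊥ := by rw [inf_comm]; exact hABbot
  obtain ⟨P₂, N, hP₂P, hNn, hNdec, hBN, hP₂N, hPsplit, hAP₂bot, hcardP2, hcardN, hNIn⟩ :=
    side_main hp.one_lt hQc hPc hPe hBe hdec' hQPbot hBn hAn hBQ hAP hAK hKn hKgen' hKle'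
      hKdec' hBAbot hQp'
  -- M ∩ N is trivial
  have hMNtriv : ∀ t : G, t ∈ M → t ∈ N → t = 1 := by
    intro t htM htN
    obtain ⟨a, ha, x, hx, rfl⟩ := hMdec t htM
    obtain ⟨b, hb, y, hy, hty⟩ := hNdec _ htN
    have h2 : y⁻¹ * b * y ∈ B := by
      have := hBn.conj_mem b hb y⁻¹
      simpa using this
    have h1 : a * x = y * (y⁻¹ * b * y) := by rw [hty]; group
    have h3 : y⁻¹ * a = (y⁻¹ * b * y) * x⁻¹ := by
      calc y⁻¹ * a = y⁻¹ * (a * x) * x⁻¹ := by group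
        _ = y⁻¹ * (y * (y⁻¹ * b * y)) * x⁻¹ := by rw [h1]
        _ = (y⁻¹ * b * y) * x⁻¹ := by group
    have h4 : y⁻¹ * a ∈ P := mul_mem (inv_mem (hP₂P hy)) (hAP ha)
    have h5 : y⁻¹ * a ∈ Q := by
      rw [h3]; exact mul_mem (hBQ h2) (inv_mem (hQ₂Q hx))
    have h6 : y⁻¹ * a = 1 := by
      have h7 : y⁻¹ * a ∈ P ⊓ Q := ⟨h4, h5⟩
      rwa [hPQbot, Subgroup.mem_bot] at h7
    have hay : y = a := by rwa [inv_mul_eq_one] at h6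
    have ha2 : a ∈ P₂ := hay ▸ hy
    have ha1 : a = 1 := hAP₂bot a ha ha2
    have h8 : (y⁻¹ * b * y) * x⁻¹ = 1 := by rw [← h3, h6]
    have h9 : x = y⁻¹ * b * y := by
      rw [mul_inv_eq_one] at h8; exact h8.symm
    have hx1 : x = 1 := hBQ₂bot x (h9 ▸ h2) hx
    rw [ha1, hx1, one_mul]
  -- cardinalities multiply up
  have hMNcard : Nat.card M * Nat.card N = Nat.card G := by
    have h1 : (Nat.card A * Nat.card Q₂) * (Nat.card B * Nat.card P₂)
        = (Nat.card A * Nat.card P₂) * (Nat.card B * Nat.card Q₂) := by ring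
    rw [hcardM, hcardN, hcardP2, hcardQ2] at h1
    rw [h1, hcardPQ]
  -- commutation between M and N
  have hcomm : ∀ (m n : G), m ∈ M → n ∈ N → m * n = n * m := by
    intro m n hm hn
    have h1 : m * n * m⁻¹ * n⁻¹ ∈ M := by
      have h2 : n * m⁻¹ * n⁻¹ ∈ M := hMn.conj_mem m⁻¹ (inv_mem hm) n
      have h3 : m * n * m⁻¹ * n⁻¹ = m * (n * m⁻¹ * n⁻¹) := by group
      rw [h3]; exact mul_mem hm h2
    have h4 : m * n * m⁻¹ * n⁻¹ ∈ N := by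
      have h5 : m * n * m⁻¹ ∈ N := hNn.conj_mem n hn m
      exact mul_mem h5 (inv_mem hn)
    have h6 := hMNtriv _ h1 h4
    have h7 : m * n * m⁻¹ = n := by
      rw [mul_inv_eq_one] at h6; exact h6
    calc m * n = (m * n * m⁻¹) * m := by group
      _ = n * m := by rw [h7]
  -- the isomorphism
  set φ : M × N →* G := MonoidHom.mk' (fun z => (z.1 : G) * z.2) (by
    rintro ⟨m, n⟩ ⟨m', n'⟩
    show ((m * m' : M) : G) * ((n * n' : N) : G) = ((m : G) * n) * ((m' : G) * n')
    push_cast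
    have hc := hcomm (m' : G) (n : G) m'.2 n.2
    calc (m : G) * m' * ((n : G) * n') = (m : G) * (m' * n) * n' := by group
      _ = (m : G) * (n * m') * n' := by rw [hc]
      _ = ((m : G) * n) * ((m' : G) * n') := by group) with hφ
  have hφinj : Function.Injective φ := by
    rw [injective_iff_map_eq_one]
    rintro ⟨m, n⟩ h
    have h1 : (m : G) * n = 1 := h
    have h2 : (m : G) = (n : G)⁻¹ := eq_inv_of_mul_eq_one_left h1
    have h3 : (m : G) ∈ N := by rw [h2]; exact inv_mem n.2
    have h4 : (m : G) = 1 := hMNtriv _ m.2 h3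
    have h5 : (n : G) = 1 := by
      have := h1
      rw [h4, one_mul] at this
      exact this
    exact Prod.ext (Subtype.ext h4) (Subtype.ext h5)
  have hφbij : Function.Bijective φ := by
    rw [Nat.bijective_iff_injective_and_card]
    exact ⟨hφinj, by rw [Nat.card_prod]; exact hMNcard⟩
  exact ⟨M, inferInstance, N, inferInstance, inferInstance, inferInstance, hMIn, hNIn,
    ⟨(MulEquiv.ofBijective φ hφbij).symm⟩⟩

end Main
end
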